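/- arXiv:2010.04478 — 12 statements merged into one kernel-verified Lean document; each statement's English description precedes it below -/
import Mathlib

section
/- There exists a set D ⊆ ℂ that is closed and discrete (i.e., has no accumulation point in ℂ) such that for every z ∈ ℂ \ D and every continuous function f : [0,L] → ℂ there exists a unique three-times continuously differentiable function v : [0,L] → ℂ satisfying v'''(x) + v'(x) + z·v(x) = f(x) for all x ∈ [0,L] together with the boundary conditions v(0) = v(L) = v'(L) = 0. (This expresses that the spectrum of the operator A v = v''' + v' with domain {v ∈ H³(0,L) : v(0)=v(L)=v'(L)=0} is discrete.) -/
open Set NormedSpace intervalIntegral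

set_option maxHeartbeats 1000000
set_option synthInstance.maxHeartbeats 400000

noncomputable section


abbrev EE := Fin 3 → ℂ
abbrev AL := EE →L[ℂ] EE

instance : SMulCommClass ℂ AL AL := ⟨fun c a b => by ext v; simp⟩
instance : IsScalarTower ℂ AL AL := ⟨fun c a b => by ext v; simp⟩

def A0 : AL := LinearMap.toContinuousLinearMap (Matrix.mulVecLin !![0,1,0; 0,0,1; 0,-1,0])
def A1 : AL := LinearMap.toContinuousLinearMap (Matrix.mulVecLin !![0,0,0; 0,0,0; -1,0,0])
def Amat (z : ℂ) : AL := A0 + z • A1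

lemma Amat_apply (z : ℂ) (w : EE) :
    Amat z w = ![w 1, w 2, -z * w 0 - w 1] := by
  funext i
  fin_cases i <;>
    simp [Amat, A0, A1, Matrix.mulVecLin, Matrix.mulVec, dotProduct,
      Fin.sum_univ_three] <;> ring

def P (z : ℂ) (x : ℝ) : AL := exp ((x : ℂ) • Amat z)
def Q (z : ℂ) (x : ℝ) : AL := exp ((x : ℂ) • (-Amat z))

lemma P_zero (z : ℂ) : P z 0 = 1 := by
  rw [P, Complex.ofReal_zero, zero_smul ℂ (Amat z), exp_zero]

lemma P_mul_Q (z : ℂ) (x : ℝ) : P z x * Q z x = 1 := by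
  have hc : Commute ((x:ℂ) • Amat z) ((x:ℂ) • (-Amat z)) :=
    (((Commute.refl (Amat z)).neg_right).smul_left _).smul_right _
  let +nondep : NormedAlgebra ℚ AL := .restrictScalars ℚ ℂ AL
  rw [P, Q, ← exp_add_of_commute hc, smul_neg, add_neg_cancel, exp_zero]

lemma hasDerivAt_P (z : ℂ) (x : ℝ) :
    HasDerivAt (fun y : ℝ => P z y) (P z x * Amat z) x := by
  have h : HasDerivAt (fun u : ℂ => exp (u • Amat z)) (exp ((x:ℂ) • Amat z) * Amat z) (x:ℂ) :=
    hasDerivAt_exp_smul_const (Amat z) (x : ℂ)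
  have h2 := h.hasFDerivAt.restrictScalars ℝ
  have h3 := h2.comp (x : ℝ) Complex.ofRealCLM.hasFDerivAt
  rw [hasDerivAt_iff_hasFDerivAt]
  have h4 := h3.hasDerivAt
  simp only [ContinuousLinearMap.coe_comp', Function.comp_apply, Complex.ofRealCLM_apply,
    Complex.ofReal_one, ContinuousLinearMap.coe_restrictScalars',
    ContinuousLinearMap.toSpanSingleton_apply, one_smul] at h4
  exact hasDerivAt_iff_hasFDerivAt.1 h4

lemma hasDerivAt_Q (z : ℂ) (x : ℝ) :
    HasDerivAt (fun y : ℝ => Q z y) (Q z x * (-Amat z)) x := by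
  have h : HasDerivAt (fun u : ℂ => exp (u • (-Amat z)))
      (exp ((x:ℂ) • (-Amat z)) * (-Amat z)) (x:ℂ) :=
    hasDerivAt_exp_smul_const (-Amat z) (x : ℂ)
  have h2 := h.hasFDerivAt.restrictScalars ℝ
  have h3 := h2.comp (x : ℝ) Complex.ofRealCLM.hasFDerivAt
  rw [hasDerivAt_iff_hasFDerivAt]
  have h4 := h3.hasDerivAt
  simp only [ContinuousLinearMap.coe_comp', Function.comp_apply, Complex.ofRealCLM_apply,
    Complex.ofReal_one, ContinuousLinearMap.coe_restrictScalars',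
    ContinuousLinearMap.toSpanSingleton_apply, one_smul] at h4
  exact hasDerivAt_iff_hasFDerivAt.1 h4

lemma commute_Amat_P (z : ℂ) (x : ℝ) : Amat z * P z x = P z x * Amat z :=
  (((Commute.refl (Amat z)).smul_right ((x:ℂ))).exp_right)

lemma continuous_P (z : ℂ) : Continuous (fun x : ℝ => P z x) :=
  continuous_iff_continuousAt.2 fun x => (hasDerivAt_P z x).continuousAt

lemma continuous_Q (z : ℂ) : Continuous (fun x : ℝ => Q z x) :=
  continuous_iff_continuousAt.2 fun x => (hasDerivAt_Q z x).continuousAt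

def RS : AL →L[ℝ] (EE →L[ℝ] EE) := ContinuousLinearMap.restrictScalarsL ℂ EE EE ℝ ℝ

@[simp] lemma RS_apply (M : AL) (v : EE) : RS M v = M v := rfl

lemma flowP {z : ℂ} {u : ℝ → EE} {u' : EE} {s : Set ℝ} {x : ℝ}
    (hu : HasDerivWithinAt u u' s x) :
    HasDerivWithinAt (fun y => P z y (u y)) (Amat z (P z x (u x)) + P z x u') s x := by
  have hP : HasDerivAt (fun y : ℝ => RS (P z y)) (RS (P z x * Amat z)) x :=
    RS.hasFDerivAt.comp_hasDerivAt x (hasDerivAt_P z x)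
  have h := (hP.hasDerivWithinAt).clm_apply hu
  have he : RS (P z x * Amat z) (u x) + RS (P z x) u' = Amat z (P z x (u x)) + P z x u' := by
    rw [RS_apply, RS_apply, ← commute_Amat_P]; rfl
  rw [he] at h
  exact h

lemma flowQ {z : ℂ} {u : ℝ → EE} {u' : EE} {s : Set ℝ} {x : ℝ}
    (hu : HasDerivWithinAt u u' s x) :
    HasDerivWithinAt (fun y => Q z y (u y)) (Q z x (u' - Amat z (u x))) s x := by
  have hQ : HasDerivAt (fun y : ℝ => RS (Q z y)) (RS (Q z x * -Amat z)) x :=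
    RS.hasFDerivAt.comp_hasDerivAt x (hasDerivAt_Q z x)
  have h := (hQ.hasDerivWithinAt).clm_apply hu
  have he : RS (Q z x * -Amat z) (u x) + RS (Q z x) u' = Q z x (u' - Amat z (u x)) := by
    rw [RS_apply, RS_apply, map_sub]
    show (Q z x) (-(Amat z) (u x)) + _ = _
    rw [map_neg]; ring
  rw [he] at h
  exact h

lemma key_const {z : ℂ} {L : ℝ} (hL : 0 < L) {Y : ℝ → EE}
    (hY : ∀ x ∈ Icc (0:ℝ) L, HasDerivWithinAt Y (Amat z (Y x)) (Icc 0 L) x) :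
    ∀ x ∈ Icc (0:ℝ) L, Y x = P z x (Y 0) := by
  have hYc : ContinuousOn Y (Icc 0 L) := fun x hx => ((hY x hx).differentiableWithinAt).continuousWithinAt
  have hZc : ContinuousOn (fun y => Q z y (Y y)) (Icc 0 L) := by
    have : ContinuousOn (fun y : ℝ => RS (Q z y)) (Icc 0 L) :=
      (RS.continuous.comp (continuous_Q z)).continuousOn
    exact this.clm_apply hYc
  have hZ : ∀ x ∈ Ico (0:ℝ) L, HasDerivWithinAt (fun y => Q z y (Y y)) 0 (Ici x) x := by
    intro x hx
    have h1 := flowQ (z := z) (hY x (Ico_subset_Icc_self hx))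
    rw [sub_self, map_zero] at h1
    exact h1.mono_of_mem_nhdsWithin (Icc_mem_nhdsGE_of_mem hx)
  have hconst := constant_of_has_deriv_right_zero hZc hZ
  intro x hx
  have h2 := hconst x hx
  have h3 : Q z 0 (Y 0) = Y 0 := by
    have : Q z 0 = 1 := by rw [Q, Complex.ofReal_zero, zero_smul ℂ (-Amat z), exp_zero]
    rw [this]; rfl
  rw [h3] at h2
  have h4 := congrArg (fun w => P z x w) h2
  simpa [← ContinuousLinearMap.comp_apply, ← ContinuousLinearMap.mul_def, P_mul_Q] using h4

def e1 : EE := ![0,1,0]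
def e2 : EE := ![0,0,1]

def Dl (L : ℝ) (z : ℂ) : ℂ :=
  (P z L e1 0) * (P z L e2 1) - (P z L e2 0) * (P z L e1 1)

lemma vec_split (γ δ : ℂ) : (![0, γ, δ] : EE) = γ • e1 + δ • e2 := by
  funext i; fin_cases i <;> simp [e1, e2]

lemma cramer {L : ℝ} {z γ δ : ℂ} (hΔ : Dl L z ≠ 0)
    (h0 : γ * (P z L e1 0) + δ * (P z L e2 0) = 0)
    (h1 : γ * (P z L e1 1) + δ * (P z L e2 1) = 0) : γ = 0 ∧ δ = 0 := by
  constructor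
  · have h : γ * Dl L z = (γ * (P z L e1 0) + δ * (P z L e2 0)) * (P z L e2 1)
        - (γ * (P z L e1 1) + δ * (P z L e2 1)) * (P z L e2 0) := by rw [Dl]; ring
    rw [h0, h1, zero_mul, zero_mul, sub_zero] at h
    exact (mul_eq_zero.1 h).resolve_right hΔ
  · have h : δ * Dl L z = (γ * (P z L e1 1) + δ * (P z L e2 1)) * (P z L e1 0)
        - (γ * (P z L e1 0) + δ * (P z L e2 0)) * (P z L e1 1) := by rw [Dl]; ring
    rw [h0, h1, zero_mul, zero_mul, sub_zero] at h
    exact (mul_eq_zero.1 h).resolve_right hΔ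

lemma target_eq (z fx : ℂ) (w : EE) :
    Amat z w + fx • e2 = ![w 1, w 2, fx - z * w 0 - w 1] := by
  rw [Amat_apply]
  funext i; fin_cases i <;> (simp [e2]; try ring)

lemma sol_vector {L : ℝ} (hL : 0 < L) {z : ℂ} {f v : ℝ → ℂ}
    (h1 : ContDiffOn ℝ 3 v (Icc 0 L))
    (h2 : ∀ x ∈ Icc 0 L, derivWithin (derivWithin (derivWithin v (Icc 0 L)) (Icc 0 L)) (Icc 0 L) x
          + derivWithin v (Icc 0 L) x + z * v x = f x) :
    ∀ x ∈ Icc (0:ℝ) L,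
      HasDerivWithinAt
        (fun y => (![v y, derivWithin v (Icc 0 L) y,
           derivWithin (derivWithin v (Icc 0 L)) (Icc 0 L) y] : EE))
        (Amat z (![v x, derivWithin v (Icc 0 L) x,
           derivWithin (derivWithin v (Icc 0 L)) (Icc 0 L) x]) + f x • e2) (Icc 0 L) x := by
  have hud := uniqueDiffOn_Icc hL
  set dv := derivWithin v (Icc 0 L) with hdv
  set ddv := derivWithin dv (Icc 0 L) with hddv
  have hc2 : ContDiffOn ℝ 2 dv (Icc 0 L) := h1.derivWithin hud (by norm_num)
  have hc1 : ContDiffOn ℝ 1 ddv (Icc 0 L) := hc2.derivWithin hud (by norm_num)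
  have hd0 : DifferentiableOn ℝ v (Icc 0 L) := h1.differentiableOn (by norm_num)
  have hd1 : DifferentiableOn ℝ dv (Icc 0 L) := hc2.differentiableOn (by norm_num)
  have hd2 : DifferentiableOn ℝ ddv (Icc 0 L) := hc1.differentiableOn (by norm_num)
  intro x hx
  have hv : HasDerivWithinAt v (dv x) (Icc 0 L) x := (hd0 x hx).hasDerivWithinAt
  have hv1 : HasDerivWithinAt dv (ddv x) (Icc 0 L) x := (hd1 x hx).hasDerivWithinAt
  have hv2 : HasDerivWithinAt ddv (derivWithin ddv (Icc 0 L) x) (Icc 0 L) x :=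
    (hd2 x hx).hasDerivWithinAt
  have eq3 : derivWithin ddv (Icc 0 L) x = f x - z * v x - dv x := by
    have := h2 x hx
    linear_combination this
  rw [eq3] at hv2
  rw [target_eq]
  apply hasDerivWithinAt_pi.2
  intro i
  fin_cases i
  · simpa using hv
  · simpa using hv1
  · simpa using hv2

lemma uniq {L : ℝ} (hL : 0 < L) {z : ℂ} (hΔ : Dl L z ≠ 0) {f v w : ℝ → ℂ}
    (Hv1 : ContDiffOn ℝ 3 v (Icc 0 L))
    (Hv2 : ∀ x ∈ Icc 0 L, derivWithin (derivWithin (derivWithin v (Icc 0 L)) (Icc 0 L)) (Icc 0 L) x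
          + derivWithin v (Icc 0 L) x + z * v x = f x)
    (Hv3 : v 0 = 0) (Hv4 : v L = 0) (Hv5 : derivWithin v (Icc 0 L) L = 0)
    (Hw1 : ContDiffOn ℝ 3 w (Icc 0 L))
    (Hw2 : ∀ x ∈ Icc 0 L, derivWithin (derivWithin (derivWithin w (Icc 0 L)) (Icc 0 L)) (Icc 0 L) x
          + derivWithin w (Icc 0 L) x + z * w x = f x)
    (Hw3 : w 0 = 0) (Hw4 : w L = 0) (Hw5 : derivWithin w (Icc 0 L) L = 0) :
    EqOn v w (Icc 0 L) := by
  set dv := derivWithin v (Icc 0 L)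
  set ddv := derivWithin dv (Icc 0 L)
  set dw := derivWithin w (Icc 0 L)
  set ddw := derivWithin dw (Icc 0 L)
  set Vv : ℝ → EE := fun y => ![v y, dv y, ddv y] with hVv
  set Vw : ℝ → EE := fun y => ![w y, dw y, ddw y] with hVw
  set Y : ℝ → EE := fun y => Vv y - Vw y with hY
  have hYode : ∀ x ∈ Icc (0:ℝ) L, HasDerivWithinAt Y (Amat z (Y x)) (Icc 0 L) x := by
    intro x hx
    have h1 := sol_vector hL Hv1 Hv2 x hx
    have h2 := sol_vector hL Hw1 Hw2 x hx
    have h3 := h1.sub h2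
    have he : Amat z (Vv x) + f x • e2 - (Amat z (Vw x) + f x • e2) = Amat z (Y x) := by
      rw [hY]; rw [map_sub]; abel
    rwa [he] at h3
  have hrep := key_const hL hYode
  have hY0 : Y 0 = ![0, dv 0 - dw 0, ddv 0 - ddw 0] := by
    funext i; fin_cases i <;> simp [hY, hVv, hVw, Hv3, Hw3]
  set γ := dv 0 - dw 0
  set δ := ddv 0 - ddw 0
  have hYL : Y L = P z L (Y 0) := hrep L ⟨hL.le, le_refl L⟩
  have hYL0 : Y L 0 = 0 := by simp [hY, hVv, hVw, Hv4, Hw4]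
  have hYL1 : Y L 1 = 0 := by simp [hY, hVv, hVw, Hv5, Hw5]
  have hsplit : Y 0 = γ • e1 + δ • e2 := by rw [hY0]; exact vec_split γ δ
  have hPL : P z L (Y 0) = γ • P z L e1 + δ • P z L e2 := by
    rw [hsplit, map_add, map_smul, map_smul]
  have h0 : γ * (P z L e1 0) + δ * (P z L e2 0) = 0 := by
    have := hYL0
    rw [hYL, hPL] at this
    simpa using this
  have h1 : γ * (P z L e1 1) + δ * (P z L e2 1) = 0 := by
    have := hYL1
    rw [hYL, hPL] at this
    simpa using this
  obtain ⟨hγ, hδ⟩ := cramer hΔ h0 h1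
  have hY0z : Y 0 = 0 := by
    rw [hsplit, hγ, hδ]; simp
  intro x hx
  have := hrep x hx
  rw [hY0z, map_zero] at this
  have h5 : Vv x 0 - Vw x 0 = 0 := by
    have := congrFun this 0
    simpa [hY] using this
  simpa [hVv, hVw, sub_eq_zero] using h5

lemma P_Q_apply (z : ℂ) (x : ℝ) (u : EE) : P z x (Q z x u) = u := by
  have h := congrArg (fun M : AL => M u) (P_mul_Q z x)
  simpa using h

lemma exist {L : ℝ} (hL : 0 < L) {z : ℂ} (hΔ : Dl L z ≠ 0) {f : ℝ → ℂ}
    (hf : ContinuousOn f (Icc 0 L)) :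
    ∃ v : ℝ → ℂ,
      ContDiffOn ℝ 3 v (Icc 0 L) ∧
      (∀ x ∈ Icc 0 L,
        derivWithin (derivWithin (derivWithin v (Icc 0 L)) (Icc 0 L)) (Icc 0 L) x
          + derivWithin v (Icc 0 L) x + z * v x = f x) ∧
      v 0 = 0 ∧ v L = 0 ∧ derivWithin v (Icc 0 L) L = 0 := by
  have hud := uniqueDiffOn_Icc hL
  set h : ℝ → EE := fun s => Q z s (f s • e2) with hh
  have hhc : ContinuousOn h (Icc 0 L) := by
    have h1 : ContinuousOn (fun s : ℝ => RS (Q z s)) (Icc 0 L) :=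
      (RS.continuous.comp (continuous_Q z)).continuousOn
    exact h1.clm_apply (hf.smul continuousOn_const)
  set g : ℝ → EE := fun x => ∫ s in (0:ℝ)..x, h s with hg
  have hgd : ∀ x ∈ Icc (0:ℝ) L, HasDerivWithinAt g (h x) (Icc 0 L) x := by
    intro x hx
    haveI : Fact (x ∈ Icc (0:ℝ) L) := ⟨hx⟩
    have hint : IntervalIntegrable h MeasureTheory.volume 0 x := by
      apply ContinuousOn.intervalIntegrable
      apply hhc.mono
      rw [uIcc_of_le hx.1]
      exact Icc_subset_Icc le_rfl hx.2
    exact intervalIntegral.integral_hasDerivWithinAt_right hint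
      (hhc.stronglyMeasurableAtFilter_nhdsWithin measurableSet_Icc x) (hhc x hx)
  set wv : EE := P z L (g L) with hwv
  set p0 := P z L e1 0
  set p1 := P z L e1 1
  set q0 := P z L e2 0
  set q1 := P z L e2 1
  set α := (-(wv 0) * q1 + wv 1 * q0) / Dl L z with hα
  set β := (-(wv 1) * p0 + wv 0 * p1) / Dl L z with hβ
  set a : EE := ![0, α, β] with ha
  set V : ℝ → EE := fun y => P z y (a + g y) with hV
  have hVd : ∀ x ∈ Icc (0:ℝ) L, HasDerivWithinAt V (Amat z (V x) + f x • e2) (Icc 0 L) x := by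
    intro x hx
    have hag : HasDerivWithinAt (fun y => a + g y) (h x) (Icc 0 L) x := (hgd x hx).const_add a
    have h1 := flowP (z := z) hag
    have h2 : P z x (h x) = f x • e2 := P_Q_apply z x _
    rw [h2] at h1
    exact h1
  set v0 : ℝ → ℂ := fun y => V y 0 with hv0
  set v1 : ℝ → ℂ := fun y => V y 1 with hv1
  set v2 : ℝ → ℂ := fun y => V y 2 with hv2
  have hcomp : ∀ x ∈ Icc (0:ℝ) L, ∀ i : Fin 3,
      HasDerivWithinAt (fun y => V y i)
        ((![V x 1, V x 2, f x - z * V x 0 - V x 1] : EE) i) (Icc 0 L) x := by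
    intro x hx i
    have := hasDerivWithinAt_pi.1 (hVd x hx) i
    rwa [target_eq] at this
  have hd0 : ∀ x ∈ Icc (0:ℝ) L, HasDerivWithinAt v0 (v1 x) (Icc 0 L) x := by
    intro x hx; simpa using hcomp x hx 0
  have hd1 : ∀ x ∈ Icc (0:ℝ) L, HasDerivWithinAt v1 (v2 x) (Icc 0 L) x := by
    intro x hx; simpa using hcomp x hx 1
  have hd2 : ∀ x ∈ Icc (0:ℝ) L,
      HasDerivWithinAt v2 (f x - z * v0 x - v1 x) (Icc 0 L) x := by
    intro x hx; simpa using hcomp x hx 2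
  have e0 : EqOn (derivWithin v0 (Icc 0 L)) v1 (Icc 0 L) := fun x hx =>
    (hd0 x hx).derivWithin (hud x hx)
  have e1' : EqOn (derivWithin v1 (Icc 0 L)) v2 (Icc 0 L) := fun x hx =>
    (hd1 x hx).derivWithin (hud x hx)
  have e2' : ∀ x ∈ Icc (0:ℝ) L, derivWithin v2 (Icc 0 L) x = f x - z * v0 x - v1 x :=
    fun x hx => (hd2 x hx).derivWithin (hud x hx)
  have hVcont : ContinuousOn V (Icc 0 L) := fun x hx =>
    ((hVd x hx).differentiableWithinAt).continuousWithinAt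
  have hvc : ∀ i : Fin 3, ContinuousOn (fun y => V y i) (Icc 0 L) := fun i =>
    (continuous_apply i).comp_continuousOn hVcont
  have hDiff0 : DifferentiableOn ℝ v0 (Icc 0 L) := fun x hx =>
    (hd0 x hx).differentiableWithinAt
  have hDiff1 : DifferentiableOn ℝ v1 (Icc 0 L) := fun x hx =>
    (hd1 x hx).differentiableWithinAt
  have hDiff2 : DifferentiableOn ℝ v2 (Icc 0 L) := fun x hx =>
    (hd2 x hx).differentiableWithinAt
  refine ⟨v0, ?_, ?_, ?_, ?_, ?_⟩
  · -- ContDiffOn 3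
    have h3 : (3 : WithTop ℕ∞) = 2 + 1 := by norm_num
    rw [h3, contDiffOn_succ_iff_derivWithin hud]
    refine ⟨hDiff0, by simp, ?_⟩
    apply ContDiffOn.congr (f := v1) ?_ e0
    have h2 : (2 : WithTop ℕ∞) = 1 + 1 := by norm_num
    rw [h2, contDiffOn_succ_iff_derivWithin hud]
    refine ⟨hDiff1, by simp, ?_⟩
    apply ContDiffOn.congr (f := v2) ?_ e1'
    have h1 : (1 : WithTop ℕ∞) = 0 + 1 := by norm_num
    rw [h1, contDiffOn_succ_iff_derivWithin hud]
    refine ⟨hDiff2, by simp, ?_⟩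
    apply ContDiffOn.congr (f := fun y => f y - z * v0 y - v1 y) ?_ e2'
    rw [contDiffOn_zero]
    exact (hf.sub ((continuousOn_const).mul (hvc 0))).sub (hvc 1)
  · -- ODE
    intro x hx
    have r1 : derivWithin v0 (Icc 0 L) x = v1 x := e0 hx
    have r2 : derivWithin (derivWithin v0 (Icc 0 L)) (Icc 0 L) x = v2 x := by
      rw [derivWithin_congr e0 (e0 hx)]
      exact e1' hx
    have r3 : derivWithin (derivWithin (derivWithin v0 (Icc 0 L)) (Icc 0 L)) (Icc 0 L) x
        = f x - z * v0 x - v1 x := by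
      have hE : EqOn (derivWithin (derivWithin v0 (Icc 0 L)) (Icc 0 L)) v2 (Icc 0 L) := by
        intro y hy
        rw [derivWithin_congr e0 (e0 hy)]
        exact e1' hy
      rw [derivWithin_congr hE (hE hx)]
      exact e2' x hx
    rw [r3, r1]
    ring
  · -- v 0 = 0
    have hg0 : g 0 = 0 := intervalIntegral.integral_same
    show (P z 0 (a + g 0)) 0 = 0
    rw [hg0, add_zero, P_zero]
    show a 0 = (0:ℂ)
    simp [ha]
  · -- v L = 0
    have hVL : V L = α • P z L e1 + β • P z L e2 + wv := by
      show P z L (a + g L) = _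
      rw [map_add, ← hwv, ha, vec_split, map_add, map_smul, map_smul]
    show V L 0 = 0
    rw [hVL]
    show α * p0 + β * q0 + wv 0 = 0
    rw [hα, hβ]
    have hD : Dl L z = p0 * q1 - q0 * p1 := rfl
    field_simp
    rw [hD]; ring
  · -- derivWithin v (Icc 0 L) L = 0
    have hLm : L ∈ Icc (0:ℝ) L := ⟨hL.le, le_refl L⟩
    rw [e0 hLm]
    have hVL : V L = α • P z L e1 + β • P z L e2 + wv := by
      show P z L (a + g L) = _
      rw [map_add, ← hwv, ha, vec_split, map_add, map_smul, map_smul]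
    show V L 1 = 0
    rw [hVL]
    show α * p1 + β * q1 + wv 1 = 0
    rw [hα, hβ]
    have hD : Dl L z = p0 * q1 - q0 * p1 := rfl
    field_simp
    rw [hD]; ring

lemma analyticAt_Dl (L : ℝ) (z : ℂ) : AnalyticAt ℂ (Dl L) z := by
  have hA : AnalyticAt ℂ (fun z : ℂ => (L:ℂ) • Amat z) z := by
    have he : (fun z : ℂ => (L:ℂ) • Amat z)
        = fun z : ℂ => ((L:ℂ) • A0 + z • ((L:ℂ) • A1)) := by
      funext y; rw [Amat, smul_add, smul_comm]
    rw [he]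
    exact analyticAt_const.add ((analyticAt_id).smul analyticAt_const)
  have hexp : AnalyticAt ℂ (fun y : ℂ => exp ((L:ℂ) • Amat y)) z :=
    (NormedSpace.exp_analytic _).comp hA
  have hcomp : ∀ (w : EE) (i : Fin 3), AnalyticAt ℂ (fun y : ℂ => (P y L w) i) z := by
    intro w i
    have hΦ : AnalyticAt ℂ
        ((ContinuousLinearMap.proj i : EE →L[ℂ] ℂ).comp
          (ContinuousLinearMap.apply ℂ EE w : AL →L[ℂ] EE)) (exp ((L:ℂ) • Amat z)) :=
      ContinuousLinearMap.analyticAt _ _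
    have h2 : AnalyticAt ℂ (fun y : ℂ => ((ContinuousLinearMap.proj i : EE →L[ℂ] ℂ).comp
          (ContinuousLinearMap.apply ℂ EE w : AL →L[ℂ] EE)) (exp ((L:ℂ) • Amat y))) z :=
      AnalyticAt.comp (f := fun y : ℂ => exp ((L:ℂ) • Amat y)) hΦ hexp
    exact h2
  exact ((hcomp e1 0).mul (hcomp e2 1)).sub ((hcomp e2 0).mul (hcomp e1 1))

lemma hasDerivAt_Pa (z : ℂ) (a : EE) (x : ℝ) :
    HasDerivAt (fun y => P z y a) (Amat z (P z x a)) x := by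
  have hP : HasDerivAt (fun y : ℝ => RS (P z y)) (RS (P z x * Amat z)) x :=
    RS.hasFDerivAt.comp_hasDerivAt x (hasDerivAt_P z x)
  have h := hP.clm_apply (hasDerivAt_const x a)
  have he : RS (P z x * Amat z) a + RS (P z x) 0 = Amat z (P z x a) := by
    rw [map_zero, add_zero, RS_apply, ← commute_Amat_P]; rfl
  rwa [he] at h

lemma continuous_Pa_comp (z : ℂ) (a : EE) (i : Fin 3) :
    Continuous (fun y : ℝ => (P z y a) i) := by
  have : Continuous (fun y : ℝ => P z y a) :=
    continuous_iff_continuousAt.2 fun x => (hasDerivAt_Pa z a x).continuousAt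
  exact (continuous_apply i).comp this

lemma energy {L : ℝ} (hL : 0 < L) {γ δ : ℂ}
    (hbc0 : γ * (P 1 L e1 0) + δ * (P 1 L e2 0) = 0)
    (hbc1 : γ * (P 1 L e1 1) + δ * (P 1 L e2 1) = 0) :
    γ = 0 ∧ δ = 0 := by
  set z : ℂ := 1 with hz
  set a : EE := ![0, γ, δ] with ha
  set u : ℝ → ℂ := fun y => (P z y a) 0 with hu
  set u1 : ℝ → ℂ := fun y => (P z y a) 1 with hu1
  set u2 : ℝ → ℂ := fun y => (P z y a) 2 with hu2
  -- component derivatives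
  have hcomp : ∀ (x : ℝ) (i : Fin 3),
      HasDerivAt (fun y => (P z y a) i)
        ((![P z x a 1, P z x a 2, -z * P z x a 0 - P z x a 1] : EE) i) x := by
    intro x i
    have h := hasDerivAt_pi.1 (hasDerivAt_Pa z a x) i
    rwa [Amat_apply] at h
  have hdu : ∀ x : ℝ, HasDerivAt u (u1 x) x := fun x => by simpa using hcomp x 0
  have hdu1 : ∀ x : ℝ, HasDerivAt u1 (u2 x) x := fun x => by simpa using hcomp x 1
  have hdu2 : ∀ x : ℝ, HasDerivAt u2 (-z * u x - u1 x) x := fun x => by simpa using hcomp x 2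
  -- initial values
  have hP0 : P z 0 a = a := by rw [P_zero]; rfl
  have hu0 : u 0 = 0 := by show (P z 0) a 0 = 0; rw [hP0]; rfl
  have hu10 : u1 0 = γ := by show (P z 0) a 1 = γ; rw [hP0]; rfl
  have hu20 : u2 0 = δ := by show (P z 0) a 2 = δ; rw [hP0]; rfl
  -- boundary values at L
  have hPa : P z L a = γ • P z L e1 + δ • P z L e2 := by
    rw [ha, vec_split, map_add, map_smul, map_smul]
  have huL : u L = 0 := by
    show (P z L) a 0 = 0
    rw [hPa]
    simpa using hbc0
  have hu1L : u1 L = 0 := by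
    show (P z L) a 1 = 0
    rw [hPa]
    simpa using hbc1
  -- conjugates
  have hconj : ∀ (w : ℝ → ℂ) (w' : ℂ) (x : ℝ), HasDerivAt w w' x →
      HasDerivAt (fun y => (starRingEnd ℂ) (w y)) ((starRingEnd ℂ) w') x := by
    intro w w' x hw
    have h := Complex.conjCLE.toContinuousLinearMap.hasFDerivAt.comp_hasDerivAt x hw
    exact h
  -- the energy function
  set G : ℝ → ℝ := fun x => (u2 x * (starRingEnd ℂ) (u x)).re
      - (u1 x * (starRingEnd ℂ) (u1 x)).re / 2 + (u x * (starRingEnd ℂ) (u x)).re / 2 with hG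
  set φ : ℝ → ℝ := fun x => (u x * (starRingEnd ℂ) (u x)).re with hφ
  have hGd : ∀ x : ℝ, HasDerivAt G (-(φ x)) x := by
    intro x
    have h1 : HasDerivAt (fun y => (u2 y * (starRingEnd ℂ) (u y)).re)
        (((-z * u x - u1 x) * (starRingEnd ℂ) (u x) + u2 x * (starRingEnd ℂ) (u1 x)).re) x := by
      have := ((hdu2 x).mul (hconj u (u1 x) x (hdu x)))
      exact Complex.reCLM.hasFDerivAt.comp_hasDerivAt x this
    have h2 : HasDerivAt (fun y => (u1 y * (starRingEnd ℂ) (u1 y)).re)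
        ((u2 x * (starRingEnd ℂ) (u1 x) + u1 x * (starRingEnd ℂ) (u2 x)).re) x := by
      have := ((hdu1 x).mul (hconj u1 (u2 x) x (hdu1 x)))
      exact Complex.reCLM.hasFDerivAt.comp_hasDerivAt x this
    have h3 : HasDerivAt (fun y => (u y * (starRingEnd ℂ) (u y)).re)
        ((u1 x * (starRingEnd ℂ) (u x) + u x * (starRingEnd ℂ) (u1 x)).re) x := by
      have := ((hdu x).mul (hconj u (u1 x) x (hdu x)))
      exact Complex.reCLM.hasFDerivAt.comp_hasDerivAt x this
    have h := (h1.sub (h2.div_const 2)).add (h3.div_const 2)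
    have he : ((-z * u x - u1 x) * (starRingEnd ℂ) (u x) + u2 x * (starRingEnd ℂ) (u1 x)).re
        - (u2 x * (starRingEnd ℂ) (u1 x) + u1 x * (starRingEnd ℂ) (u2 x)).re / 2
        + (u1 x * (starRingEnd ℂ) (u x) + u x * (starRingEnd ℂ) (u1 x)).re / 2
        = -(φ x) := by
      simp only [hz, hφ, Complex.add_re, Complex.sub_re, Complex.mul_re, Complex.neg_re,
        Complex.neg_im, Complex.conj_re, Complex.conj_im, Complex.sub_im, Complex.mul_im,
        Complex.one_re, Complex.one_im]
      ring
    rwa [he] at h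
  -- integrate
  have hucont : Continuous u := continuous_Pa_comp z a 0
  have hu1cont : Continuous u1 := continuous_Pa_comp z a 1
  have hu2cont : Continuous u2 := continuous_Pa_comp z a 2
  have hφcont : Continuous φ := by
    apply Complex.continuous_re.comp
    exact hucont.mul (Complex.continuous_conj.comp hucont)
  have hint : IntervalIntegrable (fun x => -(φ x)) MeasureTheory.volume 0 L :=
    (hφcont.neg).intervalIntegrable 0 L
  have hFTC : ∫ x in (0:ℝ)..L, -(φ x) = G L - G 0 :=
    intervalIntegral.integral_eq_sub_of_hasDerivAt (fun x _ => hGd x) hint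
  have hGL : G L = 0 := by
    rw [hG]; simp [huL, hu1L]
  have hG0 : G 0 = -(γ * (starRingEnd ℂ) γ).re / 2 := by
    rw [hG]; simp [hu0, hu10, Complex.mul_re, Complex.conj_re, Complex.conj_im]; ring
  have hval : ∫ x in (0:ℝ)..L, φ x = -(γ * (starRingEnd ℂ) γ).re / 2 := by
    have := hFTC
    rw [intervalIntegral.integral_neg, hGL, hG0] at this
    linarith
  have hφnonneg : ∀ x, 0 ≤ φ x := by
    intro x
    rw [hφ]
    simp only [Complex.mul_conj]
    exact Complex.normSq_nonneg _
  have hintnonneg : 0 ≤ ∫ x in (0:ℝ)..L, φ x :=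
    intervalIntegral.integral_nonneg hL.le (fun x _ => hφnonneg x)
  have hγsq : (γ * (starRingEnd ℂ) γ).re = 0 := by
    have h1 : (γ * (starRingEnd ℂ) γ).re ≥ 0 := by
      simp only [Complex.mul_conj]; exact Complex.normSq_nonneg _
    nlinarith [hval ▸ hintnonneg]
  have hγ : γ = 0 := by
    have : Complex.normSq γ = 0 := by
      have := hγsq
      rwa [Complex.mul_conj, Complex.ofReal_re] at this
    exact Complex.normSq_eq_zero.1 this
  -- now show the integral is zero hence u ≡ 0 on [0, L]
  have hint0 : ∫ x in (0:ℝ)..L, φ x = 0 := by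
    rw [hval, hγ]; simp
  have hφint : IntervalIntegrable φ MeasureTheory.volume 0 L := hφcont.intervalIntegrable 0 L
  have huzero : ∀ x ∈ Icc (0:ℝ) L, u x = 0 := by
    have hΦ : ∀ x ∈ Icc (0:ℝ) L, (∫ s in (0:ℝ)..x, φ s) = 0 := by
      intro x hx
      have h1 : 0 ≤ ∫ s in (0:ℝ)..x, φ s :=
        intervalIntegral.integral_nonneg hx.1 (fun s _ => hφnonneg s)
      have h2 : (∫ s in (0:ℝ)..x, φ s) + (∫ s in x..L, φ s) = ∫ s in (0:ℝ)..L, φ s :=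
        intervalIntegral.integral_add_adjacent_intervals
          (hφcont.intervalIntegrable 0 x) (hφcont.intervalIntegrable x L)
      have h3 : 0 ≤ ∫ s in x..L, φ s :=
        intervalIntegral.integral_nonneg hx.2 (fun s _ => hφnonneg s)
      rw [hint0] at h2
      linarith
    intro x hx
    haveI : Fact (x ∈ Icc (0:ℝ) L) := ⟨hx⟩
    have hd : HasDerivWithinAt (fun y => ∫ s in (0:ℝ)..y, φ s) (φ x) (Icc 0 L) x := by
      apply intervalIntegral.integral_hasDerivWithinAt_right
        ((hφcont.intervalIntegrable 0 x))
        ((hφcont.continuousOn).stronglyMeasurableAtFilter_nhdsWithin measurableSet_Icc x)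
        (hφcont.continuousOn x hx)
    have hud := uniqueDiffOn_Icc hL
    have hder : derivWithin (fun y => ∫ s in (0:ℝ)..y, φ s) (Icc 0 L) x = φ x :=
      hd.derivWithin (hud x hx)
    have hder0 : derivWithin (fun y => ∫ s in (0:ℝ)..y, φ s) (Icc 0 L) x = 0 := by
      rw [derivWithin_congr hΦ (hΦ x hx)]
      exact (hasDerivWithinAt_const x _ (0:ℝ)).derivWithin (hud x hx)
    have hφx : φ x = 0 := by rw [← hder, hder0]
    have : Complex.normSq (u x) = 0 := by
      have := hφx
      rw [hφ] at this
      simp only [Complex.mul_conj, Complex.ofReal_re] at this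
      exact this
    exact Complex.normSq_eq_zero.1 this
  -- u1 vanishes on Ioo
  have hu1zero : ∀ x ∈ Ioo (0:ℝ) L, u1 x = 0 := by
    intro x hx
    have hev : (fun _ : ℝ => (0:ℂ)) =ᶠ[nhds x] u :=
      Filter.eventuallyEq_of_mem (Ioo_mem_nhds hx.1 hx.2)
        (fun y hy => (huzero y (Ioo_subset_Icc_self hy)).symm)
    have h1 : HasDerivAt (fun _ : ℝ => (0:ℂ)) (u1 x) x :=
      (hdu x).congr_of_eventuallyEq hev
    have h2 : HasDerivAt (fun _ : ℝ => (0:ℂ)) 0 x := hasDerivAt_const x 0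
    exact (h1.unique h2)
  have hu2zero : ∀ x ∈ Ioo (0:ℝ) L, u2 x = 0 := by
    intro x hx
    have hev : (fun _ : ℝ => (0:ℂ)) =ᶠ[nhds x] u1 :=
      Filter.eventuallyEq_of_mem (Ioo_mem_nhds hx.1 hx.2)
        (fun y hy => (hu1zero y hy).symm)
    have h1 : HasDerivAt (fun _ : ℝ => (0:ℂ)) (u2 x) x :=
      (hdu1 x).congr_of_eventuallyEq hev
    have h2 : HasDerivAt (fun _ : ℝ => (0:ℂ)) 0 x := hasDerivAt_const x 0
    exact (h1.unique h2)
  have hδ : δ = 0 := by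
    have hclosure : EqOn u2 (fun _ => 0) (closure (Ioo 0 L)) :=
      Set.EqOn.closure (fun x hx => hu2zero x hx) hu2cont continuous_const
    rw [closure_Ioo hL.ne] at hclosure
    have := hclosure (Set.left_mem_Icc.2 hL.le)
    rw [hu20] at this
    exact this
  exact ⟨hγ, hδ⟩

lemma Dl_one_ne_zero {L : ℝ} (hL : 0 < L) : Dl L 1 ≠ 0 := by
  intro hDl
  have hD : P 1 L e1 0 * P 1 L e2 1 - P 1 L e2 0 * P 1 L e1 1 = 0 := hDl
  by_cases h1 : P 1 L e2 1 ≠ 0 ∨ P 1 L e1 1 ≠ 0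
  · have := energy hL (γ := P 1 L e2 1) (δ := -(P 1 L e1 1))
      (by linear_combination hD) (by ring)
    rcases h1 with h | h
    · exact h this.1
    · exact h (by rw [← neg_eq_zero]; exact this.2)
  · push_neg at h1
    obtain ⟨hq1, hp1⟩ := h1
    by_cases h2 : P 1 L e2 0 ≠ 0 ∨ P 1 L e1 0 ≠ 0
    · have := energy hL (γ := P 1 L e2 0) (δ := -(P 1 L e1 0))
        (by ring) (by rw [hq1, hp1]; ring)
      rcases h2 with h | h
      · exact h this.1
      · exact h (by rw [← neg_eq_zero]; exact this.2)
    · push_neg at h2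
      obtain ⟨hq0, hp0⟩ := h2
      have := energy hL (γ := 1) (δ := 0)
        (by rw [hq0, hp0]; ring) (by rw [hq1, hp1]; ring)
      exact one_ne_zero this.1

end

open Set

theorem stmt0 (L : ℝ) (hL : 0 < L) :
    ∃ D : Set ℂ, IsClosed D ∧ DiscreteTopology ↥D ∧
      ∀ z : ℂ, z ∉ D → ∀ f : ℝ → ℂ, ContinuousOn f (Icc 0 L) →
        (∃ v : ℝ → ℂ,
          ContDiffOn ℝ 3 v (Icc 0 L) ∧
          (∀ x ∈ Icc 0 L,
            derivWithin (derivWithin (derivWithin v (Icc 0 L)) (Icc 0 L)) (Icc 0 L) x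
              + derivWithin v (Icc 0 L) x + z * v x = f x) ∧
          v 0 = 0 ∧ v L = 0 ∧ derivWithin v (Icc 0 L) L = 0) ∧
        (∀ v w : ℝ → ℂ,
          (ContDiffOn ℝ 3 v (Icc 0 L) ∧
            (∀ x ∈ Icc 0 L,
              derivWithin (derivWithin (derivWithin v (Icc 0 L)) (Icc 0 L)) (Icc 0 L) x
                + derivWithin v (Icc 0 L) x + z * v x = f x) ∧
            v 0 = 0 ∧ v L = 0 ∧ derivWithin v (Icc 0 L) L = 0) →
          (ContDiffOn ℝ 3 w (Icc 0 L) ∧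
            (∀ x ∈ Icc 0 L,
              derivWithin (derivWithin (derivWithin w (Icc 0 L)) (Icc 0 L)) (Icc 0 L) x
                + derivWithin w (Icc 0 L) x + z * w x = f x) ∧
            w 0 = 0 ∧ w L = 0 ∧ derivWithin w (Icc 0 L) L = 0) →
          EqOn v w (Icc 0 L)) := by
  refine ⟨{z : ℂ | Dl L z = 0}, ?_, ?_, ?_⟩
  · have hc : Continuous (Dl L) :=
      continuous_iff_continuousAt.2 fun z => (analyticAt_Dl L z).continuousAt
    exact isClosed_eq hc continuous_const
  · rw [discreteTopology_subtype_iff]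
    intro z hz
    rcases (analyticAt_Dl L z).eventually_eq_zero_or_eventually_ne_zero with h | h
    · exfalso
      have hOn : AnalyticOnNhd ℂ (Dl L) univ := fun w _ => analyticAt_Dl L w
      have hEq := AnalyticOnNhd.eqOn_zero_of_preconnected_of_eventuallyEq_zero hOn
        isPreconnected_univ (mem_univ z)
        (h.mono fun w hw => by simpa using hw)
      have := hEq (mem_univ 1)
      exact Dl_one_ne_zero hL (by simpa using this)
    · rw [Filter.inf_principal_eq_bot]
      filter_upwards [h] with w hw
      exact hw
  · intro z hz f hf
    have hΔ : Dl L z ≠ 0 := hz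
    constructor
    · exact exist hL hΔ hf
    · rintro v w ⟨Hv1, Hv2, Hv3, Hv4, Hv5⟩ ⟨Hw1, Hw2, Hw3, Hw4, Hw5⟩
      exact uniq hL hΔ Hv1 Hv2 Hv3 Hv4 Hv5 Hw1 Hw2 Hw3 Hw4 Hw5
end

section
/- Let L > 0 and let U : [0,L] → ℝ be three-times continuously differentiable with U'''(x) + U'(x) + U(x) = 0 for all x ∈ [0,L], and U(0) = U(L) = U'(L) = 0. Then U is identically zero on [0,L]. (Consequently the solution of the Cauchy problem U''' + U' + U = 0, U(L) = U'(L) = 0, U''(L) = 1 satisfies U(0) ≠ 0.) -/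
open Set

theorem stmt1 (L : ℝ) (hL : 0 < L) (U : ℝ → ℝ)
    (hU : ContDiffOn ℝ 3 U (Icc 0 L))
    (hode : ∀ x ∈ Icc 0 L,
      derivWithin (derivWithin (derivWithin U (Icc 0 L)) (Icc 0 L)) (Icc 0 L) x
        + derivWithin U (Icc 0 L) x + U x = 0)
    (h0 : U 0 = 0) (hL0 : U L = 0)
    (hL1 : derivWithin U (Icc 0 L) L = 0) :
    ∀ x ∈ Icc 0 L, U x = 0 := by
  set s : Set ℝ := Icc 0 L with hs
  have hsu : UniqueDiffOn ℝ s := uniqueDiffOn_Icc hL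
  set U1 : ℝ → ℝ := derivWithin U s with hU1def
  set U2 : ℝ → ℝ := derivWithin U1 s with hU2def
  set U3 : ℝ → ℝ := derivWithin U2 s with hU3def
  have hU1c : ContDiffOn ℝ 2 U1 s := hU.derivWithin hsu (by norm_num)
  have hU2c : ContDiffOn ℝ 1 U2 s := hU1c.derivWithin hsu (by norm_num)
  have hDU : ∀ x ∈ s, HasDerivWithinAt U (U1 x) s x := fun x hx =>
    ((hU.differentiableOn (by norm_num)) x hx).hasDerivWithinAt
  have hDU1 : ∀ x ∈ s, HasDerivWithinAt U1 (U2 x) s x := fun x hx =>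
    ((hU1c.differentiableOn (by norm_num)) x hx).hasDerivWithinAt
  have hDU2 : ∀ x ∈ s, HasDerivWithinAt U2 (U3 x) s x := fun x hx =>
    ((hU2c.differentiableOn (by norm_num)) x hx).hasDerivWithinAt
  set G : ℝ → ℝ := fun x => U x * U2 x - (U1 x)^2 / 2 + (U x)^2 / 2 with hGdef
  have hDG : ∀ x ∈ s, HasDerivWithinAt G (-(U x)^2) s x := by
    intro x hx
    have h := (((hDU x hx).mul (hDU2 x hx)).sub
      ((((hDU1 x hx).mul (hDU1 x hx))).div_const 2)).add
      ((((hDU x hx).mul (hDU x hx))).div_const 2)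
    have hode' := hode x hx
    have hU3eq : U3 x = -U1 x - U x := by linarith
    have hfun : G = ((U * U2 - fun x => (U1 * U1) x / 2) + fun x => (U * U) x / 2) := by
      ext y; simp only [hGdef, Pi.add_apply, Pi.sub_apply, Pi.mul_apply]; ring
    rw [hfun]
    exact h.congr_deriv (by rw [hU3eq]; ring)
  have hGcont : ContinuousOn G s := fun x hx => (hDG x hx).continuousWithinAt
  have hanti : AntitoneOn G s := by
    apply antitoneOn_of_hasDerivWithinAt_nonpos (convex_Icc 0 L) hGcont
      (f' := fun x => -(U x)^2)
    · intro x hx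
      exact (hDG x (interior_subset hx)).mono interior_subset
    · intro x hx
      nlinarith [sq_nonneg (U x)]
  have hLs : L ∈ s := ⟨le_of_lt hL, le_refl L⟩
  have h0s : (0:ℝ) ∈ s := ⟨le_refl 0, le_of_lt hL⟩
  have hGL : G L = 0 := by simp [hGdef, hL0, ← hU1def, hL1]
  have hG0 : G 0 ≤ 0 := by
    simp only [hGdef, h0]
    nlinarith [sq_nonneg (U1 0)]
  have hGzero : ∀ x ∈ s, G x = 0 := by
    intro x hx
    have h1 : G L ≤ G x := hanti hx hLs hx.2
    have h2 : G x ≤ G 0 := hanti h0s hx hx.1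
    linarith [hGL, hG0]
  intro x hx
  have hDG0 : HasDerivWithinAt G 0 s x := by
    have : HasDerivWithinAt (fun _ : ℝ => (0:ℝ)) 0 s x := hasDerivWithinAt_const x s 0
    exact this.congr (fun y hy => hGzero y hy) (hGzero x hx)
  have := (hDG x hx).derivWithin (hsu x hx)
  have h2 := hDG0.derivWithin (hsu x hx)
  have : -(U x)^2 = 0 := by rw [← this, h2]
  nlinarith [sq_nonneg (U x)]
end

section
/- For each j ∈ {0,1} there exists a constant C > 0 such that for every z ∈ ℝ one has ∑_{n ∈ ℤ, n ≠ 0} |n|^j / (|z + 4n − n³| + n²) ≤ C · ln(|z| + 2) / (|z| + 2)^{(2−j)/3}. -/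
set_option maxHeartbeats 16000000


lemma tele_sum (s : Finset ℕ) (M : ℕ) (hM : 1 ≤ M) (hs : ∀ m ∈ s, M ≤ m) :
    ∑ m ∈ s, (1/(m:ℝ) - 1/(m+1)) ≤ 1/M := by
  rcases s.eq_empty_or_nonempty with rfl | hne
  · simp
  · have hK : s ⊆ Finset.Icc M (s.max' hne) := by
      intro m hm
      exact Finset.mem_Icc.mpr ⟨hs m hm, Finset.le_max' s m hm⟩
    have h1 : ∑ m ∈ s, (1/(m:ℝ) - 1/(m+1)) ≤
        ∑ m ∈ Finset.Icc M (s.max' hne), (1/(m:ℝ) - 1/(m+1)) := by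
      apply Finset.sum_le_sum_of_subset_of_nonneg hK
      intro m hm _
      have hm1 : (1:ℝ) ≤ m := by
        have := (Finset.mem_Icc.mp hm).1
        exact_mod_cast le_trans hM this
      rw [sub_nonneg]
      apply div_le_div_of_nonneg_left <;> linarith
    have hMle : M ≤ s.max' hne := hs _ (s.max'_mem hne)
    have h2 : ∑ m ∈ Finset.Icc M (s.max' hne), (1/(m:ℝ) - 1/(m+1))
        = 1/M - 1/(s.max' hne + 1) := by
      rw [← Finset.Ico_add_one_right_eq_Icc, Finset.sum_Ico_eq_sum_range]
      have h3 : ∀ k, (1/(((M+k : ℕ)):ℝ) - 1/((M+k : ℕ)+1))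
          = (fun i : ℕ => 1/((M:ℝ)+i)) k - (fun i : ℕ => 1/((M:ℝ)+i)) (k+1) := by
        intro k; push_cast; ring_nf
      calc ∑ k ∈ Finset.range ((s.max' hne).succ - M), (1/(((M+k:ℕ)):ℝ) - 1/((M+k:ℕ)+1))
          = ∑ k ∈ Finset.range ((s.max' hne).succ - M),
            ((fun i : ℕ => 1/((M:ℝ)+i)) k - (fun i : ℕ => 1/((M:ℝ)+i)) (k+1)) := by
            apply Finset.sum_congr rfl; intro k _; exact_mod_cast h3 k
        _ = 1/((M:ℝ)+(0:ℕ)) - 1/((M:ℝ)+((s.max' hne).succ - M : ℕ)) :=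
            Finset.sum_range_sub' (fun i : ℕ => 1/((M:ℝ)+i)) _
        _ = 1/M - 1/(s.max' hne + 1) := by
            rw [Nat.cast_sub (le_trans hMle (Nat.le_succ _))]
            push_cast
            ring_nf
    have hpos : (0:ℝ) ≤ 1/(s.max' hne + 1) := by positivity
    linarith


lemma harm_sum (K : ℕ) : ∑ k ∈ Finset.Icc 1 K, 1/(k:ℝ) ≤ 1 + Real.log K := by
  have h := harmonic_le_one_add_log K
  have e : ∑ k ∈ Finset.Icc 1 K, 1/(k:ℝ) = ((harmonic K : ℚ) : ℝ) := by
    rw [harmonic_eq_sum_Icc]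
    push_cast
    simp [one_div]
  rw [e]; exact h

lemma sum_inv_image (T : Finset ℕ) (φ : ℕ → ℕ) (K : ℕ)
    (hinj : ∀ a ∈ T, ∀ b ∈ T, φ a = φ b → a = b)
    (hmem : ∀ m ∈ T, φ m ∈ Finset.Icc 1 K) :
    ∑ m ∈ T, 1/((φ m : ℕ):ℝ) ≤ 1 + Real.log K := by
  have h1 : ∑ m ∈ T, 1/((φ m : ℕ):ℝ) = ∑ k ∈ T.image φ, 1/(k:ℝ) := by
    rw [Finset.sum_image hinj]
  have h2 : T.image φ ⊆ Finset.Icc 1 K := by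
    intro k hk
    obtain ⟨m, hm, rfl⟩ := Finset.mem_image.mp hk
    exact hmem m hm
  rw [h1]
  calc ∑ k ∈ T.image φ, 1/(k:ℝ) ≤ ∑ k ∈ Finset.Icc 1 K, 1/(k:ℝ) := by
        apply Finset.sum_le_sum_of_subset_of_nonneg h2
        intro k _ _; positivity
    _ ≤ 1 + Real.log K := harm_sum K

private lemma aux_cube (x : ℝ) (hx : 1 ≤ x) : x ≤ x^3 := by
  have h2 : 1 ≤ x^2 := by nlinarith
  nlinarith [h2, hx]

private lemma aux_sq (x A w : ℝ) (hx : 0 ≤ x) (hw : 0 < w)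
    (hA6 : (A^2)^3 = w^2) (h3 : w/20 ≤ x^3) : A^2/8 ≤ x^2 := by
  by_contra h
  push_neg at h
  have h6 : (x^2)^3 < (A^2/8)^3 := by
    apply pow_lt_pow_left₀ h (by positivity)
    norm_num
  nlinarith [h6, h3, hw, sq_nonneg (x^3 - w/20)]

private lemma aux_fac (a b c : ℝ) (h : c ≤ a^2) (ha : 2 ≤ a) (hb : 2 ≤ b) :
    c ≤ a^2 + a*b + b^2 - 4 := by nlinarith

lemma oneSided (j : ℕ) (hj : j = 0 ∨ j = 1) (y : ℝ) (s : Finset ℕ) (hs : ∀ m ∈ s, 1 ≤ m) :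
    ∑ m ∈ s, (m:ℝ)^j / (|y - ((m:ℝ)^3 - 4*m)| + (m:ℝ)^2)
      ≤ 200 * Real.log (|y|+2) / (|y|+2) ^ ((2 - (j:ℝ))/3) := by
  classical
  set w : ℝ := |y| + 2 with hwdef
  have hy0 : 0 ≤ |y| := abs_nonneg y
  have hw2 : 2 ≤ w := by simp [hwdef]
  have hw0 : (0:ℝ) < w := by linarith
  set A : ℝ := w ^ ((1:ℝ)/3) with hAdef
  have hA0 : 0 < A := Real.rpow_pos_of_pos hw0 _
  have hA3 : A^(3:ℕ) = w := by
    rw [hAdef, ← Real.rpow_natCast (w ^ ((1:ℝ)/3)) 3, ← Real.rpow_mul hw0.le]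
    norm_num
  have hA1 : 1 < A := by
    by_contra h
    push_neg at h
    have : A^(3:ℕ) ≤ 1 := pow_le_one₀ hA0.le h
    linarith
  have hlog2 : (0.6931:ℝ) < Real.log 2 := by
    have := Real.log_two_gt_d9; linarith
  have hlog2' : Real.log 2 < 0.6932 := by
    have := Real.log_two_lt_d9; linarith
  have hlogw : Real.log 2 ≤ Real.log w := Real.log_le_log (by norm_num) hw2
  have hlogw0 : (0.6931:ℝ) ≤ Real.log w := by linarith
  have he : w ^ ((2 - (j:ℝ))/3) = A ^ (2-j : ℕ) := by
    have hc : ((2 - j:ℕ):ℝ) = 2 - (j:ℝ) := by rcases hj with rfl|rfl <;> norm_num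
    rw [← hc, ← Real.rpow_natCast A (2-j), hAdef, ← Real.rpow_mul hw0.le]
    congr 1; ring
  have hAe : 0 < A ^ (2-j:ℕ) := pow_pos hA0 _
  set M₀ : ℕ := ⌈3*A⌉₊ with hM₀def
  have hM₀4 : 4 ≤ M₀ := by
    have : (3:ℕ) < M₀ := Nat.lt_ceil.mpr (by push_cast; nlinarith)
    omega
  have hM₀le : 3*A ≤ (M₀:ℝ) := Nat.le_ceil _
  -- the term function
  set F : ℕ → ℝ := fun m => (m:ℝ)^j / (|y - ((m:ℝ)^3 - 4*m)| + (m:ℝ)^2) with hF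
  have hDpos : ∀ m : ℕ, 1 ≤ m → (0:ℝ) < |y - ((m:ℝ)^3 - 4*m)| + (m:ℝ)^2 := by
    intro m hm
    have : (1:ℝ) ≤ (m:ℝ) := by exact_mod_cast hm
    have : (0:ℝ) < (m:ℝ)^2 := by positivity
    positivity
  have hFnn : ∀ m : ℕ, 1 ≤ m → 0 ≤ F m := by
    intro m hm
    rw [hF]
    have := hDpos m hm
    positivity
  have hsplit : ∑ m ∈ s, F m
      = ∑ m ∈ s.filter (fun m => M₀ ≤ m), F m
        + ∑ m ∈ s.filter (fun m => ¬ M₀ ≤ m), F m :=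
    (Finset.sum_filter_add_sum_filter_not s _ _).symm
  have hM₀lt : ∀ m : ℕ, m < M₀ → (m:ℝ) < 3*A := by
    intro m hm
    rw [hM₀def] at hm
    exact Nat.lt_ceil.mp hm
  have hM₀ub : (M₀:ℝ) < 3*A + 1 := by
    rw [hM₀def]
    exact Nat.ceil_lt_add_one (by positivity)
  clear_value w A M₀ F
  -- PART 1
  have h1 : ∑ m ∈ s.filter (fun m => M₀ ≤ m), F m ≤ 2 / A ^ (2-j:ℕ) := by
    have hM₀0 : (0:ℝ) < (M₀:ℝ) := by
      have : (0:ℕ) < M₀ := by omega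
      exact_mod_cast this
    have hDbig : ∀ m ∈ s.filter (fun m => M₀ ≤ m),
        (m:ℝ)^3/2 ≤ |y - ((m:ℝ)^3 - 4*m)| + (m:ℝ)^2 := by
      intro m hm
      have hmM : M₀ ≤ m := (Finset.mem_filter.mp hm).2
      have hm4 : (4:ℝ) ≤ (m:ℝ) := by exact_mod_cast le_trans hM₀4 hmM
      have hm3A : 3*A ≤ (m:ℝ) := le_trans hM₀le (by exact_mod_cast hmM)
      have h3 : (3*A)^3 ≤ (m:ℝ)^3 := pow_le_pow_left₀ (by linarith) hm3A 3
      have hcube : 27 * w ≤ (m:ℝ)^3 := by nlinarith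
      have hyb : |y| ≤ (m:ℝ)^3/27 := by
        have : |y| = w - 2 := by rw [hwdef]; ring
        linarith
      have habs : ((m:ℝ)^3 - 4*m) - |y| ≤ |y - ((m:ℝ)^3 - 4*m)| := by
        have h1' : y ≤ |y| := le_abs_self y
        have h2' : ((m:ℝ)^3 - 4*m) - y ≤ |y - ((m:ℝ)^3 - 4*m)| := by
          rw [abs_sub_comm]
          exact le_abs_self _
        linarith
      nlinarith [sq_nonneg ((m:ℝ))]
    obtain ⟨c, hc0, hcM, hcA⟩ : ∃ c : ℝ, 0 ≤ c
        ∧ (∀ m ∈ s.filter (fun m => M₀ ≤ m), F m ≤ c * (1/(m:ℝ) - 1/(m+1)))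
        ∧ c * (1/(M₀:ℝ)) ≤ 2/A^(2-j:ℕ) := by
      have hgen : ∀ m ∈ s.filter (fun m => M₀ ≤ m),
          F m ≤ (m:ℝ)^j / ((m:ℝ)^3/2) := by
        intro m hm
        have hmM : M₀ ≤ m := (Finset.mem_filter.mp hm).2
        have hm4 : (4:ℝ) ≤ (m:ℝ) := by exact_mod_cast le_trans hM₀4 hmM
        have hD := hDbig m hm
        rw [hF]
        show (m:ℝ)^j / (|y - ((m:ℝ)^3 - 4*m)| + (m:ℝ)^2) ≤ (m:ℝ)^j / ((m:ℝ)^3/2)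
        gcongr <;> positivity
      have hAe' : (0:ℝ) < A^2 := pow_pos hA0 2
      rcases hj with rfl | rfl
      · refine ⟨4/(M₀:ℝ), by positivity, ?_, ?_⟩
        · intro m hm
          have hmM : M₀ ≤ m := (Finset.mem_filter.mp hm).2
          have hm4 : (4:ℝ) ≤ (m:ℝ) := by exact_mod_cast le_trans hM₀4 hmM
          have hmM' : (M₀:ℝ) ≤ (m:ℝ) := by exact_mod_cast hmM
          refine le_trans (hgen m hm) ?_
          have hsub : 4/(M₀:ℝ) * (1/(m:ℝ) - 1/((m:ℝ)+1))
              = 4/((M₀:ℝ)*((m:ℝ)*((m:ℝ)+1))) := by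
            field_simp
            ring
          have hd1 : (0:ℝ) < (m:ℝ)^3/2 := by positivity
          have hd2 : (0:ℝ) < (M₀:ℝ)*((m:ℝ)*((m:ℝ)+1)) := by
            have hm0 : (0:ℝ) < (m:ℝ) := by linarith
            exact mul_pos hM₀0 (mul_pos hm0 (by linarith))
          rw [hsub, pow_zero, div_le_div_iff₀ hd1 hd2]
          have h21 : (m:ℝ)+1 ≤ 2*(m:ℝ) := by linarith
          have h2 : (M₀:ℝ)*((m:ℝ)*((m:ℝ)+1)) ≤ (m:ℝ)*((m:ℝ)*(2*(m:ℝ))) := by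
            have hm0 : (0:ℝ) < (m:ℝ) := by linarith
            have hstep1 : (m:ℝ)*((m:ℝ)+1) ≤ (m:ℝ)*(2*(m:ℝ)) :=
              mul_le_mul_of_nonneg_left h21 (by positivity)
            calc (M₀:ℝ)*((m:ℝ)*((m:ℝ)+1)) ≤ (m:ℝ)*((m:ℝ)*((m:ℝ)+1)) := by
                  apply mul_le_mul_of_nonneg_right hmM'
                  nlinarith
              _ ≤ (m:ℝ)*((m:ℝ)*(2*(m:ℝ))) := mul_le_mul_of_nonneg_left hstep1 (by linarith)
          nlinarith [h2]
        · have hsub : 4/(M₀:ℝ) * (1/(M₀:ℝ)) = 4/((M₀:ℝ)*(M₀:ℝ)) := by ring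
          have hd2 : (0:ℝ) < (M₀:ℝ)*(M₀:ℝ) := mul_pos hM₀0 hM₀0
          rw [hsub, show ((2:ℕ)-0) = 2 from rfl, div_le_div_iff₀ hd2 hAe']
          nlinarith
      · refine ⟨4, by norm_num, ?_, ?_⟩
        · intro m hm
          have hmM : M₀ ≤ m := (Finset.mem_filter.mp hm).2
          have hm4 : (4:ℝ) ≤ (m:ℝ) := by exact_mod_cast le_trans hM₀4 hmM
          refine le_trans (hgen m hm) ?_
          have hsub : (4:ℝ) * (1/(m:ℝ) - 1/((m:ℝ)+1))
              = 4/((m:ℝ)*((m:ℝ)+1)) := by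
            field_simp
            ring
          have hd1 : (0:ℝ) < (m:ℝ)^3/2 := by positivity
          have hd2 : (0:ℝ) < (m:ℝ)*((m:ℝ)+1) := by nlinarith [hm4]
          rw [hsub, pow_one, div_le_div_iff₀ hd1 hd2]
          nlinarith
        · have hsub : (4:ℝ) * (1/(M₀:ℝ)) = 4/(M₀:ℝ) := by ring
          rw [hsub, show ((2:ℕ)-1) = 1 from rfl, pow_one,
            div_le_div_iff₀ hM₀0 hA0]
          linarith
    have htel2 := tele_sum (s.filter (fun m => M₀ ≤ m)) M₀ (by omega)
      (fun m hm => (Finset.mem_filter.mp hm).2)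
    calc ∑ m ∈ s.filter (fun m => M₀ ≤ m), F m
        ≤ ∑ m ∈ s.filter (fun m => M₀ ≤ m), c * (1/(m:ℝ) - 1/(m+1)) :=
          Finset.sum_le_sum hcM
      _ = c * ∑ m ∈ s.filter (fun m => M₀ ≤ m), (1/(m:ℝ) - 1/(m+1)) :=
          (Finset.mul_sum _ _ _).symm
      _ ≤ c * (1/(M₀:ℝ)) := mul_le_mul_of_nonneg_left htel2 hc0
      _ ≤ 2/A^(2-j:ℕ) := hcA
  -- PART 2 core
  have hcore : ∑ m ∈ s.filter (fun m => ¬ M₀ ≤ m),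
      (1 / (|y - ((m:ℝ)^3 - 4*m)| + (m:ℝ)^2)) ≤ 60 * Real.log w / A^2 := by
    have hA2 : (0:ℝ) < A^2 := pow_pos hA0 2
    have hM₀0 : (0:ℝ) < (M₀:ℝ) := by
      have : (0:ℕ) < M₀ := by omega
      exact_mod_cast this
    have hts : ∀ m ∈ s.filter (fun m => ¬ M₀ ≤ m), 1 ≤ m ∧ m < M₀ := by
      intro m hm
      have h := Finset.mem_filter.mp hm
      exact ⟨hs m h.1, by omega⟩
    by_cases hw64 : w ≤ 64
    · -- small w : crude bound
      have hb : ∀ m ∈ s.filter (fun m => ¬ M₀ ≤ m),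
          1/(|y - ((m:ℝ)^3 - 4*m)| + (m:ℝ)^2) ≤ 2*(1/(m:ℝ) - 1/(m+1)) := by
        intro m hm
        have hm1 : 1 ≤ m := (hts m hm).1
        have hm1' : (1:ℝ) ≤ (m:ℝ) := by exact_mod_cast hm1
        have hD := hDpos m hm1
        have habs : (0:ℝ) ≤ |y - ((m:ℝ)^3 - 4*m)| := abs_nonneg _
        have hsub : 2*(1/(m:ℝ) - 1/((m:ℝ)+1)) = 2/((m:ℝ)*((m:ℝ)+1)) := by
          field_simp
          ring
        rw [hsub, div_le_div_iff₀ hD (by nlinarith)]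
        nlinarith
      calc ∑ m ∈ s.filter (fun m => ¬ M₀ ≤ m), (1/(|y - ((m:ℝ)^3 - 4*m)| + (m:ℝ)^2))
          ≤ ∑ m ∈ s.filter (fun m => ¬ M₀ ≤ m), 2*(1/(m:ℝ) - 1/(m+1)) :=
            Finset.sum_le_sum hb
        _ = 2 * ∑ m ∈ s.filter (fun m => ¬ M₀ ≤ m), (1/(m:ℝ) - 1/(m+1)) :=
            (Finset.mul_sum _ _ _).symm
        _ ≤ 2 * (1/(1:ℕ)) := by
            apply mul_le_mul_of_nonneg_left ?_ (by norm_num)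
            exact tele_sum _ 1 le_rfl (fun m hm => (hts m hm).1)
        _ ≤ 60 * Real.log w / A^2 := by
            have hA4 : A ≤ 4 := by
              by_contra h
              push_neg at h
              have h43 : (4:ℝ)^3 < A^3 := by nlinarith
              rw [hA3] at h43
              norm_num at h43
              linarith
            have hA16 : A^2 ≤ 16 := by nlinarith
            rw [le_div_iff₀ hA2]
            push_cast
            nlinarith [hlogw0]
    · push_neg at hw64
      have hA4 : 4 < A := by
        by_contra h
        push_neg at h
        have h43 : A^3 ≤ 4^3 := pow_le_pow_left₀ hA0.le h 3
        rw [hA3] at h43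
        norm_num at h43
        linarith
      have hM₀4A : (M₀:ℝ) ≤ 4*A := by linarith
      have hyw : |y| = w - 2 := by rw [hwdef]; ring
      set t := s.filter (fun m => ¬ M₀ ≤ m) with htdef
      set G : ℕ → ℝ := fun m => 1/(|y - ((m:ℝ)^3 - 4*m)| + (m:ℝ)^2) with hG
      have hGnn : ∀ m : ℕ, 1 ≤ m → 0 ≤ G m := by
        intro m hm
        rw [hG]
        exact le_of_lt (by positivity)
      have hQsplit := (Finset.sum_filter_add_sum_filter_not t
        (fun m : ℕ => ((m:ℝ)^3 + 4*(m:ℝ) ≤ (w-2)/2)) G).symm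
      -- region 2a
      have h2a : ∑ m ∈ t.filter (fun m : ℕ => ((m:ℝ)^3 + 4*(m:ℝ) ≤ (w-2)/2)), G m ≤ 8/A^2 := by
        have hterm : ∀ m ∈ t.filter (fun m : ℕ => ((m:ℝ)^3 + 4*(m:ℝ) ≤ (w-2)/2)), G m ≤ 2/w := by
          intro m hm
          have hmt : m ∈ t := (Finset.mem_filter.mp hm).1
          have hQ : (m:ℝ)^3 + 4*(m:ℝ) ≤ (w-2)/2 := (Finset.mem_filter.mp hm).2
          have hm1 : 1 ≤ m := (hts m hmt).1
          have hm1' : (1:ℝ) ≤ (m:ℝ) := by exact_mod_cast hm1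
          have hD := hDpos m hm1
          have h1 : |y| - |(m:ℝ)^3 - 4*(m:ℝ)| ≤ |y - ((m:ℝ)^3 - 4*(m:ℝ))| :=
            abs_sub_abs_le_abs_sub _ _
          have h2 : |(m:ℝ)^3 - 4*(m:ℝ)| ≤ (m:ℝ)^3 + 4*(m:ℝ) := by
            rw [abs_le]
            have hcube : (1:ℝ) ≤ (m:ℝ)^3 := one_le_pow₀ hm1'
            constructor <;> nlinarith
          have hDw : w/2 ≤ |y - ((m:ℝ)^3 - 4*(m:ℝ))| + (m:ℝ)^2 := by nlinarith
          rw [hG]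
          show 1/(|y - ((m:ℝ)^3 - 4*(m:ℝ))| + (m:ℝ)^2) ≤ 2/w
          rw [div_le_div_iff₀ hD hw0]
          nlinarith
        calc ∑ m ∈ t.filter (fun m : ℕ => ((m:ℝ)^3 + 4*(m:ℝ) ≤ (w-2)/2)), G m
            ≤ (t.filter (fun m : ℕ => ((m:ℝ)^3 + 4*(m:ℝ) ≤ (w-2)/2))).card • (2/w) :=
              Finset.sum_le_card_nsmul _ _ _ hterm
          _ = ((t.filter (fun m : ℕ => ((m:ℝ)^3 + 4*(m:ℝ) ≤ (w-2)/2))).card : ℝ) * (2/w) := by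
              rw [nsmul_eq_mul]
          _ ≤ (M₀:ℝ) * (2/w) := by
              apply mul_le_mul_of_nonneg_right ?_ (by positivity)
              have hsub : (t.filter (fun m : ℕ => ((m:ℝ)^3 + 4*(m:ℝ) ≤ (w-2)/2))) ⊆ Finset.range M₀ := by
                intro m hm
                have hmt : m ∈ t := (Finset.mem_filter.mp hm).1
                exact Finset.mem_range.mpr (hts m hmt).2
              have hcard := le_trans (Finset.card_le_card hsub) (Finset.card_range M₀).le
              exact_mod_cast hcard
          _ ≤ 8/A^2 := by
              have hA3' : (0:ℝ) < A^3 := pow_pos hA0 3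
              rw [← hA3]
              have hre : (M₀:ℝ)*(2/A^3) = ((M₀:ℝ)*2)/A^3 := by ring
              rw [hre, div_le_div_iff₀ hA3' hA2]
              nlinarith
      -- region 2b
      have h2b : ∑ m ∈ t.filter (fun m : ℕ => ¬((m:ℝ)^3 + 4*(m:ℝ) ≤ (w-2)/2)), G m
          ≤ (48 + 32 * Real.log M₀)/A^2 := by
        set T := t.filter (fun m : ℕ => ¬((m:ℝ)^3 + 4*(m:ℝ) ≤ (w-2)/2)) with hTdef
        have hlogM0 : 0 ≤ Real.log M₀ := by
          apply Real.log_nonneg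
          have : (1:ℕ) ≤ M₀ := by omega
          exact_mod_cast this
        have hTfact : ∀ m ∈ T, 2 ≤ m ∧ A^2/8 ≤ (m:ℝ)^2 ∧ m < M₀ := by
          intro m hm
          rw [hTdef] at hm
          have hmt : m ∈ t := (Finset.mem_filter.mp hm).1
          have hQ : ¬((m:ℝ)^3 + 4*(m:ℝ) ≤ (w-2)/2) := (Finset.mem_filter.mp hm).2
          push_neg at hQ
          have hm1 : 1 ≤ m := (hts m hmt).1
          have hm1' : (1:ℝ) ≤ (m:ℝ) := by exact_mod_cast hm1
          have hcube : (m:ℝ) ≤ (m:ℝ)^3 := aux_cube _ hm1'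
          have hm3 : w/20 ≤ (m:ℝ)^3 := by linarith only [hQ, hcube, hm1', hw64]
          have hm2 : 2 ≤ m := by
            by_contra h
            push_neg at h
            have hm1e : m = 1 := by omega
            rw [hm1e] at hm3
            norm_num at hm3
            linarith
          have hA6 : (A^2)^3 = w^2 := by rw [← hA3]; ring
          have hsq : A^2/8 ≤ (m:ℝ)^2 :=
            aux_sq (m:ℝ) A w (by positivity) hw0 hA6 hm3
          exact ⟨hm2, hsq, (hts m hmt).2⟩
        rcases T.eq_empty_or_nonempty with hTe | hTne
        · rw [hTe, Finset.sum_empty]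
          apply div_nonneg ?_ hA2.le
          linarith
        · obtain ⟨m₀, hm₀T, hm₀min⟩ :=
            Finset.exists_min_image T (fun m : ℕ => |y - ((m:ℝ)^3 - 4*(m:ℝ))|) hTne
          obtain ⟨hm₀2, hq₀, hm₀M⟩ := hTfact m₀ hm₀T
          have hm₀2' : (2:ℝ) ≤ (m₀:ℝ) := by exact_mod_cast hm₀2
          have hkey : ∀ m ∈ T, m ≠ m₀ →
              A^2/8 * |(m:ℝ) - (m₀:ℝ)| ≤ 2 * |y - ((m:ℝ)^3 - 4*(m:ℝ))| := by
            intro m hm hne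
            obtain ⟨hm2, hq, _⟩ := hTfact m hm
            have hm2' : (2:ℝ) ≤ (m:ℝ) := by exact_mod_cast hm2
            have hfac : A^2/8 ≤ (m:ℝ)^2 + (m:ℝ)*(m₀:ℝ) + (m₀:ℝ)^2 - 4 :=
              aux_fac _ _ _ hq hm2' hm₀2'
            have hfacnn : (0:ℝ) ≤ (m:ℝ)^2 + (m:ℝ)*(m₀:ℝ) + (m₀:ℝ)^2 - 4 := by
              linarith only [hfac, sq_nonneg A]
            have hgap : A^2/8 * |(m:ℝ) - (m₀:ℝ)|
                ≤ |((m:ℝ)^3 - 4*(m:ℝ)) - ((m₀:ℝ)^3 - 4*(m₀:ℝ))| := by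
              have heq : ((m:ℝ)^3 - 4*(m:ℝ)) - ((m₀:ℝ)^3 - 4*(m₀:ℝ))
                  = ((m:ℝ)^2 + (m:ℝ)*(m₀:ℝ) + (m₀:ℝ)^2 - 4) * ((m:ℝ) - (m₀:ℝ)) := by
                ring
              rw [heq, abs_mul, abs_of_nonneg hfacnn]
              exact mul_le_mul_of_nonneg_right hfac (abs_nonneg _)
            have htri : |((m:ℝ)^3 - 4*(m:ℝ)) - ((m₀:ℝ)^3 - 4*(m₀:ℝ))|
                ≤ |y - ((m:ℝ)^3 - 4*(m:ℝ))| + |y - ((m₀:ℝ)^3 - 4*(m₀:ℝ))| := by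
              have h := abs_sub_le ((m:ℝ)^3 - 4*(m:ℝ)) y ((m₀:ℝ)^3 - 4*(m₀:ℝ))
              rw [abs_sub_comm ((m:ℝ)^3 - 4*(m:ℝ)) y] at h
              exact h
            have hmin : |y - ((m₀:ℝ)^3 - 4*(m₀:ℝ))| ≤ |y - ((m:ℝ)^3 - 4*(m:ℝ))| :=
              hm₀min m hm
            linarith
          have hbound : ∀ m ∈ T, m ≠ m₀ →
              G m ≤ (16/A^2) * (1/(|(m:ℝ) - (m₀:ℝ)|)) := by
            intro m hm hne
            obtain ⟨hm2, hq, _⟩ := hTfact m hm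
            have hD := hDpos m (by omega)
            have habs1 : (1:ℝ) ≤ |(m:ℝ) - (m₀:ℝ)| := by
              rcases lt_or_gt_of_ne hne with h | h
              · have hc : (m:ℝ) + 1 ≤ (m₀:ℝ) := by exact_mod_cast Nat.succ_le_of_lt h
                rw [abs_sub_comm, abs_of_nonneg (by linarith)]
                linarith
              · have hc : (m₀:ℝ) + 1 ≤ (m:ℝ) := by exact_mod_cast Nat.succ_le_of_lt h
                rw [abs_of_nonneg (by linarith)]
                linarith
            have hk := hkey m hm hne
            have hDge : A^2/16 * |(m:ℝ) - (m₀:ℝ)|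
                ≤ |y - ((m:ℝ)^3 - 4*(m:ℝ))| + (m:ℝ)^2 := by
              have h0 : 0 ≤ (m:ℝ)^2 := sq_nonneg _
              linarith
            rw [hG]
            show 1/(|y - ((m:ℝ)^3 - 4*(m:ℝ))| + (m:ℝ)^2) ≤ (16/A^2) * (1/(|(m:ℝ) - (m₀:ℝ)|))
            have hdpos : (0:ℝ) < A^2/16 * |(m:ℝ) - (m₀:ℝ)| := by
              apply mul_pos (by positivity)
              linarith
            have hrhs : (16/A^2) * (1/(|(m:ℝ) - (m₀:ℝ)|))
                = 1/(A^2/16 * |(m:ℝ) - (m₀:ℝ)|) := by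
              field_simp
            rw [hrhs]
            exact one_div_le_one_div_of_le hdpos hDge
          have hplus : ∑ m ∈ T.filter (fun m => m₀ < m), G m
              ≤ (16*(1 + Real.log M₀))/A^2 := by
            have hterm : ∀ m ∈ T.filter (fun m => m₀ < m),
                G m ≤ (16/A^2) * (1/(((m - m₀:ℕ)):ℝ)) := by
              intro m hm
              have hmT := (Finset.mem_filter.mp hm).1
              have hlt : m₀ < m := (Finset.mem_filter.mp hm).2
              have habs : |(m:ℝ) - (m₀:ℝ)| = ((m - m₀ : ℕ):ℝ) := by
                rw [Nat.cast_sub hlt.le, abs_of_nonneg]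
                have : (m₀:ℝ) ≤ (m:ℝ) := by exact_mod_cast hlt.le
                linarith
              have hb := hbound m hmT (by omega)
              rw [habs] at hb
              exact hb
            have hinv : ∑ m ∈ T.filter (fun m => m₀ < m), (1/(((m - m₀:ℕ)):ℝ))
                ≤ 1 + Real.log M₀ := by
              apply sum_inv_image _ (fun m => m - m₀) M₀
              · intro a ha b hb hab
                have h1 : m₀ < a := (Finset.mem_filter.mp ha).2
                have h2 : m₀ < b := (Finset.mem_filter.mp hb).2
                omega
              · intro m hm
                have h1 : m₀ < m := (Finset.mem_filter.mp hm).2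
                have h2 : m < M₀ := (hTfact m (Finset.mem_filter.mp hm).1).2.2
                rw [Finset.mem_Icc]
                omega
            calc ∑ m ∈ T.filter (fun m => m₀ < m), G m
                ≤ ∑ m ∈ T.filter (fun m => m₀ < m), (16/A^2) * (1/(((m - m₀:ℕ)):ℝ)) :=
                  Finset.sum_le_sum hterm
              _ = (16/A^2) * ∑ m ∈ T.filter (fun m => m₀ < m), (1/(((m - m₀:ℕ)):ℝ)) :=
                  (Finset.mul_sum _ _ _).symm
              _ ≤ (16/A^2) * (1 + Real.log M₀) := by
                  apply mul_le_mul_of_nonneg_left hinv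
                  positivity
              _ = (16*(1 + Real.log M₀))/A^2 := by ring
          have hminus : ∑ m ∈ (T.filter (fun m => ¬ m₀ < m)).filter (fun m => m < m₀), G m
              ≤ (16*(1 + Real.log M₀))/A^2 := by
            have hterm : ∀ m ∈ (T.filter (fun m => ¬ m₀ < m)).filter (fun m => m < m₀),
                G m ≤ (16/A^2) * (1/(((m₀ - m:ℕ)):ℝ)) := by
              intro m hm
              have hmT := (Finset.mem_filter.mp (Finset.mem_filter.mp hm).1).1
              have hlt : m < m₀ := (Finset.mem_filter.mp hm).2
              have habs : |(m:ℝ) - (m₀:ℝ)| = ((m₀ - m : ℕ):ℝ) := by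
                rw [Nat.cast_sub hlt.le, abs_sub_comm, abs_of_nonneg]
                have : (m:ℝ) ≤ (m₀:ℝ) := by exact_mod_cast hlt.le
                linarith
              have hb := hbound m hmT (by omega)
              rw [habs] at hb
              exact hb
            have hinv : ∑ m ∈ (T.filter (fun m => ¬ m₀ < m)).filter (fun m => m < m₀),
                (1/(((m₀ - m:ℕ)):ℝ)) ≤ 1 + Real.log M₀ := by
              apply sum_inv_image _ (fun m => m₀ - m) M₀
              · intro a ha b hb hab
                have h1 : a < m₀ := (Finset.mem_filter.mp ha).2
                have h2 : b < m₀ := (Finset.mem_filter.mp hb).2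
                omega
              · intro m hm
                have h1 : m < m₀ := (Finset.mem_filter.mp hm).2
                rw [Finset.mem_Icc]
                omega
            calc ∑ m ∈ (T.filter (fun m => ¬ m₀ < m)).filter (fun m => m < m₀), G m
                ≤ ∑ m ∈ (T.filter (fun m => ¬ m₀ < m)).filter (fun m => m < m₀),
                    (16/A^2) * (1/(((m₀ - m:ℕ)):ℝ)) := Finset.sum_le_sum hterm
              _ = (16/A^2) * ∑ m ∈ (T.filter (fun m => ¬ m₀ < m)).filter (fun m => m < m₀),
                    (1/(((m₀ - m:ℕ)):ℝ)) := (Finset.mul_sum _ _ _).symm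
              _ ≤ (16/A^2) * (1 + Real.log M₀) := by
                  apply mul_le_mul_of_nonneg_left hinv
                  positivity
              _ = (16*(1 + Real.log M₀))/A^2 := by ring
          have hcenter : ∑ m ∈ (T.filter (fun m => ¬ m₀ < m)).filter (fun m => ¬ m < m₀), G m
              ≤ 8/A^2 := by
            have hsub : (T.filter (fun m => ¬ m₀ < m)).filter (fun m => ¬ m < m₀) ⊆ {m₀} := by
              intro m hm
              simp only [Finset.mem_filter] at hm
              have : m = m₀ := by omega
              simp [this]
            calc ∑ m ∈ (T.filter (fun m => ¬ m₀ < m)).filter (fun m => ¬ m < m₀), G m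
                ≤ ∑ m ∈ ({m₀} : Finset ℕ), G m := by
                  apply Finset.sum_le_sum_of_subset_of_nonneg hsub
                  intro m hm _
                  have : m = m₀ := Finset.mem_singleton.mp hm
                  exact hGnn m (by omega)
              _ = G m₀ := Finset.sum_singleton _ _
              _ ≤ 8/A^2 := by
                  rw [hG]
                  show 1/(|y - ((m₀:ℝ)^3 - 4*(m₀:ℝ))| + (m₀:ℝ)^2) ≤ 8/A^2
                  have hD := hDpos m₀ (by omega)
                  have habs0 : 0 ≤ |y - ((m₀:ℝ)^3 - 4*(m₀:ℝ))| := abs_nonneg _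
                  rw [div_le_div_iff₀ hD hA2]
                  linarith only [hq₀, habs0]
          have hsplit1 := Finset.sum_filter_add_sum_filter_not T (fun m => m₀ < m) G
          have hsplit2 := Finset.sum_filter_add_sum_filter_not
            (T.filter (fun m => ¬ m₀ < m)) (fun m => m < m₀) G
          calc ∑ m ∈ T, G m
              = ∑ m ∈ T.filter (fun m => m₀ < m), G m
                + (∑ m ∈ (T.filter (fun m => ¬ m₀ < m)).filter (fun m => m < m₀), G m
                  + ∑ m ∈ (T.filter (fun m => ¬ m₀ < m)).filter (fun m => ¬ m < m₀), G m) := by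
                rw [hsplit2, hsplit1]
            _ ≤ (16*(1 + Real.log M₀))/A^2 + ((16*(1 + Real.log M₀))/A^2 + 8/A^2) :=
                add_le_add hplus (add_le_add hminus hcenter)
            _ = (40 + 32 * Real.log M₀)/A^2 := by ring
            _ ≤ (48 + 32 * Real.log M₀)/A^2 := by
                apply (div_le_div_iff_of_pos_right hA2).mpr
                linarith
      rw [hQsplit]
      have hlogM : Real.log M₀ ≤ Real.log 4 + (1/3)*Real.log w := by
        have h1 : Real.log M₀ ≤ Real.log (4*A) := Real.log_le_log hM₀0 hM₀4A
        have h2 : Real.log (4*A) = Real.log 4 + Real.log A :=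
          Real.log_mul (by norm_num) (ne_of_gt hA0)
        have h3 : Real.log A = (1/3)*Real.log w := by
          rw [hAdef, Real.log_rpow hw0]
        linarith
      have hlog4 : Real.log 4 = 2 * Real.log 2 := by
        rw [show (4:ℝ) = 2^2 by norm_num, Real.log_pow]
        push_cast
        ring
      have hlog64 : (4.15:ℝ) ≤ Real.log w := by
        have h1 : Real.log 64 ≤ Real.log w := Real.log_le_log (by norm_num) hw64.le
        have h2 : Real.log 64 = 6 * Real.log 2 := by
          rw [show (64:ℝ) = 2^6 by norm_num, Real.log_pow]
          push_cast
          ring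
        linarith only [h1, h2, hlog2]
      calc ∑ m ∈ t.filter (fun m : ℕ => ((m:ℝ)^3 + 4*(m:ℝ) ≤ (w-2)/2)), G m
            + ∑ m ∈ t.filter (fun m : ℕ => ¬((m:ℝ)^3 + 4*(m:ℝ) ≤ (w-2)/2)), G m
          ≤ 8/A^2 + (48 + 32 * Real.log M₀)/A^2 := add_le_add h2a h2b
        _ = (56 + 32 * Real.log M₀)/A^2 := by rw [← add_div]; ring_nf
        _ ≤ 60 * Real.log w / A^2 := by
            apply (div_le_div_iff_of_pos_right hA2).mpr
            linarith only [hlogM, hlog4, hlog64, hlog2, hlog2']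
  have h2 : ∑ m ∈ s.filter (fun m => ¬ M₀ ≤ m), F m
      ≤ 180 * Real.log w / A ^ (2-j:ℕ) := by
    have hA2 : (0:ℝ) < A^2 := pow_pos hA0 2
    have hlogw' : (0:ℝ) ≤ Real.log w := by linarith
    rcases hj with rfl | rfl
    · have heq : ∑ m ∈ s.filter (fun m => ¬ M₀ ≤ m), F m
          = ∑ m ∈ s.filter (fun m => ¬ M₀ ≤ m),
            (1 / (|y - ((m:ℝ)^3 - 4*m)| + (m:ℝ)^2)) := by
        apply Finset.sum_congr rfl
        intro m _
        rw [hF]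
        show (m:ℝ)^0 / (|y - ((m:ℝ)^3 - 4*m)| + (m:ℝ)^2) = _
        rw [pow_zero]
      rw [heq, show ((2:ℕ)-0) = 2 from rfl]
      refine le_trans hcore ?_
      apply (div_le_div_iff_of_pos_right hA2).mpr
      linarith
    · have hterm : ∀ m ∈ s.filter (fun m => ¬ M₀ ≤ m),
          F m ≤ (3*A) * (1 / (|y - ((m:ℝ)^3 - 4*m)| + (m:ℝ)^2)) := by
        intro m hm
        have hm1 : 1 ≤ m := hs m (Finset.mem_filter.mp hm).1
        have hmM : m < M₀ := by
          have := (Finset.mem_filter.mp hm).2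
          omega
        have hm3A : (m:ℝ) < 3*A := hM₀lt m hmM
        have hD := hDpos m hm1
        rw [hF]
        show (m:ℝ)^1 / (|y - ((m:ℝ)^3 - 4*m)| + (m:ℝ)^2) ≤ _
        rw [pow_one, show (3*A) * (1 / (|y - ((m:ℝ)^3 - 4*m)| + (m:ℝ)^2))
          = (3*A) / (|y - ((m:ℝ)^3 - 4*m)| + (m:ℝ)^2) from by ring]
        gcongr
      calc ∑ m ∈ s.filter (fun m => ¬ M₀ ≤ m), F m
          ≤ ∑ m ∈ s.filter (fun m => ¬ M₀ ≤ m),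
              (3*A) * (1 / (|y - ((m:ℝ)^3 - 4*m)| + (m:ℝ)^2)) := Finset.sum_le_sum hterm
        _ = (3*A) * ∑ m ∈ s.filter (fun m => ¬ M₀ ≤ m),
              (1 / (|y - ((m:ℝ)^3 - 4*m)| + (m:ℝ)^2)) := (Finset.mul_sum _ _ _).symm
        _ ≤ (3*A) * (60 * Real.log w / A^2) := by
            apply mul_le_mul_of_nonneg_left hcore
            linarith
        _ = 180 * Real.log w / A ^ (2-1:ℕ) := by
            have hA0' : A ≠ 0 := ne_of_gt hA0
            rw [show ((2:ℕ)-1) = 1 from rfl, pow_one]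
            field_simp
            ring
  -- assemble
  have hfinal : ∑ m ∈ s, F m ≤ 200 * Real.log w / A ^ (2-j:ℕ) := by
    rw [hsplit]
    calc ∑ m ∈ s.filter (fun m => M₀ ≤ m), F m
          + ∑ m ∈ s.filter (fun m => ¬ M₀ ≤ m), F m
        ≤ 2 / A ^ (2-j:ℕ) + 180 * Real.log w / A ^ (2-j:ℕ) := add_le_add h1 h2
      _ = (2 + 180 * Real.log w) / A ^ (2-j:ℕ) := by rw [← add_div]
      _ ≤ 200 * Real.log w / A ^ (2-j:ℕ) := by
          apply (div_le_div_iff_of_pos_right hAe).mpr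
          linarith
  calc ∑ m ∈ s, F m ≤ 200 * Real.log w / A ^ (2-j:ℕ) := hfinal
    _ = 200 * Real.log w / w ^ ((2 - (j:ℝ))/3) := by rw [he]

theorem stmt2 (j : ℕ) (hj : j = 0 ∨ j = 1) :
    ∃ C : ℝ, 0 < C ∧ ∀ z : ℝ,
      (∑' n : {n : ℤ // n ≠ 0},
          |(n.1 : ℝ)| ^ j / (|z + 4 * (n.1 : ℝ) - (n.1 : ℝ) ^ 3| + (n.1 : ℝ) ^ 2))
        ≤ C * Real.log (|z| + 2) / (|z| + 2) ^ ((2 - (j : ℝ)) / 3) := by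
  classical
  refine ⟨400, by norm_num, fun z => ?_⟩
  have hz0 : (0:ℝ) ≤ |z| := abs_nonneg z
  have hw2 : (2:ℝ) ≤ |z| + 2 := by linarith
  have hw0 : (0:ℝ) < |z| + 2 := by linarith
  have hp0 : (0:ℝ) < (|z| + 2) ^ ((2 - (j:ℝ))/3) := Real.rpow_pos_of_pos hw0 _
  have hlog : (0:ℝ) < Real.log (|z| + 2) := Real.log_pos (by linarith)
  apply tsum_le_of_sum_le'
  · apply div_nonneg ?_ hp0.le
    nlinarith [hlog]
  · intro S
    set f : {n : ℤ // n ≠ 0} → ℝ :=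
      fun n => |(n.1 : ℝ)| ^ j / (|z + 4 * (n.1 : ℝ) - (n.1 : ℝ) ^ 3| + (n.1 : ℝ) ^ 2)
      with hfdef
    have hsplit := (Finset.sum_filter_add_sum_filter_not S (fun n => 0 < n.1) f).symm
    -- positive part
    have hposeq : ∑ n ∈ S.filter (fun n => 0 < n.1), f n
        = ∑ m ∈ ((S.filter (fun n => 0 < n.1)).image (fun n => n.1.toNat) : Finset ℕ),
            (m:ℝ)^j / (|z - ((m:ℝ)^3 - 4*m)| + (m:ℝ)^2) := by
      rw [Finset.sum_image ?hinj]
      case hinj =>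
        intro a ha b hb hab
        have h0a : 0 < a.1 := (Finset.mem_filter.mp ha).2
        have h0b : 0 < b.1 := (Finset.mem_filter.mp hb).2
        have hab' : a.1.toNat = b.1.toNat := hab
        apply Subtype.ext
        omega
      apply Finset.sum_congr rfl
      intro n hn
      have h0 : 0 < n.1 := (Finset.mem_filter.mp hn).2
      have hc : ((n.1.toNat : ℕ):ℝ) = (n.1:ℝ) := by exact_mod_cast Int.toNat_of_nonneg h0.le
      have h0' : (0:ℝ) < (n.1:ℝ) := by exact_mod_cast h0
      rw [hfdef]
      show |(n.1 : ℝ)| ^ j / (|z + 4 * (n.1 : ℝ) - (n.1 : ℝ) ^ 3| + (n.1 : ℝ) ^ 2)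
        = ((n.1.toNat : ℕ):ℝ)^j / (|z - (((n.1.toNat : ℕ):ℝ)^3 - 4*((n.1.toNat : ℕ):ℝ))| + ((n.1.toNat : ℕ):ℝ)^2)
      rw [hc, abs_of_pos h0', show z - ((n.1:ℝ)^3 - 4*(n.1:ℝ)) = z + 4*(n.1:ℝ) - (n.1:ℝ)^3 from by ring]
    have hpos : ∑ n ∈ S.filter (fun n => 0 < n.1), f n
        ≤ 200 * Real.log (|z| + 2) / (|z| + 2) ^ ((2 - (j:ℝ))/3) := by
      rw [hposeq]
      have hmem : ∀ m ∈ ((S.filter (fun n => 0 < n.1)).image (fun n => n.1.toNat) : Finset ℕ), 1 ≤ m := by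
        intro m hm
        obtain ⟨n, hn, rfl⟩ := Finset.mem_image.mp hm
        have h0 : 0 < n.1 := (Finset.mem_filter.mp hn).2
        omega
      exact oneSided j hj z _ hmem
    -- negative part
    have hnegeq : ∑ n ∈ S.filter (fun n => ¬ 0 < n.1), f n
        = ∑ m ∈ ((S.filter (fun n => ¬ 0 < n.1)).image (fun n => n.1.natAbs) : Finset ℕ),
            (m:ℝ)^j / (|(-z) - ((m:ℝ)^3 - 4*m)| + (m:ℝ)^2) := by
      rw [Finset.sum_image ?hinj2]
      case hinj2 =>
        intro a ha b hb hab
        have h0a : a.1 < 0 := by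
          have := (Finset.mem_filter.mp ha).2
          have := a.2
          omega
        have h0b : b.1 < 0 := by
          have := (Finset.mem_filter.mp hb).2
          have := b.2
          omega
        have hab' : a.1.natAbs = b.1.natAbs := hab
        apply Subtype.ext
        omega
      apply Finset.sum_congr rfl
      intro n hn
      have h0 : n.1 < 0 := by
        have := (Finset.mem_filter.mp hn).2
        have := n.2
        omega
      have h0' : (n.1:ℝ) < 0 := by exact_mod_cast h0
      have hc : ((n.1.natAbs : ℕ):ℝ) = -(n.1:ℝ) := by
        rw [Nat.cast_natAbs, Int.cast_abs]
        exact abs_of_neg h0'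
      rw [hfdef]
      show |(n.1 : ℝ)| ^ j / (|z + 4 * (n.1 : ℝ) - (n.1 : ℝ) ^ 3| + (n.1 : ℝ) ^ 2)
        = ((n.1.natAbs : ℕ):ℝ)^j / (|(-z) - (((n.1.natAbs : ℕ):ℝ)^3 - 4*((n.1.natAbs : ℕ):ℝ))| + ((n.1.natAbs : ℕ):ℝ)^2)
      rw [hc, abs_of_neg h0',
        show (-z) - ((-(n.1:ℝ))^3 - 4*(-(n.1:ℝ))) = -(z + 4*(n.1:ℝ) - (n.1:ℝ)^3) from by ring,
        abs_neg, show (-(n.1:ℝ))^2 = (n.1:ℝ)^2 from by ring]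
    have hneg : ∑ n ∈ S.filter (fun n => ¬ 0 < n.1), f n
        ≤ 200 * Real.log (|z| + 2) / (|z| + 2) ^ ((2 - (j:ℝ))/3) := by
      rw [hnegeq]
      have hmem : ∀ m ∈ ((S.filter (fun n => ¬ 0 < n.1)).image (fun n => n.1.natAbs) : Finset ℕ), 1 ≤ m := by
        intro m hm
        obtain ⟨n, hn, rfl⟩ := Finset.mem_image.mp hm
        have h1 : n.1 ≠ 0 := n.2
        omega
      have h := oneSided j hj (-z)
        ((S.filter (fun n => ¬ 0 < n.1)).image (fun n => n.1.natAbs)) hmem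
      rwa [abs_neg] at h
    rw [hsplit]
    calc ∑ n ∈ S.filter (fun n => 0 < n.1), f n + ∑ n ∈ S.filter (fun n => ¬ 0 < n.1), f n
        ≤ 200 * Real.log (|z| + 2) / (|z| + 2) ^ ((2 - (j:ℝ))/3)
          + 200 * Real.log (|z| + 2) / (|z| + 2) ^ ((2 - (j:ℝ))/3) := add_le_add hpos hneg
      _ = 400 * Real.log (|z| + 2) / (|z| + 2) ^ ((2 - (j:ℝ))/3) := by ring
end

section
/- Let F : ℂ³ → ℂ be holomorphic on all of ℂ³ and symmetric, i.e., F(z_{σ(1)}, z_{σ(2)}, z_{σ(3)}) = F(z₁, z₂, z₃) for every permutation σ of {1,2,3}. Then there exists an entire function G : ℂ → ℂ such that for every z ∈ ℂ and every triple (a,b,c) ∈ ℂ³ with a + b + c = 0, ab + bc + ca = 1 and abc = −iz (equivalently, X³ + X + iz = (X−a)(X−b)(X−c) as polynomials), one has G(z) = F(a,b,c). -/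
open Complex Filter Topology

lemma exists_triple (z : ℂ) : ∃ a b c : ℂ, a + b + c = 0 ∧ a * b + b * c + c * a = 1 ∧
    a * b * c = -Complex.I * z := by
  obtain ⟨a, ha⟩ : ∃ a : ℂ, (Polynomial.X ^ 3 + Polynomial.X + Polynomial.C (Complex.I * z)).IsRoot a := by
    apply Complex.exists_root
    have h3 : (Polynomial.X ^ 3 + Polynomial.X + Polynomial.C (Complex.I * z)).natDegree = 3 := by
      compute_degree!
    have hne : (Polynomial.X ^ 3 + Polynomial.X + Polynomial.C (Complex.I * z)) ≠ 0 :=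
      Polynomial.ne_zero_of_natDegree_gt (n := 0) (by rw [h3]; norm_num)
    rw [Polynomial.degree_eq_natDegree hne, h3]; norm_num
  obtain ⟨b, hb⟩ : ∃ b : ℂ, (Polynomial.X ^ 2 + Polynomial.C a * Polynomial.X + Polynomial.C (a ^ 2 + 1)).IsRoot b := by
    apply Complex.exists_root
    have h2 : (Polynomial.X ^ 2 + Polynomial.C a * Polynomial.X + Polynomial.C (a ^ 2 + 1)).natDegree = 2 := by
      compute_degree!
    have hne : (Polynomial.X ^ 2 + Polynomial.C a * Polynomial.X + Polynomial.C (a ^ 2 + 1)) ≠ 0 :=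
      Polynomial.ne_zero_of_natDegree_gt (n := 0) (by rw [h2]; norm_num)
    rw [Polynomial.degree_eq_natDegree hne, h2]; norm_num
  simp [Polynomial.IsRoot] at ha hb
  refine ⟨a, b, -a - b, by ring, by linear_combination -hb, by linear_combination ha - a * hb⟩

lemma perm_eq (F : (Fin 3 → ℂ) → ℂ)
    (hsym : ∀ σ : Equiv.Perm (Fin 3), ∀ v : Fin 3 → ℂ, F (v ∘ σ) = F v)
    {t a b c a' b' c' : ℂ}
    (h1 : a + b + c = 0) (h2 : a * b + b * c + c * a = 1) (h3 : a * b * c = t)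
    (h1' : a' + b' + c' = 0) (h2' : a' * b' + b' * c' + c' * a' = 1) (h3' : a' * b' * c' = t) :
    F ![a, b, c] = F ![a', b', c'] := by
  have pair : ∀ x y x' y' : ℂ, x' + y' = x + y → x' * y' = x * y →
      (x' = x ∧ y' = y) ∨ (x' = y ∧ y' = x) := by
    intro x y x' y' hs hp
    have : (x' - x) * (x' - y) = 0 := by linear_combination x' * hs - hp
    rcases mul_eq_zero.1 this with h | h
    · left
      have hx : x' = x := by linear_combination h
      exact ⟨hx, by linear_combination hs - hx⟩
    · right
      have hx : x' = y := by linear_combination h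
      exact ⟨hx, by linear_combination hs - hx⟩
  have root' : a' ^ 3 + a' - t = 0 := by
    linear_combination a' ^ 2 * h1' - a' * h2' + h3'
  have hzero : (a' - a) * ((a' - b) * (a' - c)) = 0 := by
    linear_combination root' - a' ^ 2 * h1 + a' * h2 - h3
  have key : ∀ σ : Equiv.Perm (Fin 3), ![a, b, c] ∘ σ = ![a', b', c'] →
      F ![a, b, c] = F ![a', b', c'] := fun σ h => by rw [← h, hsym σ]
  rcases mul_eq_zero.1 hzero with h | h
  · have ha : a' = a := by linear_combination h
    have hsum : b' + c' = b + c := by linear_combination h1' - h1 - ha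
    have hprod : b' * c' = b * c := by
      linear_combination h2' - h2 - (b' + c') * ha - a * hsum
    rcases pair b c b' c' hsum hprod with ⟨hb, hc⟩ | ⟨hb, hc⟩
    · exact key (Equiv.refl _) (by funext i; fin_cases i <;> simp [ha, hb, hc])
    · exact key (Equiv.swap 1 2) (by funext i; fin_cases i <;> simp [Equiv.swap_apply_def, ha, hb, hc])
  rcases mul_eq_zero.1 h with h | h
  · have ha : a' = b := by linear_combination h
    have hsum : b' + c' = a + c := by linear_combination h1' - h1 - ha
    have hprod : b' * c' = a * c := by
      linear_combination h2' - h2 - (b' + c') * ha - b * hsum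
    rcases pair a c b' c' hsum hprod with ⟨hb, hc⟩ | ⟨hb, hc⟩
    · exact key (Equiv.swap 0 1) (by funext i; fin_cases i <;> simp [Equiv.swap_apply_def, ha, hb, hc])
    · exact key ((Equiv.swap 1 2).trans (Equiv.swap 0 1))
        (by funext i; fin_cases i <;> simp [Equiv.swap_apply_def, ha, hb, hc])
  · have ha : a' = c := by linear_combination h
    have hsum : b' + c' = a + b := by linear_combination h1' - h1 - ha
    have hprod : b' * c' = a * b := by
      linear_combination h2' - h2 - (b' + c') * ha - c * hsum
    rcases pair a b b' c' hsum hprod with ⟨hb, hc⟩ | ⟨hb, hc⟩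
    · exact key ((Equiv.swap 0 2).trans (Equiv.swap 0 1))
        (by funext i; fin_cases i <;> simp [Equiv.swap_apply_def, ha, hb, hc])
    · exact key (Equiv.swap 0 2) (by funext i; fin_cases i <;> simp [Equiv.swap_apply_def, ha, hb, hc])

/-- a triple of the form (x,y,y) forces `z ^ 2 = 4/27`. -/
lemma repeated_root (z x y : ℂ) (h1 : x + y + y = 0) (h2 : x * y + y * y + y * x = 1)
    (h3 : x * y * y = -Complex.I * z) : z ^ 2 = 4 / 27 := by
  have hx : x = -2 * y := by linear_combination h1
  have hy : y ^ 2 = -1 / 3 := by linear_combination (-1/3) * h2 + (2 * y / 3) * h1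
  have hz : 2 * y ^ 3 = Complex.I * z := by linear_combination -h3 + y ^ 2 * hx
  linear_combination z ^ 2 * Complex.I_sq + (Complex.I * z + 2 * y ^ 3) * hz
    - 4 * (y ^ 4 - y ^ 2 / 3 + 1 / 9) * hy

/-- local holomorphic root of the cubic near a simple root. -/
lemma local_root (z₀ a : ℂ) (hroot : a ^ 3 + a + Complex.I * z₀ = 0) (hs : 3 * a ^ 2 + 1 ≠ 0) :
    ∃ A : ℂ → ℂ, DifferentiableAt ℂ A z₀ ∧ ContinuousAt A z₀ ∧ A z₀ = a ∧
      (∀ᶠ z in 𝓝 z₀, (A z) ^ 3 + A z + Complex.I * z = 0) := by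
  set φ : ℂ → ℂ := fun w => Complex.I * (w ^ 3 + w) with hφ_def
  have hd : HasStrictDerivAt φ (Complex.I * (3 * a ^ 2 + 1)) a := by
    have h := ((hasStrictDerivAt_pow 3 a).add (hasStrictDerivAt_id a)).const_mul Complex.I
    exact h.congr_deriv (by norm_num)
  have hne : Complex.I * (3 * a ^ 2 + 1) ≠ 0 := mul_ne_zero Complex.I_ne_zero hs
  have hφa : φ a = z₀ := by
    show Complex.I * (a ^ 3 + a) = z₀
    linear_combination Complex.I * hroot - z₀ * Complex.I_sq
  set A : ℂ → ℂ := hd.localInverse φ _ a hne with hA_def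
  have hAz₀ : A z₀ = a := by
    rw [← hφa]; exact (hd.hasStrictFDerivAt_equiv hne).localInverse_apply_image
  have hinv : ∀ᶠ z in 𝓝 z₀, φ (A z) = z := by
    rw [← hφa]; exact (hd.hasStrictFDerivAt_equiv hne).eventually_right_inverse
  have hder : HasStrictDerivAt A (Complex.I * (3 * a ^ 2 + 1))⁻¹ z₀ := by
    rw [← hφa]; exact hd.to_localInverse hne
  refine ⟨A, hder.hasDerivAt.differentiableAt, hder.hasDerivAt.differentiableAt.continuousAt, hAz₀, ?_⟩
  refine hinv.mono fun z hz => ?_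
  have hz' : Complex.I * ((A z) ^ 3 + A z) = z := hz
  linear_combination (-Complex.I) * hz' + ((A z) ^ 3 + A z) * Complex.I_sq

theorem stmt3 (F : (Fin 3 → ℂ) → ℂ) (hF : Differentiable ℂ F)
    (hsym : ∀ σ : Equiv.Perm (Fin 3), ∀ v : Fin 3 → ℂ, F (v ∘ σ) = F v) :
    ∃ G : ℂ → ℂ, Differentiable ℂ G ∧
      ∀ z a b c : ℂ, a + b + c = 0 → a * b + b * c + c * a = 1 →
        a * b * c = -Complex.I * z → G z = F ![a, b, c] := by
  choose u v w hu hv hw using exists_triple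
  set G : ℂ → ℂ := fun z => F ![u z, v z, w z] with hG_def
  have hG : ∀ z a b c : ℂ, a + b + c = 0 → a * b + b * c + c * a = 1 →
      a * b * c = -Complex.I * z → G z = F ![a, b, c] := by
    intro z a b c h1 h2 h3
    exact perm_eq F hsym (hu z) (hv z) (hw z) h1 h2 h3
  refine ⟨G, ?_, hG⟩
  -- differentiability at points where the discriminant doesn't vanish
  have hgood : ∀ z₀ : ℂ, z₀ ^ 2 ≠ 4 / 27 → DifferentiableAt ℂ G z₀ := by
    intro z₀ hz₀
    obtain ⟨a, b, c, h1, h2, h3⟩ := exists_triple z₀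
    have hbc : b ≠ c := by
      intro hbc
      exact hz₀ (repeated_root z₀ a b (by linear_combination h1 + hbc)
        (by linear_combination h2 + (a + b) * hbc) (by linear_combination h3 + a * b * hbc))
    have hab : a ≠ b := by
      intro hab
      exact hz₀ (repeated_root z₀ c a (by linear_combination h1 + hab)
        (by linear_combination h2 + (a + c) * hab) (by linear_combination h3 + a * c * hab))
    have hac : a ≠ c := by
      intro hac
      exact hz₀ (repeated_root z₀ b a (by linear_combination h1 + hac)
        (by linear_combination h2 + (a + b) * hac) (by linear_combination h3 + a * b * hac))
    have hroot_a : a ^ 3 + a + Complex.I * z₀ = 0 := by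
      linear_combination a ^ 2 * h1 - a * h2 + h3
    have hsa : 3 * a ^ 2 + 1 ≠ 0 := by
      have he : 3 * a ^ 2 + 1 = (a - b) * (a - c) := by linear_combination 2 * a * h1 - h2
      rw [he]
      exact mul_ne_zero (sub_ne_zero.2 hab) (sub_ne_zero.2 hac)
    have hd2 : -3 * a ^ 2 - 4 = (b - c) ^ 2 := by
      have hsum : b + c = -a := by linear_combination h1
      have hprod : b * c = 1 + a ^ 2 := by linear_combination h2 - a * h1
      have hex : (b - c) ^ 2 = (b + c) ^ 2 - 4 * (b * c) := by ring
      rw [hsum, hprod] at hex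
      linear_combination -hex
    have hd2ne : -3 * a ^ 2 - 4 ≠ 0 := by
      rw [hd2]; exact pow_ne_zero 2 (sub_ne_zero.2 hbc)
    obtain ⟨A, hAdiff, hAcont, hAz₀, hAroot⟩ := local_root z₀ a hroot_a hsa
    set d : ℂ := b - c with hd_def
    have hdne : d ≠ 0 := sub_ne_zero.2 hbc
    set s : ℂ → ℂ := fun z => d * Complex.exp (Complex.log ((-3 * (A z) ^ 2 - 4) / d ^ 2) / 2)
      with hs_def
    -- eventually the argument of log is nonzero
    have hεcont : ContinuousAt (fun z => -3 * (A z) ^ 2 - 4) z₀ := by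
      fun_prop
    have hεval : (fun z => -3 * (A z) ^ 2 - 4) z₀ = (-3 * a ^ 2 - 4) := by simp [hAz₀]
    have hev1 : ∀ᶠ z in 𝓝 z₀, -3 * (A z) ^ 2 - 4 ≠ 0 := by
      apply hεcont.eventually_ne
      show -3 * (A z₀) ^ 2 - 4 ≠ 0
      rw [hAz₀]; exact hd2ne
    have heq : ∀ᶠ z in 𝓝 z₀, G z = F ![A z, (-A z + s z) / 2, (-A z - s z) / 2] := by
      filter_upwards [hev1, hAroot] with z hz1 hz2
      have hw' : (-3 * (A z) ^ 2 - 4) / d ^ 2 ≠ 0 := div_ne_zero hz1 (pow_ne_zero 2 hdne)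
      have hs2 : s z ^ 2 = -3 * (A z) ^ 2 - 4 := by
        have hsq : Complex.exp (Complex.log ((-3 * (A z) ^ 2 - 4) / d ^ 2) / 2) ^ 2
            = (-3 * (A z) ^ 2 - 4) / d ^ 2 := by
          rw [sq, ← Complex.exp_add, add_halves, Complex.exp_log hw']
        show (d * _) ^ 2 = _
        rw [mul_pow, hsq]
        field_simp
      exact hG z (A z) ((-A z + s z) / 2) ((-A z - s z) / 2) (by ring)
        (by linear_combination (-1/4) * hs2) (by linear_combination (-(A z)/4) * hs2 + hz2)
    have hsdiff : DifferentiableAt ℂ s z₀ := by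
      have hlog : DifferentiableAt ℂ Complex.log ((-3 * (A z₀) ^ 2 - 4) / d ^ 2) := by
        apply Complex.differentiableAt_log
        rw [hAz₀, hd2]
        have : (b - c) ^ 2 / d ^ 2 = 1 := by
          rw [hd_def]; field_simp
        rw [this]
        exact Complex.one_mem_slitPlane
      have hinner : DifferentiableAt ℂ (fun z => (-3 * (A z) ^ 2 - 4) / d ^ 2) z₀ := by
        apply DifferentiableAt.div_const
        exact (differentiableAt_const _).mul (hAdiff.pow 2) |>.sub_const 4
      exact ((((hlog.comp z₀ hinner).div_const 2).cexp).const_mul d)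
    have hvec : DifferentiableAt ℂ (fun z => ![A z, (-A z + s z) / 2, (-A z - s z) / 2]) z₀ := by
      rw [differentiableAt_pi]
      intro i
      fin_cases i <;> simp <;> fun_prop
    have := (hF _).comp z₀ hvec
    exact (Filter.EventuallyEq.differentiableAt_iff heq).2 this
  -- continuity at the two branch points
  have hbad : ∀ z₀ : ℂ, z₀ ^ 2 = 4 / 27 → ContinuousAt G z₀ := by
    intro z₀ hb
    have hz0 : z₀ ≠ 0 := by
      intro h; rw [h] at hb; norm_num at hb
    set a : ℂ := 3 * Complex.I * z₀ with ha_def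
    set b : ℂ := -(3 * Complex.I * z₀) / 2 with hb_def
    have h1 : a + b + b = 0 := by rw [ha_def, hb_def]; ring
    have h2 : a * b + b * b + b * a = 1 := by
      rw [ha_def, hb_def]
      linear_combination (-27 * z₀ ^ 2 / 4) * Complex.I_sq + (27 / 4) * hb
    have h3 : a * b * b = -Complex.I * z₀ := by
      rw [ha_def, hb_def]
      linear_combination (27 * Complex.I * z₀ ^ 3 / 4) * Complex.I_sq
        + (-27 * Complex.I * z₀ / 4) * hb
    have hroot_a : a ^ 3 + a + Complex.I * z₀ = 0 := by
      linear_combination a ^ 2 * h1 - a * h2 + h3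
    have hsa : 3 * a ^ 2 + 1 ≠ 0 := by
      have he : 3 * a ^ 2 + 1 = (a - b) * (a - b) := by linear_combination 2 * a * h1 - h2
      have habne : a - b = (9 / 2) * Complex.I * z₀ := by rw [ha_def, hb_def]; ring
      rw [he, habne]
      exact mul_ne_zero (mul_ne_zero (mul_ne_zero (by norm_num) Complex.I_ne_zero) hz0)
        (mul_ne_zero (mul_ne_zero (by norm_num) Complex.I_ne_zero) hz0)
    obtain ⟨A, hAdiff, hAcont, hAz₀, hAroot⟩ := local_root z₀ a hroot_a hsa
    set s : ℂ → ℂ := fun z => (-3 * (A z) ^ 2 - 4) ^ ((1 : ℂ) / 2) with hs_def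
    have hs2 : ∀ z, s z ^ 2 = -3 * (A z) ^ 2 - 4 := by
      intro z
      rcases eq_or_ne (-3 * (A z) ^ 2 - 4) 0 with h | h
      · rw [hs_def]; simp only [h, zero_cpow (by norm_num : (1 : ℂ) / 2 ≠ 0)]
        simp
      · rw [hs_def]
        show (_ ^ ((1:ℂ)/2)) ^ 2 = _
        rw [sq, ← Complex.cpow_add _ _ h, add_halves, Complex.cpow_one]
    have heq : ∀ᶠ z in 𝓝 z₀, G z = F ![A z, (-A z + s z) / 2, (-A z - s z) / 2] := by
      filter_upwards [hAroot] with z hz2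
      exact hG z (A z) ((-A z + s z) / 2) ((-A z - s z) / 2) (by ring)
        (by linear_combination (-1/4) * hs2 z) (by linear_combination (-(A z)/4) * hs2 z + hz2)
    -- s tends to zero at z₀
    have hε0 : -3 * a ^ 2 - 4 = 0 := by
      rw [ha_def]
      linear_combination (-27 * z₀ ^ 2) * Complex.I_sq + 27 * hb
    have hεtend : Tendsto (fun z => -3 * (A z) ^ 2 - 4) (𝓝 z₀) (𝓝 0) := by
      have hcont : ContinuousAt (fun z => -3 * (A z) ^ 2 - 4) z₀ := by fun_prop
      have h0 : -3 * (A z₀) ^ 2 - 4 = 0 := by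
        rw [hAz₀]; exact hε0
      have ht := hcont.tendsto
      beta_reduce at ht
      rw [h0] at ht
      exact ht
    have hstend : Tendsto s (𝓝 z₀) (𝓝 0) := by
      rw [tendsto_zero_iff_norm_tendsto_zero]
      have hnorm : ∀ z, ‖s z‖ = Real.sqrt ‖-3 * (A z) ^ 2 - 4‖ := by
        intro z
        rw [hs_def]
        show ‖_ ^ ((1:ℂ)/2)‖ = _
        have : ((1 : ℂ) / 2) = ((1 / 2 : ℝ) : ℂ) := by norm_num
        rw [this, Complex.norm_cpow_real, Real.sqrt_eq_rpow]
      rw [show (fun z => ‖s z‖) = fun z => Real.sqrt ‖-3 * (A z) ^ 2 - 4‖ from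
        funext hnorm]
      have : Tendsto (fun z => ‖-3 * (A z) ^ 2 - 4‖) (𝓝 z₀) (𝓝 0) := by
        simpa [Function.comp_def] using (continuous_norm.continuousAt.tendsto.comp hεtend)
      simpa [Function.comp_def] using (Real.continuous_sqrt.continuousAt.tendsto.comp this)
    have hAtend : Tendsto A (𝓝 z₀) (𝓝 a) := by
      simpa [hAz₀] using hAcont.tendsto
    have hvec : Tendsto (fun z => ![A z, (-A z + s z) / 2, (-A z - s z) / 2]) (𝓝 z₀)
        (𝓝 ![a, b, b]) := by
      rw [tendsto_pi_nhds]
      intro i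
      have hB : Tendsto (fun z => (-A z + s z) / 2) (𝓝 z₀) (𝓝 b) := by
        have : Tendsto (fun z => (-A z + s z) / 2) (𝓝 z₀) (𝓝 ((-a + 0) / 2)) :=
          (hAtend.neg.add hstend).div_const 2
        convert this using 2
        rw [hb_def, ha_def]; ring
      have hC : Tendsto (fun z => (-A z - s z) / 2) (𝓝 z₀) (𝓝 b) := by
        have : Tendsto (fun z => (-A z - s z) / 2) (𝓝 z₀) (𝓝 ((-a - 0) / 2)) :=
          (hAtend.neg.sub hstend).div_const 2
        convert this using 2
        rw [hb_def, ha_def]; ring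
      fin_cases i <;> simpa using by first | exact hAtend | exact hB | exact hC
    have hT : Tendsto (fun z => F ![A z, (-A z + s z) / 2, (-A z - s z) / 2]) (𝓝 z₀)
        (𝓝 (F ![a, b, b])) := (hF.continuous.continuousAt.tendsto).comp hvec
    have hGz₀ : G z₀ = F ![a, b, b] := hG z₀ a b b h1 h2 h3
    show Tendsto G (𝓝 z₀) (𝓝 (G z₀))
    rw [hGz₀]
    exact hT.congr' (heq.mono fun z hz => hz.symm)
  -- assemble using the removable singularity theorem
  set z₁ : ℂ := ((Real.sqrt (4 / 27) : ℝ) : ℂ) with hz₁_def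
  have hz₁sq : z₁ ^ 2 = 4 / 27 := by
    rw [hz₁_def, ← Complex.ofReal_pow, Real.sq_sqrt (by norm_num : (0:ℝ) ≤ 4/27)]
    norm_num
  have hz₁ne : z₁ ≠ 0 := by
    intro h
    rw [h] at hz₁sq
    norm_num at hz₁sq
  have hsqcases : ∀ z : ℂ, z ^ 2 = 4 / 27 → z = z₁ ∨ z = -z₁ := by
    intro z hz
    have : (z - z₁) * (z + z₁) = 0 := by linear_combination hz - hz₁sq
    rcases mul_eq_zero.1 this with h | h
    · left; linear_combination h
    · right; linear_combination h
  have hne : -z₁ ≠ z₁ := by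
    intro h
    apply hz₁ne
    have : (2 : ℂ) * z₁ = 0 := by linear_combination -h
    simpa using mul_eq_zero.1 this |>.resolve_left (by norm_num)
  have h1 : DifferentiableOn ℂ G ({z₁}ᶜ \ {-z₁}) := by
    intro x hx
    apply DifferentiableAt.differentiableWithinAt
    apply hgood
    intro hxsq
    rcases hsqcases x hxsq with h | h
    · exact hx.1 (by simpa using h)
    · exact hx.2 (by simpa using h)
  have h2 : DifferentiableOn ℂ G {z₁}ᶜ := by
    rw [← Complex.differentiableOn_compl_singleton_and_continuousAt_iff
      (isOpen_compl_singleton.mem_nhds (by simpa using hne))]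
    exact ⟨h1, hbad (-z₁) (by rw [neg_pow]; simp [hz₁sq])⟩
  have h3 : DifferentiableOn ℂ G (Set.univ : Set ℂ) := by
    rw [← Complex.differentiableOn_compl_singleton_and_continuousAt_iff
      (Filter.univ_mem : (Set.univ : Set ℂ) ∈ 𝓝 z₁)]
    constructor
    · have : (Set.univ : Set ℂ) \ {z₁} = {z₁}ᶜ := by
        ext x; simp
      rw [this]
      exact h2
    · exact hbad z₁ hz₁sq
  rw [← differentiableOn_univ]
  exact h3
end

section
/- Let L > 0. There exist entire functions G : ℂ → ℂ and H : ℂ → ℂ such that for every z ∈ ℂ with 27z² ≠ 4 and every triple (λ₁, λ₂, λ₃) ∈ ℂ³ with λ₁+λ₂+λ₃ = 0, λ₁λ₂+λ₂λ₃+λ₃λ₁ = 1 and λ₁λ₂λ₃ = −iz (the roots of λ³+λ+iz = 0, which are then pairwise distinct), one has G(z)·Ξ(λ₁,λ₂,λ₃) = P(λ₁,λ₂,λ₃) and H(z)·Ξ(λ₁,λ₂,λ₃) = detQ(λ₁,λ₂,λ₃). -/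
/-- `det Q` from the paper: the determinant of the boundary-condition matrix. -/
noncomputable def detQ (L : ℝ) (a b c : ℂ) : ℂ :=
  Matrix.det !![(1 : ℂ), 1, 1;
    Complex.exp (a * L), Complex.exp (b * L), Complex.exp (c * L);
    a * Complex.exp (a * L), b * Complex.exp (b * L), c * Complex.exp (c * L)]

/-- `P` from the paper. -/
noncomputable def Pfun (L : ℝ) (a b c : ℂ) : ℂ :=
  Matrix.det !![(1 : ℂ), 1, 1;
    Complex.exp (a * L), Complex.exp (b * L), Complex.exp (c * L);
    a, b, c]

/-- `Ξ` from the paper: the Vandermonde determinant. -/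
noncomputable def Xi (a b c : ℂ) : ℂ :=
  Matrix.det !![(1 : ℂ), 1, 1; a, b, c; a ^ 2, b ^ 2, c ^ 2]

/-- coefficient sequence: `Qc n z * Ξ = pₙ` for power sums of differences. -/
noncomputable def Qc : ℕ → ℂ → ℂ
  | 0, _ => 0
  | 1, _ => 0
  | 2, _ => -1
  | (n+3), z => -Qc (n+1) z - Complex.I * z * Qc n z

lemma Qc_bound (z : ℂ) : ∀ n, ‖Qc n z‖ ≤ (1 + ‖z‖) ^ n := by
  have hz : (0:ℝ) ≤ ‖z‖ := norm_nonneg z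
  have hM : (1:ℝ) ≤ 1 + ‖z‖ := by linarith
  intro n
  induction n using Nat.strong_induction_on with
  | _ n ih =>
    match n with
    | 0 => rw [show Qc 0 z = 0 from rfl]; simp
    | 1 => rw [show Qc 1 z = 0 from rfl]; simp; positivity
    | 2 =>
      rw [show Qc 2 z = -1 from rfl, norm_neg, norm_one]
      nlinarith
    | (m+3) =>
      have h1 := ih (m+1) (by omega)
      have h0 := ih m (by omega)
      have hMn : (0:ℝ) ≤ (1 + ‖z‖) ^ m := by positivity
      have step : ‖Qc (m+3) z‖ ≤ ‖Qc (m+1) z‖ + ‖z‖ * ‖Qc m z‖ := by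
        rw [show Qc (m+3) z = -(Qc (m+1) z) - Complex.I * z * Qc m z from rfl]
        refine (norm_sub_le _ _).trans ?_
        rw [norm_neg, norm_mul, norm_mul, Complex.norm_I, one_mul]
      calc ‖Qc (m+3) z‖ ≤ (1+‖z‖)^(m+1) + ‖z‖ * (1+‖z‖)^m := by
            refine step.trans (add_le_add h1 ?_)
            exact mul_le_mul_of_nonneg_left h0 hz
        _ = (1+‖z‖)^m * ((1+‖z‖) + ‖z‖) := by rw [pow_succ]; ring
        _ ≤ (1+‖z‖)^m * ((1+‖z‖)^3) := by
            refine mul_le_mul_of_nonneg_left ?_ hMn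
            nlinarith [hz, sq_nonneg ‖z‖, mul_nonneg hz hz]
        _ = (1+‖z‖)^(m+3) := by rw [← pow_add]
  
lemma Qc_diff (n : ℕ) : Differentiable ℂ (Qc n) := by
  induction n using Nat.strong_induction_on with
  | _ n ih =>
    match n with
    | 0 => exact differentiable_const 0
    | 1 => exact differentiable_const 0
    | 2 => exact differentiable_const (-1)
    | (m+3) =>
      have h1 := ih (m+1) (by omega)
      have h0 := ih m (by omega)
      have : Qc (m+3) = fun z => -Qc (m+1) z - Complex.I * z * Qc m z := rfl
      rw [this]
      exact h1.neg.sub (((differentiable_const _).mul differentiable_id).mul h0)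

noncomputable def Gfun (L : ℝ) (z : ℂ) : ℂ :=
  ∑' n : ℕ, (L:ℂ) ^ n / (Nat.factorial n : ℂ) * Qc n z

lemma Gfun_diff (L : ℝ) (hL : 0 < L) : Differentiable ℂ (Gfun L) := by
  intro z0
  set R : ℝ := ‖z0‖ + 1 with hR
  have hR0 : (0:ℝ) ≤ R := by positivity
  have hsum : Summable (fun n : ℕ => (L * (1 + R)) ^ n / (Nat.factorial n : ℝ)) :=
    Real.summable_pow_div_factorial _
  have hbd : ∀ (n : ℕ) (w : ℂ), w ∈ Metric.ball (0:ℂ) R →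
      ‖(L:ℂ) ^ n / (Nat.factorial n : ℂ) * Qc n w‖ ≤ (L * (1 + R)) ^ n / (Nat.factorial n : ℝ) := by
    intro n w hw
    have hw' : ‖w‖ < R := by simpa using hw
    have h1 : ‖(L:ℂ) ^ n / (Nat.factorial n : ℂ)‖ = L ^ n / (Nat.factorial n : ℝ) := by
      rw [norm_div, norm_pow]
      simp [Complex.norm_real, abs_of_pos hL]
    rw [norm_mul, h1]
    have h2 : ‖Qc n w‖ ≤ (1 + R) ^ n := by
      refine (Qc_bound w n).trans ?_
      refine pow_le_pow_left₀ (by positivity) (by linarith) n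
    have hfac : (0:ℝ) < (Nat.factorial n : ℝ) := by positivity
    rw [mul_pow, div_mul_eq_mul_div]
    refine div_le_div_of_nonneg_right ?_ hfac.le
    exact mul_le_mul_of_nonneg_left h2 (by positivity)
  have hdiff : DifferentiableOn ℂ (Gfun L) (Metric.ball (0:ℂ) R) :=
    Complex.differentiableOn_tsum_of_summable_norm hsum
      (fun n => ((differentiable_const _).mul (Qc_diff n)).differentiableOn)
      Metric.isOpen_ball hbd
  have hz0 : z0 ∈ Metric.ball (0:ℂ) R := by
    simp [hR]
  exact hdiff.differentiableAt (Metric.isOpen_ball.mem_nhds hz0)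

lemma Xi_eq (a b c : ℂ) : Xi a b c = (b - a) * (c - a) * (c - b) := by
  simp [Xi, Matrix.det_fin_three]; ring

lemma Pfun_eq (L : ℝ) (a b c : ℂ) :
    Pfun L a b c = Complex.exp (a*L) * (b - c) + Complex.exp (b*L) * (c - a)
      + Complex.exp (c*L) * (a - b) := by
  simp [Pfun, Matrix.det_fin_three]; ring

lemma detQ_eq (L : ℝ) (a b c : ℂ) :
    detQ L a b c = Complex.exp (b*L) * Complex.exp (c*L) * (c - b)
      + Complex.exp (a*L) * Complex.exp (c*L) * (a - c)
      + Complex.exp (a*L) * Complex.exp (b*L) * (b - a) := by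
  simp [detQ, Matrix.det_fin_three]; ring

lemma hasSum_exp (x : ℂ) : HasSum (fun n : ℕ => x ^ n / (Nat.factorial n : ℂ)) (Complex.exp x) := by
  rw [Complex.exp_eq_exp_ℂ, NormedSpace.exp_eq_tsum_div]
  exact (NormedSpace.expSeries_div_summable x).hasSum

lemma key (L : ℝ) (z a b c : ℂ) (h1 : a + b + c = 0) (h2 : a*b + b*c + c*a = 1)
    (h3 : a*b*c = -Complex.I * z) :
    Gfun L z * Xi a b c = Pfun L a b c := by
  have ha : a^3 = -a - Complex.I * z := by linear_combination a^2 * h1 - a * h2 + h3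
  have hb : b^3 = -b - Complex.I * z := by linear_combination b^2 * h1 - b * h2 + h3
  have hc : c^3 = -c - Complex.I * z := by linear_combination c^2 * h1 - c * h2 + h3
  have hQp : ∀ n, Qc n z * Xi a b c = a^n * (b - c) + b^n * (c - a) + c^n * (a - b) := by
    intro n
    induction n using Nat.strong_induction_on with
    | _ n ih =>
      match n with
      | 0 => rw [show Qc 0 z = 0 from rfl]; ring_nf
      | 1 => rw [show Qc 1 z = 0 from rfl]; ring_nf
      | 2 => rw [show Qc 2 z = -1 from rfl, Xi_eq]; ring
      | (m+3) =>
        have e1 := ih (m+1) (by omega)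
        have e0 := ih m (by omega)
        have pa : a^(m+3) = a^m * (-a - Complex.I*z) := by rw [← ha]; ring
        have pb : b^(m+3) = b^m * (-b - Complex.I*z) := by rw [← hb]; ring
        have pc : c^(m+3) = c^m * (-c - Complex.I*z) := by rw [← hc]; ring
        have hstep : Qc (m+3) z * Xi a b c = -(Qc (m+1) z * Xi a b c)
            - Complex.I * z * (Qc m z * Xi a b c) := by
          rw [show Qc (m+3) z = -(Qc (m+1) z) - Complex.I * z * Qc m z from rfl]; ring
        rw [hstep, e1, e0, pa, pb, pc]; ring
  have hsum := (((hasSum_exp (a*L)).mul_right (b-c)).add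
      ((hasSum_exp (b*L)).mul_right (c-a))).add ((hasSum_exp (c*L)).mul_right (a-b))
  have hfun : (fun n : ℕ => (L:ℂ)^n / (Nat.factorial n : ℂ) * Qc n z * Xi a b c)
      = fun n : ℕ => (a*L)^n / (Nat.factorial n : ℂ) * (b-c)
        + (b*L)^n / (Nat.factorial n : ℂ) * (c-a)
        + (c*L)^n / (Nat.factorial n : ℂ) * (a-b) := by
    funext n
    rw [mul_assoc, hQp n]
    ring
  have htot : HasSum (fun n : ℕ => (L:ℂ)^n / (Nat.factorial n : ℂ) * Qc n z * Xi a b c)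
      (Pfun L a b c) := by
    rw [hfun, Pfun_eq]
    exact hsum
  rw [Gfun, ← tsum_mul_right]
  exact htot.tsum_eq

theorem stmt4 (L : ℝ) (hL : 0 < L) :
    ∃ G H : ℂ → ℂ, Differentiable ℂ G ∧ Differentiable ℂ H ∧
      ∀ z : ℂ, 27 * z ^ 2 ≠ 4 →
        ∀ l1 l2 l3 : ℂ, l1 + l2 + l3 = 0 → l1 * l2 + l2 * l3 + l3 * l1 = 1 →
          l1 * l2 * l3 = -Complex.I * z →
          G z * Xi l1 l2 l3 = Pfun L l1 l2 l3 ∧ H z * Xi l1 l2 l3 = detQ L l1 l2 l3 := by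
  refine ⟨Gfun L, fun z => -Gfun L (-z), Gfun_diff L hL,
    ((Gfun_diff L hL).comp differentiable_neg).neg, ?_⟩
  intro z _ l1 l2 l3 h1 h2 h3
  refine ⟨key L z l1 l2 l3 h1 h2 h3, ?_⟩
  have h1' : (-l1) + (-l2) + (-l3) = 0 := by linear_combination -h1
  have h2' : (-l1)*(-l2) + (-l2)*(-l3) + (-l3)*(-l1) = 1 := by linear_combination h2
  have h3' : (-l1)*(-l2)*(-l3) = -Complex.I * (-z) := by linear_combination -h3
  have hk := key L (-z) (-l1) (-l2) (-l3) h1' h2' h3'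
  have hXi : Xi (-l1) (-l2) (-l3) = -Xi l1 l2 l3 := by
    rw [Xi_eq, Xi_eq]; ring
  have hP : Pfun L (-l1) (-l2) (-l3) = detQ L l1 l2 l3 := by
    have eb : Complex.exp (l2*L) * Complex.exp (l3*L) = Complex.exp ((-l1)*L) := by
      rw [← Complex.exp_add]; congr 1; linear_combination (L:ℂ) * h1
    have ea : Complex.exp (l1*L) * Complex.exp (l3*L) = Complex.exp ((-l2)*L) := by
      rw [← Complex.exp_add]; congr 1; linear_combination (L:ℂ) * h1
    have ec : Complex.exp (l1*L) * Complex.exp (l2*L) = Complex.exp ((-l3)*L) := by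
      rw [← Complex.exp_add]; congr 1; linear_combination (L:ℂ) * h1
    rw [Pfun_eq, detQ_eq, eb, ea, ec]; ring
  rw [hXi] at hk
  linear_combination hk + hP
end

section
/- Set μ_j = e^{−iπ/6 − 2πij/3} for j = 1, 2, 3. There exist constants C > 0 and R > 0 such that for every real z ≥ R: for each root λ ∈ ℂ of λ³ + λ + iz = 0 there is exactly one index j ∈ {1,2,3} with |λ − μ_j z^{1/3} + (1/(3μ_j)) z^{−1/3}| ≤ C z^{−2/3} (where z^{1/3} is the real cube root of z), and distinct roots correspond to distinct indices j. -/
open Complex Real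


/-- `μ_j = e^{-iπ/6 - 2πij/3}` for `j = 1, 2, 3` (indexed by `Fin 3`, with `j ↦ j+1`). -/
noncomputable def mu (j : Fin 3) : ℂ :=
  Complex.exp (-(Real.pi : ℂ) * Complex.I / 6
    - 2 * (Real.pi : ℂ) * Complex.I * ((j : ℕ) + 1) / 3)

section Aux


lemma exp_real_mul_I (x : ℝ) :
    Complex.exp (x * Complex.I) = (Real.cos x : ℂ) + (Real.sin x : ℂ) * Complex.I := by
  rw [Complex.exp_mul_I]; push_cast; ring

noncomputable def s3 : ℝ := Real.sqrt 3

lemma s3_sq : (s3 : ℝ)^2 = 3 := Real.sq_sqrt (by norm_num)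
lemma s3_nonneg : 0 ≤ s3 := Real.sqrt_nonneg 3
lemma s3c_sq : ((s3 : ℂ))^2 = 3 := by norm_cast; exact_mod_cast s3_sq

lemma mu0 : mu 0 = ((-s3/2 : ℝ) : ℂ) + ((-1/2 : ℝ) : ℂ) * Complex.I := by
  have h : mu 0 = Complex.exp ((-(5*π/6) : ℝ) * Complex.I) := by
    unfold mu
    congr 1
    have : (((0 : Fin 3) : ℕ) : ℂ) = 0 := by norm_num
    rw [this]; push_cast; ring
  rw [h, exp_real_mul_I, Real.cos_neg, Real.sin_neg,
    show 5*π/6 = π - π/6 by ring, Real.cos_pi_sub, Real.sin_pi_sub,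
    Real.cos_pi_div_six, Real.sin_pi_div_six]
  push_cast [s3]
  ring

lemma mu1 : mu 1 = Complex.I := by
  have h : mu 1 = Complex.exp ((-(3*π/2) : ℝ) * Complex.I) := by
    unfold mu; congr 1
    have : (((1 : Fin 3) : ℕ) : ℂ) = 1 := by norm_num
    rw [this]; push_cast; ring
  rw [h, exp_real_mul_I, Real.cos_neg, Real.sin_neg,
    show 3*π/2 = π + π/2 by ring, Real.cos_add, Real.sin_add,
    Real.cos_pi, Real.sin_pi, Real.cos_pi_div_two, Real.sin_pi_div_two]
  push_cast
  ring

lemma mu2 : mu 2 = ((s3/2 : ℝ) : ℂ) + ((-1/2 : ℝ) : ℂ) * Complex.I := by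
  have h : mu 2 = Complex.exp ((-(13*π/6) : ℝ) * Complex.I) := by
    unfold mu; congr 1
    have : (((2 : Fin 3) : ℕ) : ℂ) = 2 := by norm_num
    rw [this]; push_cast; ring
  rw [h, exp_real_mul_I, Real.cos_neg, Real.sin_neg,
    show 13*π/6 = π/6 + 2*π by ring, Real.cos_add, Real.sin_add,
    Real.cos_two_pi, Real.sin_two_pi, Real.cos_pi_div_six, Real.sin_pi_div_six]
  push_cast [s3]
  ring

lemma mu_cube (j : Fin 3) : mu j ^ 3 = -Complex.I := by
  fin_cases j
  · show mu 0 ^ 3 = -Complex.I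
    rw [mu0]; push_cast
    linear_combination (-(s3:ℂ)/8 - 3*Complex.I/8) * s3c_sq + ((-(3:ℂ)*s3/8) + Complex.I/8 - Complex.I/4) * Complex.I_sq
  · show mu 1 ^ 3 = -Complex.I
    rw [mu1, pow_succ, Complex.I_sq]; ring
  · show mu 2 ^ 3 = -Complex.I
    rw [mu2]; push_cast
    linear_combination ((s3:ℂ)/8 - 3*Complex.I/8) * s3c_sq + ((3:ℂ)*s3/8 + Complex.I/8 - Complex.I/4) * Complex.I_sq

lemma prod_eq (X T : ℂ) :
    (X - mu 0 * T) * (X - mu 1 * T) * (X - mu 2 * T) = X^3 + Complex.I * T^3 := by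
  rw [mu0, mu1, mu2]; push_cast
  linear_combination (-(T^2*X)/4 + Complex.I*T^3/4) * s3c_sq + (-3/4*X*T^2 - Complex.I*T^3/4) * Complex.I_sq

lemma norm_coe (a b : ℝ) : ‖((a : ℝ) : ℂ) + ((b : ℝ) : ℂ) * Complex.I‖ = Real.sqrt (a^2+b^2) := by
  rw [Complex.norm_add_mul_I]

lemma mu_norm (j : Fin 3) : ‖mu j‖ = 1 := by
  fin_cases j
  · show ‖mu 0‖ = 1
    rw [mu0, norm_coe, show (-s3/2)^2 + (-1/2 : ℝ)^2 = 1 by linear_combination s3_sq/4, Real.sqrt_one]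
  · show ‖mu 1‖ = 1
    rw [mu1]; simp
  · show ‖mu 2‖ = 1
    rw [mu2, norm_coe, show (s3/2)^2 + (-1/2 : ℝ)^2 = 1 by linear_combination s3_sq/4, Real.sqrt_one]

lemma mu_ne_zero (j : Fin 3) : mu j ≠ 0 := by
  intro h
  have := mu_norm j
  rw [h] at this
  simp at this

lemma sep_aux (a b : ℝ) (h : a^2 + b^2 = 3) : 3/2 ≤ ‖((a : ℝ) : ℂ) + ((b : ℝ) : ℂ) * Complex.I‖ := by
  rw [norm_coe, h]
  rw [Real.le_sqrt (by norm_num) (by norm_num)]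
  norm_num

lemma mu_sep {j k : Fin 3} (h : j ≠ k) : 3/2 ≤ ‖mu j - mu k‖ := by
  have h01 : (3/2 : ℝ) ≤ ‖mu 0 - mu 1‖ := by
    have e : mu 0 - mu 1 = ((-s3/2 : ℝ) : ℂ) + ((-3/2 : ℝ) : ℂ) * Complex.I := by
      rw [mu0, mu1]; push_cast; ring
    rw [e]; exact sep_aux _ _ (by linear_combination s3_sq/4)
  have h02 : (3/2 : ℝ) ≤ ‖mu 0 - mu 2‖ := by
    have e : mu 0 - mu 2 = ((-s3 : ℝ) : ℂ) + ((0 : ℝ) : ℂ) * Complex.I := by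
      rw [mu0, mu2]; push_cast; ring
    rw [e]; exact sep_aux _ _ (by linear_combination s3_sq)
  have h12 : (3/2 : ℝ) ≤ ‖mu 1 - mu 2‖ := by
    have e : mu 1 - mu 2 = ((-s3/2 : ℝ) : ℂ) + ((3/2 : ℝ) : ℂ) * Complex.I := by
      rw [mu1, mu2]; push_cast; ring
    rw [e]; exact sep_aux _ _ (by linear_combination s3_sq/4)
  have h10 : (3/2 : ℝ) ≤ ‖mu 1 - mu 0‖ := by rw [norm_sub_rev]; exact h01
  have h20 : (3/2 : ℝ) ≤ ‖mu 2 - mu 0‖ := by rw [norm_sub_rev]; exact h02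
  have h21 : (3/2 : ℝ) ≤ ‖mu 2 - mu 1‖ := by rw [norm_sub_rev]; exact h12
  fin_cases j <;> fin_cases k
  · exact absurd rfl h
  · exact h01
  · exact h02
  · exact h10
  · exact absurd rfl h
  · exact h12
  · exact h20
  · exact h21
  · exact absurd rfl h


section Main

variable (t : ℝ)

lemma norm_coe_t (ht0 : 0 ≤ t) : ‖((t:ℝ):ℂ)‖ = t := by
  simp [Complex.norm_real, _root_.abs_of_nonneg ht0]


lemma tri (a b c : ℝ) (ht : 100 ≤ t) (ha : 0 ≤ a) (hb : 0 ≤ b) (hc : 0 ≤ c)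
    (hprod : a*b*c ≤ 2*t)
    (hab : 3/2*t ≤ a + b) (hac : 3/2*t ≤ a + c) (hbc : 3/2*t ≤ b + c) :
    a ≤ 2/t ∨ b ≤ 2/t ∨ c ≤ 2/t := by
  have ht0 : (0:ℝ) < t := by linarith
  have h1 : a ≤ t/2 ∨ b ≤ t/2 ∨ c ≤ t/2 := by
    by_contra hcon
    push_neg at hcon
    obtain ⟨h1, h2, h3⟩ := hcon
    have k1 : (t/2)*(t/2) < a*b := by nlinarith
    have k2 : (t/2)*(t/2)*(t/2) < a*b*c := by nlinarith
    nlinarith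
  have key : ∀ x y z : ℝ, 0 ≤ x → x ≤ t/2 → 3/2*t ≤ x + y → 3/2*t ≤ x + z →
      x*y*z ≤ 2*t → x ≤ 2/t := by
    intro x y z hx hx2 hxy hxz hp
    have hy : t ≤ y := by linarith
    have hz : t ≤ z := by linarith
    have k1 : x*t ≤ x*y := mul_le_mul_of_nonneg_left hy hx
    have k2 : (x*t)*t ≤ (x*y)*z := mul_le_mul k1 hz (by linarith)
      (mul_nonneg hx (by linarith))
    rw [le_div_iff₀ ht0]
    nlinarith
  rcases h1 with h | h | h
  · exact Or.inl (key a b c ha h hab hac hprod)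
  · refine Or.inr (Or.inl (key b a c hb h (by linarith) hbc ?_))
    calc b*a*c = a*b*c := by ring
      _ ≤ 2*t := hprod
  · refine Or.inr (Or.inr (key c a b hc h (by linarith) (by linarith) ?_))
    calc c*a*b = a*b*c := by ring
      _ ≤ 2*t := hprod

lemma step1 (ht : 100 ≤ t) (lam : ℂ)
    (hroot : lam ^ 3 + lam + Complex.I * ((t:ℝ):ℂ)^3 = 0) :
    ∃ j : Fin 3, ‖lam - mu j * ((t:ℝ):ℂ)‖ ≤ 2/t := by
  have ht0 : (0:ℝ) < t := by linarith
  have hT : ‖((t:ℝ):ℂ)‖ = t := norm_coe_t t ht0.le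
  have hlam3 : ‖lam‖^3 ≤ ‖lam‖ + t^3 := by
    have h1 : lam^3 = -lam - Complex.I * ((t:ℝ):ℂ)^3 := by linear_combination hroot
    calc ‖lam‖^3 = ‖lam^3‖ := (norm_pow lam 3).symm
      _ = ‖-lam - Complex.I * ((t:ℝ):ℂ)^3‖ := by rw [h1]
      _ ≤ ‖-lam‖ + ‖Complex.I * ((t:ℝ):ℂ)^3‖ := norm_sub_le _ _
      _ = ‖lam‖ + t^3 := by rw [norm_neg, norm_mul, Complex.norm_I, norm_pow, hT, one_mul]
  have hlam : ‖lam‖ ≤ 2*t := by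
    by_contra hcon
    push_neg at hcon
    have hL0 : (0:ℝ) ≤ ‖lam‖ := norm_nonneg lam
    have ha : 200 ≤ ‖lam‖ := by linarith
    have hsq : 40000 ≤ ‖lam‖^2 := by nlinarith
    have h5 : 40000*‖lam‖ ≤ ‖lam‖^3 := by nlinarith
    have hc2 : 4*t^2 ≤ ‖lam‖^2 := by nlinarith
    have h2 : 8*t^3 ≤ ‖lam‖^3 := by nlinarith
    linarith
  have hprodeq : ‖lam - mu 0 * ((t:ℝ):ℂ)‖ * ‖lam - mu 1 * ((t:ℝ):ℂ)‖
      * ‖lam - mu 2 * ((t:ℝ):ℂ)‖ = ‖lam‖ := by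
    rw [← norm_mul, ← norm_mul, prod_eq]
    have h1 : lam^3 + Complex.I * ((t:ℝ):ℂ)^3 = -lam := by linear_combination hroot
    rw [h1, norm_neg]
  have hpair : ∀ j k : Fin 3, j ≠ k →
      3/2*t ≤ ‖lam - mu j * ((t:ℝ):ℂ)‖ + ‖lam - mu k * ((t:ℝ):ℂ)‖ := by
    intro j k hjk
    have h1 : ‖(mu k - mu j) * ((t:ℝ):ℂ)‖ = ‖mu k - mu j‖ * t := by
      rw [norm_mul, hT]
    have h2 : (3/2:ℝ) * t ≤ ‖mu k - mu j‖ * t := by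
      have := mu_sep (Ne.symm hjk)
      nlinarith
    have h3 : ‖(mu k - mu j) * ((t:ℝ):ℂ)‖
        ≤ ‖lam - mu j * ((t:ℝ):ℂ)‖ + ‖lam - mu k * ((t:ℝ):ℂ)‖ := by
      have e : (mu k - mu j) * ((t:ℝ):ℂ)
          = (lam - mu j * ((t:ℝ):ℂ)) - (lam - mu k * ((t:ℝ):ℂ)) := by ring
      rw [e]
      exact norm_sub_le _ _
    linarith [h1 ▸ h3, h2]
  have := tri t ‖lam - mu 0 * ((t:ℝ):ℂ)‖ ‖lam - mu 1 * ((t:ℝ):ℂ)‖ ‖lam - mu 2 * ((t:ℝ):ℂ)‖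
    ht (norm_nonneg _) (norm_nonneg _) (norm_nonneg _)
    (by rw [hprodeq]; linarith)
    (hpair 0 1 (by decide)) (hpair 0 2 (by decide)) (hpair 1 2 (by decide))
  rcases this with h | h | h
  exacts [⟨0, h⟩, ⟨1, h⟩, ⟨2, h⟩]

lemma refine (ht : 100 ≤ t) (lam : ℂ) (j : Fin 3)
    (hroot : lam ^ 3 + lam + Complex.I * ((t:ℝ):ℂ)^3 = 0)
    (hdj : ‖lam - mu j * ((t:ℝ):ℂ)‖ ≤ 2/t) :
    ‖lam - mu j * ((t:ℝ):ℂ) + (1/(3 * mu j)) * (((t:ℝ):ℂ))⁻¹‖ ≤ 2/t^3 := by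
  have ht0 : (0:ℝ) < t := by linarith
  have hT : ‖((t:ℝ):ℂ)‖ = t := norm_coe_t t ht0.le
  have hT0 : ((t:ℝ):ℂ) ≠ 0 := by
    simpa using ne_of_gt ht0
  have hμ : mu j ≠ 0 := mu_ne_zero j
  set T : ℂ := ((t:ℝ):ℂ) with hTdef
  set μ : ℂ := mu j with hμdef
  set δ : ℂ := lam - μ * T with hδdef
  set N : ℂ := 3*μ*T*δ + δ^2 + 1 with hNdef
  set D : ℂ := 3*μ^2*T^2 + N with hDdef
  set E : ℂ := lam - μ * T + (1/(3*μ)) * T⁻¹ with hEdef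
  have hδD : δ * D = -(μ*T) + (lam^3 + lam + Complex.I*T^3) - (μ^3 + Complex.I)*T^3 := by
    rw [hδdef, hDdef, hNdef]; ring
  have hδD' : δ * D = -(μ*T) := by
    rw [hδD, hroot, mu_cube j]; ring
  have hE : (3*μ*T)*E = 3*μ*T*δ + 1 := by
    rw [hEdef, hδdef]
    field_simp
  have key : ((3*μ*T)*E)*D = N := by
    rw [hE]
    rw [hDdef, hNdef]
    linear_combination (3*μ*T) * hδD'
  -- norm bounds
  have hnδ : ‖δ‖ ≤ 2/t := hdj
  have ht2 : (2:ℝ)/t ≤ 1 := by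
    rw [div_le_one ht0]; linarith
  have hδ1 : ‖δ‖ ≤ 1 := le_trans hnδ ht2
  have hδ0 : (0:ℝ) ≤ ‖δ‖ := norm_nonneg δ
  have h3μTδ : ‖3*μ*T*δ‖ ≤ 6 := by
    have h1 : ‖3*μ*T*δ‖ = 3 * (t * ‖δ‖) := by
      rw [norm_mul, norm_mul, norm_mul, mu_norm j, hT]
      simp [mul_assoc]
    rw [h1]
    have : t * ‖δ‖ ≤ t * (2/t) := mul_le_mul_of_nonneg_left hnδ ht0.le
    rw [mul_div_cancel₀ 2 (ne_of_gt ht0)] at this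
    linarith
  have hδsq : ‖δ^2‖ ≤ 1 := by
    rw [norm_pow]
    nlinarith
  have hN8 : ‖N‖ ≤ 8 := by
    rw [hNdef]
    calc ‖3*μ*T*δ + δ^2 + 1‖ ≤ ‖3*μ*T*δ + δ^2‖ + ‖(1:ℂ)‖ := norm_add_le _ _
      _ ≤ ‖3*μ*T*δ‖ + ‖δ^2‖ + ‖(1:ℂ)‖ := by linarith [norm_add_le (3*μ*T*δ) (δ^2)]
      _ ≤ 8 := by rw [norm_one]; linarith
  have h3μ2T2 : ‖3*μ^2*T^2‖ = 3*t^2 := by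
    rw [norm_mul, norm_mul, norm_pow, norm_pow, mu_norm j, hT]
    simp
  have hD2 : 2*t^2 ≤ ‖D‖ := by
    have h1 : ‖(3:ℂ)*μ^2*T^2‖ ≤ ‖D‖ + ‖N‖ := by
      have e : 3*μ^2*T^2 = D - N := by rw [hDdef]; ring
      rw [e]
      exact norm_sub_le _ _
    rw [h3μ2T2] at h1
    nlinarith
  have h3μT : ‖3*μ*T‖ = 3*t := by
    rw [norm_mul, norm_mul, mu_norm j, hT]
    simp
  have hfin : (3*t) * ‖E‖ * ‖D‖ = ‖N‖ := by
    rw [← h3μT, ← norm_mul, ← norm_mul, key]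
  have hE0 : (0:ℝ) ≤ ‖E‖ := norm_nonneg E
  have : ‖E‖ ≤ 2/t^3 := by
    rw [le_div_iff₀ (by positivity : (0:ℝ) < t^3)]
    nlinarith [mul_le_mul_of_nonneg_left hD2 (by positivity : (0:ℝ) ≤ 3*t*‖E‖)]
  exact this

lemma uniq_s5 (ht : 100 ≤ t) (lam : ℂ) {j k : Fin 3}
    (hj : ‖lam - mu j * ((t:ℝ):ℂ) + (1/(3 * mu j)) * (((t:ℝ):ℂ))⁻¹‖ ≤ 5/t^2)
    (hk : ‖lam - mu k * ((t:ℝ):ℂ) + (1/(3 * mu k)) * (((t:ℝ):ℂ))⁻¹‖ ≤ 5/t^2) :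
    j = k := by
  have ht0 : (0:ℝ) < t := by linarith
  have hT : ‖((t:ℝ):ℂ)‖ = t := norm_coe_t t ht0.le
  by_contra hne
  have hsep := mu_sep hne
  set T : ℂ := ((t:ℝ):ℂ)
  set Ej : ℂ := lam - mu j * T + (1/(3 * mu j)) * T⁻¹ with hEj
  set Ek : ℂ := lam - mu k * T + (1/(3 * mu k)) * T⁻¹ with hEk
  have hinv : ∀ i : Fin 3, ‖(1/(3 * mu i)) * T⁻¹‖ = 1/(3*t) := by
    intro i
    rw [norm_mul, norm_inv, hT, norm_div, norm_one, norm_mul, mu_norm i]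
    simp
    ring
  have e : (mu j - mu k) * T = -(Ej - Ek) + ((1/(3 * mu j)) * T⁻¹ - (1/(3 * mu k)) * T⁻¹) := by
    rw [hEj, hEk]; ring
  have h1 : ‖(mu j - mu k) * T‖ ≤ ‖Ej‖ + ‖Ek‖ + 1/(3*t) + 1/(3*t) := by
    rw [e]
    calc ‖-(Ej - Ek) + ((1/(3 * mu j)) * T⁻¹ - (1/(3 * mu k)) * T⁻¹)‖
        ≤ ‖-(Ej - Ek)‖ + ‖(1/(3 * mu j)) * T⁻¹ - (1/(3 * mu k)) * T⁻¹‖ := norm_add_le _ _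
      _ ≤ ‖Ej - Ek‖ + (‖(1/(3 * mu j)) * T⁻¹‖ + ‖(1/(3 * mu k)) * T⁻¹‖) := by
          rw [norm_neg]
          linarith [norm_sub_le ((1/(3 * mu j)) * T⁻¹) ((1/(3 * mu k)) * T⁻¹)]
      _ ≤ ‖Ej‖ + ‖Ek‖ + 1/(3*t) + 1/(3*t) := by
          rw [hinv j, hinv k]
          linarith [norm_sub_le Ej Ek]
  have h2 : 3/2*t ≤ ‖(mu j - mu k) * T‖ := by
    rw [norm_mul, hT]
    nlinarith
  have h3 : (5:ℝ)/t^2 ≤ 5/10000 := by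
    apply div_le_div_of_nonneg_left (by norm_num) (by norm_num)
    nlinarith
  have h4 : (1:ℝ)/(3*t) ≤ 1/300 := by
    apply div_le_div_of_nonneg_left (by norm_num) (by norm_num)
    linarith
  linarith

lemma no_two (ht : 100 ≤ t) (lam lam' : ℂ)
    (hroot : lam ^ 3 + lam + Complex.I * ((t:ℝ):ℂ)^3 = 0)
    (hroot' : lam' ^ 3 + lam' + Complex.I * ((t:ℝ):ℂ)^3 = 0)
    (hne : lam ≠ lam') (j : Fin 3)
    (hj : ‖lam - mu j * ((t:ℝ):ℂ) + (1/(3 * mu j)) * (((t:ℝ):ℂ))⁻¹‖ ≤ 5/t^2)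
    (hj' : ‖lam' - mu j * ((t:ℝ):ℂ) + (1/(3 * mu j)) * (((t:ℝ):ℂ))⁻¹‖ ≤ 5/t^2) :
    False := by
  have ht0 : (0:ℝ) < t := by linarith
  have hT : ‖((t:ℝ):ℂ)‖ = t := norm_coe_t t ht0.le
  set T : ℂ := ((t:ℝ):ℂ)
  have hS : lam^2 + lam*lam' + lam'^2 + 1 = 0 := by
    have h0 : (lam - lam') * (lam^2 + lam*lam' + lam'^2 + 1) = 0 := by
      linear_combination hroot - hroot'
    rcases mul_eq_zero.1 h0 with h | h
    · exact absurd (sub_eq_zero.1 h) hne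
    · exact h
  set a : ℂ := mu j * T - (1/(3 * mu j)) * T⁻¹ with ha
  set e : ℂ := lam - a with he
  set e' : ℂ := lam' - a with he'
  have hje : ‖e‖ ≤ 5/t^2 := by
    rw [he, ha]
    calc ‖lam - (mu j * T - (1/(3 * mu j)) * T⁻¹)‖
        = ‖lam - mu j * T + (1/(3 * mu j)) * T⁻¹‖ := by ring_nf
      _ ≤ 5/t^2 := hj
  have hje' : ‖e'‖ ≤ 5/t^2 := by
    rw [he', ha]
    calc ‖lam' - (mu j * T - (1/(3 * mu j)) * T⁻¹)‖
        = ‖lam' - mu j * T + (1/(3 * mu j)) * T⁻¹‖ := by ring_nf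
      _ ≤ 5/t^2 := hj'
  have hsmall : (5:ℝ)/t^2 ≤ 1/1000 := by
    rw [show (1:ℝ)/1000 = 5/5000 by norm_num]
    apply div_le_div_of_nonneg_left (by norm_num) (by norm_num)
    nlinarith
  have he1 : ‖e‖ ≤ 1/1000 := le_trans hje hsmall
  have he1' : ‖e'‖ ≤ 1/1000 := le_trans hje' hsmall
  have hinv : ‖(1/(3 * mu j)) * T⁻¹‖ = 1/(3*t) := by
    rw [norm_mul, norm_inv, hT, norm_div, norm_one, norm_mul, mu_norm j]
    simp
    ring
  have hμT : ‖mu j * T‖ = t := by rw [norm_mul, mu_norm j, one_mul, hT]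
  have hinv1 : (1:ℝ)/(3*t) ≤ 1 := by
    rw [div_le_one (by linarith)]
    linarith
  have ha_up : ‖a‖ ≤ 2*t := by
    rw [ha]
    calc ‖mu j * T - (1/(3 * mu j)) * T⁻¹‖ ≤ ‖mu j * T‖ + ‖(1/(3 * mu j)) * T⁻¹‖ :=
          norm_sub_le _ _
      _ = t + 1/(3*t) := by rw [hμT, hinv]
      _ ≤ 2*t := by linarith
  have ha_low : t/2 ≤ ‖a‖ := by
    have h1 : ‖mu j * T‖ ≤ ‖a‖ + ‖(1/(3 * mu j)) * T⁻¹‖ := by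
      have e2 : mu j * T = a + (1/(3 * mu j)) * T⁻¹ := by rw [ha]; ring
      rw [e2]
      exact norm_add_le _ _
    rw [hμT, hinv] at h1
    linarith
  have hexp : (3:ℂ)*a^2 = -(3*a*(e+e') + (e^2 + e*e' + e'^2) + 1) := by
    have : lam = a + e := by rw [he]; ring
    have h' : lam' = a + e' := by rw [he']; ring
    rw [this, h'] at hS
    linear_combination hS
  have hnorm : 3*‖a‖^2 ≤ 3*‖a‖*(‖e‖+‖e'‖) + (‖e‖^2 + ‖e‖*‖e'‖ + ‖e'‖^2) + 1 := by
    have h1 : ‖(3:ℂ)*a^2‖ = 3*‖a‖^2 := by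
      rw [norm_mul, norm_pow]; simp
    have h2 : ‖(3:ℂ)*a^2‖ ≤ 3*‖a‖*(‖e‖+‖e'‖) + (‖e‖^2 + ‖e‖*‖e'‖ + ‖e'‖^2) + 1 := by
      rw [hexp, norm_neg]
      calc ‖3*a*(e+e') + (e^2 + e*e' + e'^2) + 1‖
          ≤ ‖3*a*(e+e')‖ + ‖e^2 + e*e' + e'^2‖ + ‖(1:ℂ)‖ := by
            linarith [norm_add_le (3*a*(e+e') + (e^2 + e*e' + e'^2)) (1:ℂ),
              norm_add_le (3*a*(e+e')) (e^2 + e*e' + e'^2)]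
        _ ≤ 3*‖a‖*(‖e‖+‖e'‖) + (‖e‖^2 + ‖e‖*‖e'‖ + ‖e'‖^2) + 1 := by
            have k1 : ‖3*a*(e+e')‖ ≤ 3*‖a‖*(‖e‖+‖e'‖) := by
              rw [norm_mul, norm_mul]
              simp only [Complex.norm_ofNat]
              gcongr
              exact norm_add_le _ _
            have k2 : ‖e^2 + e*e' + e'^2‖ ≤ ‖e‖^2 + ‖e‖*‖e'‖ + ‖e'‖^2 := by
              calc ‖e^2 + e*e' + e'^2‖ ≤ ‖e^2 + e*e'‖ + ‖e'^2‖ := norm_add_le _ _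
                _ ≤ ‖e^2‖ + ‖e*e'‖ + ‖e'^2‖ := by linarith [norm_add_le (e^2) (e*e')]
                _ = ‖e‖^2 + ‖e‖*‖e'‖ + ‖e'‖^2 := by rw [norm_pow, norm_pow, norm_mul]
            rw [norm_one]
            linarith
    linarith [h1 ▸ h2]
  nlinarith [norm_nonneg a, norm_nonneg e, norm_nonneg e',
    mul_le_mul ha_up he1 (norm_nonneg e) (by linarith),
    mul_le_mul ha_up he1' (norm_nonneg e') (by linarith)]

end Main



end Aux

theorem stmt5 :
    ∃ C : ℝ, 0 < C ∧ ∃ R : ℝ, 0 < R ∧ ∀ z : ℝ, R ≤ z →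
      (∀ lam : ℂ, lam ^ 3 + lam + Complex.I * z = 0 →
        ∃! j : Fin 3,
          ‖lam - mu j * ((z ^ ((1 : ℝ) / 3) : ℝ) : ℂ)
              + (1 / (3 * mu j)) * ((z ^ (-(1 : ℝ) / 3) : ℝ) : ℂ)‖
            ≤ C * z ^ (-(2 : ℝ) / 3)) ∧
      (∀ lam lam' : ℂ,
        lam ^ 3 + lam + Complex.I * z = 0 → lam' ^ 3 + lam' + Complex.I * z = 0 →
        lam ≠ lam' → ∀ j : Fin 3,
          ‖lam - mu j * ((z ^ ((1 : ℝ) / 3) : ℝ) : ℂ)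
              + (1 / (3 * mu j)) * ((z ^ (-(1 : ℝ) / 3) : ℝ) : ℂ)‖
            ≤ C * z ^ (-(2 : ℝ) / 3) →
          ‖lam' - mu j * ((z ^ ((1 : ℝ) / 3) : ℝ) : ℂ)
              + (1 / (3 * mu j)) * ((z ^ (-(1 : ℝ) / 3) : ℝ) : ℂ)‖
            ≤ C * z ^ (-(2 : ℝ) / 3) → False) := by
  refine ⟨5, by norm_num, 10^6, by norm_num, ?_⟩
  intro z hz
  have hz0 : (0:ℝ) < z := by
    have : (0:ℝ) < 10^6 := by norm_num
    linarith
  set t : ℝ := z ^ ((1:ℝ)/3) with htdef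
  have ht0 : 0 < t := Real.rpow_pos_of_pos hz0 _
  have htz : t ^ (3:ℕ) = z := by
    rw [htdef, ← Real.rpow_natCast (z ^ ((1:ℝ)/3)) 3, ← Real.rpow_mul hz0.le]
    norm_num
  have ht100 : 100 ≤ t := by
    have h1 : ((10:ℝ)^6) ^ ((1:ℝ)/3) ≤ t :=
      Real.rpow_le_rpow (by norm_num) hz (by norm_num)
    have h2 : ((10:ℝ)^6) ^ ((1:ℝ)/3) = 100 := by
      rw [show ((10:ℝ)^6) = (100:ℝ)^(3:ℕ) by norm_num, ← Real.rpow_natCast (100:ℝ) 3,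
        ← Real.rpow_mul (by norm_num)]
      norm_num
    rw [h2] at h1
    exact h1
  have hm13 : z ^ (-(1:ℝ)/3) = t⁻¹ := by
    rw [show (-(1:ℝ)/3) = -((1:ℝ)/3) by ring, Real.rpow_neg hz0.le]
  have hm23 : z ^ (-(2:ℝ)/3) = (t^2)⁻¹ := by
    rw [show (-(2:ℝ)/3) = -((2:ℝ)/3) by ring, Real.rpow_neg hz0.le]
    congr 1
    rw [show ((2:ℝ)/3) = (1:ℝ)/3 * ((3:ℕ):ℝ) * ((2:ℝ)/3) by push_cast; ring]
    rw [show (1:ℝ)/3 * ((3:ℕ):ℝ) * ((2:ℝ)/3) = (1:ℝ)/3 * (((2:ℕ)):ℝ) by push_cast; ring,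
      Real.rpow_mul hz0.le, Real.rpow_natCast]
  have hTcube : (((t:ℝ)):ℂ)^3 = (z:ℂ) := by
    rw [← htz]
    push_cast
    ring
  have hroot_conv : ∀ lam : ℂ, lam ^ 3 + lam + Complex.I * z = 0 →
      lam ^ 3 + lam + Complex.I * ((t:ℝ):ℂ)^3 = 0 := by
    intro lam h
    rw [hTcube]
    exact h
  have hgoal_conv : ∀ (lam : ℂ) (j : Fin 3),
      (lam - mu j * ((t:ℝ):ℂ) + (1 / (3 * mu j)) * ((z ^ (-(1:ℝ)/3) : ℝ) : ℂ))
        = lam - mu j * ((t:ℝ):ℂ) + (1 / (3 * mu j)) * (((t:ℝ):ℂ))⁻¹ := by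
    intro lam j
    rw [hm13]
    push_cast
    ring
  constructor
  · intro lam hroot
    obtain ⟨j, hj⟩ := step1 t ht100 lam (hroot_conv lam hroot)
    have hj2 := refine t ht100 lam j (hroot_conv lam hroot) hj
    have hbnd : ‖lam - mu j * ((t:ℝ):ℂ) + (1 / (3 * mu j)) * (((t:ℝ):ℂ))⁻¹‖
        ≤ 5 / t^2 := by
      have h1 : (2:ℝ)/t^3 ≤ 5/t^2 := by
        rw [div_le_div_iff₀ (by positivity) (by positivity)]
        nlinarith
      linarith
    refine ⟨j, ?_, ?_⟩
    · beta_reduce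
      rw [hgoal_conv lam j, hm23]
      calc ‖lam - mu j * ((t:ℝ):ℂ) + (1 / (3 * mu j)) * (((t:ℝ):ℂ))⁻¹‖ ≤ 5/t^2 := hbnd
        _ = 5 * (t^2)⁻¹ := by ring
    · intro k hk
      beta_reduce at hk
      rw [hgoal_conv lam k, hm23] at hk
      have hk' : ‖lam - mu k * ((t:ℝ):ℂ) + (1 / (3 * mu k)) * (((t:ℝ):ℂ))⁻¹‖ ≤ 5 / t^2 := by
        calc ‖lam - mu k * ((t:ℝ):ℂ) + (1 / (3 * mu k)) * (((t:ℝ):ℂ))⁻¹‖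
            ≤ 5 * (t^2)⁻¹ := hk
          _ = 5 / t^2 := by ring
      exact uniq_s5 t ht100 lam hk' hbnd
  · intro lam lam' hroot hroot' hne j hj hj'
    rw [hgoal_conv lam j, hm23] at hj
    rw [hgoal_conv lam' j, hm23] at hj'
    refine no_two t ht100 lam lam' (hroot_conv lam hroot) (hroot_conv lam' hroot') hne j ?_ ?_
    · calc ‖lam - mu j * ((t:ℝ):ℂ) + (1 / (3 * mu j)) * (((t:ℝ):ℂ))⁻¹‖
          ≤ 5 * (t^2)⁻¹ := hj
        _ = 5 / t^2 := by ring
    · calc ‖lam' - mu j * ((t:ℝ):ℂ) + (1 / (3 * mu j)) * (((t:ℝ):ℂ))⁻¹‖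
          ≤ 5 * (t^2)⁻¹ := hj'
        _ = 5 / t^2 := by ring
end

section
/- Let k, l be positive integers, let L = 2π√((k²+kl+l²)/3), and set λ₁ = −(2πi/(3L))(2k+l), λ₂ = λ₁ + 2πik/L, λ₃ = λ₂ + 2πil/L, and z = −(2k+l)(k−l)(2l+k)/(3√3 (k²+kl+l²)^{3/2}). Then: (i) λ_j³ + λ_j + iz = 0 for j = 1, 2, 3; (ii) λ₁, λ₂, λ₃ are pairwise distinct; (iii) e^{λ₁L} = e^{λ₂L} = e^{λ₃L}; and consequently (iv) (λ₂−λ₁)e^{−λ₃L} + (λ₃−λ₂)e^{−λ₁L} + (λ₁−λ₃)e^{−λ₂L} = 0, i.e., detQ(λ₁,λ₂,λ₃) = 0. -/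
theorem stmt9 (k l : ℕ) (hk : 0 < k) (hl : 0 < l)
    (L z : ℝ) (lam₁ lam₂ lam₃ : ℂ)
    (hLdef : L = 2 * Real.pi * Real.sqrt (((k : ℝ) ^ 2 + k * l + l ^ 2) / 3))
    (hzdef : z = -((2 * (k : ℝ) + l) * ((k : ℝ) - l) * (2 * (l : ℝ) + k))
      / (3 * Real.sqrt 3 * ((k : ℝ) ^ 2 + k * l + l ^ 2) ^ ((3 : ℝ) / 2)))
    (hlam₁ : lam₁ = -(2 * (Real.pi : ℂ) * Complex.I / (3 * L)) * (2 * k + l))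
    (hlam₂ : lam₂ = lam₁ + 2 * (Real.pi : ℂ) * Complex.I * k / L)
    (hlam₃ : lam₃ = lam₂ + 2 * (Real.pi : ℂ) * Complex.I * l / L) :
    (lam₁ ^ 3 + lam₁ + Complex.I * z = 0 ∧ lam₂ ^ 3 + lam₂ + Complex.I * z = 0 ∧
        lam₃ ^ 3 + lam₃ + Complex.I * z = 0) ∧
      (lam₁ ≠ lam₂ ∧ lam₂ ≠ lam₃ ∧ lam₁ ≠ lam₃) ∧
      (Complex.exp (lam₁ * L) = Complex.exp (lam₂ * L) ∧
        Complex.exp (lam₂ * L) = Complex.exp (lam₃ * L)) ∧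
      ((lam₂ - lam₁) * Complex.exp (-lam₃ * L) + (lam₃ - lam₂) * Complex.exp (-lam₁ * L)
          + (lam₁ - lam₃) * Complex.exp (-lam₂ * L) = 0 ∧
        detQ L lam₁ lam₂ lam₃ = 0) := by
  have hk' : (0:ℝ) < k := by exact_mod_cast hk
  have hl' : (0:ℝ) < l := by exact_mod_cast hl
  have hmpos : (0:ℝ) < (k:ℝ)^2 + k*l + l^2 := by positivity
  set S := Real.sqrt (((k:ℝ)^2 + k*l + l^2)/3) with hSdef
  have hSpos : 0 < S := Real.sqrt_pos.mpr (by positivity)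
  have hSne : S ≠ 0 := ne_of_gt hSpos
  have hS2 : S^2 = ((k:ℝ)^2 + k*l + l^2)/3 := Real.sq_sqrt (by positivity)
  have hLpos : 0 < L := by rw [hLdef]; positivity
  have hc0 : (L:ℂ) ≠ 0 := Complex.ofReal_ne_zero.mpr (ne_of_gt hLpos)
  have hL2 : L^2 = 4*Real.pi^2*((k:ℝ)^2 + k*l + l^2)/3 := by
    rw [hLdef]; linear_combination (4*Real.pi^2) * hS2
  have h3 : (Real.sqrt 3)^2 = 3 := Real.sq_sqrt (by norm_num)
  have hsm : Real.sqrt ((k:ℝ)^2 + k*l + l^2) = Real.sqrt 3 * S := by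
    rw [hSdef, ← Real.sqrt_mul (by norm_num : (0:ℝ) ≤ 3)]
    congr 1; ring
  have hm32 : ((k:ℝ)^2 + k*l + l^2) ^ ((3:ℝ)/2)
      = ((k:ℝ)^2 + k*l + l^2) * Real.sqrt ((k:ℝ)^2 + k*l + l^2) := by
    rw [show ((3:ℝ)/2) = (1/2)*((3:ℕ):ℝ) by norm_num, Real.rpow_mul hmpos.le,
      Real.rpow_natCast, ← Real.sqrt_eq_rpow]
    have h := Real.sq_sqrt hmpos.le
    linear_combination (Real.sqrt ((k:ℝ)^2 + k*l + l^2)) * h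
  have hden : 3 * Real.sqrt 3 * ((k:ℝ)^2 + k*l + l^2) ^ ((3:ℝ)/2) = 27 * S^3 := by
    rw [hm32, hsm]
    linear_combination (3*((k:ℝ)^2 + k*l + l^2)*S) * h3 + (-27*S) * hS2
  have hzL : z * L^3
      = -(8*Real.pi^3*((2*(k:ℝ)+l)*((k:ℝ)-l)*(2*(l:ℝ)+k)))/27 := by
    rw [hzdef, hLdef, hden]
    field_simp
    ring
  have hc2 : ((L:ℝ):ℂ)^2 = 4*(Real.pi:ℂ)^2*((k:ℂ)^2+(k:ℂ)*l+(l:ℂ)^2)/3 := by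
    have h := congrArg (Complex.ofReal) hL2
    push_cast at h
    exact h
  have hzc : ((z:ℝ):ℂ) * ((L:ℝ):ℂ)^3
      = -(8*(Real.pi:ℂ)^3*((2*(k:ℂ)+l)*((k:ℂ)-l)*(2*(l:ℂ)+k)))/27 := by
    have h := congrArg (Complex.ofReal) hzL
    push_cast at h
    exact h
  -- key cubic lemma
  have key : ∀ (lam b : ℂ), lam * (L:ℂ) = 2*(Real.pi:ℂ)*Complex.I*b/3 →
      b^3 - 3*b*((k:ℂ)^2+(k:ℂ)*l+(l:ℂ)^2)
        + (2*(k:ℂ)+l)*((k:ℂ)-l)*(2*(l:ℂ)+k) = 0 →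
      lam^3 + lam + Complex.I*(z:ℂ) = 0 := by
    intro lam b e hb
    have hmul : (lam^3 + lam + Complex.I*(z:ℂ)) * (L:ℂ)^3 = 0 := by
      linear_combination (lam^2*(L:ℂ)^2 + lam*(L:ℂ)*(2*(Real.pi:ℂ)*Complex.I*b/3)
          + (2*(Real.pi:ℂ)*Complex.I*b/3)^2 + (L:ℂ)^2) * e
        + (2*(Real.pi:ℂ)*Complex.I*b/3) * hc2
        + Complex.I * hzc
        + ((8*(Real.pi:ℂ)^3*b^3/27)*Complex.I) * Complex.I_sq
        + (-(8*(Real.pi:ℂ)^3*Complex.I/27)) * hb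
    have hc3 : ((L:ℝ):ℂ)^3 ≠ 0 := pow_ne_zero 3 hc0
    exact (mul_eq_zero.mp hmul).resolve_right hc3
  have e1 : lam₁ * (L:ℂ) = 2*(Real.pi:ℂ)*Complex.I*(-(2*(k:ℂ)+l))/3 := by
    rw [hlam₁]; field_simp
  have e2 : lam₂ * (L:ℂ) = 2*(Real.pi:ℂ)*Complex.I*((k:ℂ)-l)/3 := by
    rw [hlam₂, hlam₁]; field_simp; ring
  have e3 : lam₃ * (L:ℂ) = 2*(Real.pi:ℂ)*Complex.I*((k:ℂ)+2*l)/3 := by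
    rw [hlam₃, hlam₂, hlam₁]; field_simp; ring
  have cub1 : lam₁^3 + lam₁ + Complex.I*(z:ℂ) = 0 := key lam₁ _ e1 (by ring)
  have cub2 : lam₂^3 + lam₂ + Complex.I*(z:ℂ) = 0 := key lam₂ _ e2 (by ring)
  have cub3 : lam₃^3 + lam₃ + Complex.I*(z:ℂ) = 0 := key lam₃ _ e3 (by ring)
  -- distinctness
  have hpiC : ((Real.pi:ℝ):ℂ) ≠ 0 := Complex.ofReal_ne_zero.mpr Real.pi_ne_zero
  have hkC : (k:ℂ) ≠ 0 := Nat.cast_ne_zero.mpr hk.ne'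
  have hlC : (l:ℂ) ≠ 0 := Nat.cast_ne_zero.mpr hl.ne'
  have hklC : (k:ℂ) + (l:ℂ) ≠ 0 := by
    have : ((k+l:ℕ):ℂ) ≠ 0 := Nat.cast_ne_zero.mpr (by omega)
    push_cast at this; exact this
  have d21 : lam₂ - lam₁ = 2*(Real.pi:ℂ)*Complex.I*k/(L:ℂ) := by rw [hlam₂]; ring
  have d32 : lam₃ - lam₂ = 2*(Real.pi:ℂ)*Complex.I*l/(L:ℂ) := by rw [hlam₃]; ring
  have d31 : lam₃ - lam₁ = 2*(Real.pi:ℂ)*Complex.I*((k:ℂ)+l)/(L:ℂ) := by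
    rw [hlam₃, hlam₂]; ring
  have ne12 : lam₁ ≠ lam₂ := by
    intro h
    have h0 : 2*(Real.pi:ℂ)*Complex.I*k/(L:ℂ) = 0 := by rw [← d21, h, sub_self]
    field_simp [hpiC, Complex.I_ne_zero, hkC] at h0
    exact absurd h0 (by rw [mul_zero]; exact mul_ne_zero (mul_ne_zero (mul_ne_zero two_ne_zero hpiC) Complex.I_ne_zero) hkC)
  have ne23 : lam₂ ≠ lam₃ := by
    intro h
    have h0 : 2*(Real.pi:ℂ)*Complex.I*l/(L:ℂ) = 0 := by rw [← d32, h, sub_self]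
    field_simp [hpiC, Complex.I_ne_zero, hlC] at h0
    exact absurd h0 (by rw [mul_zero]; exact mul_ne_zero (mul_ne_zero (mul_ne_zero two_ne_zero hpiC) Complex.I_ne_zero) hlC)
  have ne13 : lam₁ ≠ lam₃ := by
    intro h
    have h0 : 2*(Real.pi:ℂ)*Complex.I*((k:ℂ)+l)/(L:ℂ) = 0 := by rw [← d31, h, sub_self]
    field_simp [hpiC, Complex.I_ne_zero, hklC] at h0
    exact absurd h0 (by rw [mul_zero]; exact mul_ne_zero (mul_ne_zero (mul_ne_zero two_ne_zero hpiC) Complex.I_ne_zero) hklC)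
  -- exp equalities
  have eL2 : lam₂ * (L:ℂ) = lam₁ * (L:ℂ) + (k:ℂ)*(2*(Real.pi:ℂ)*Complex.I) := by
    rw [hlam₂, add_mul]; congr 1; field_simp
  have eL3 : lam₃ * (L:ℂ) = lam₂ * (L:ℂ) + (l:ℂ)*(2*(Real.pi:ℂ)*Complex.I) := by
    rw [hlam₃, add_mul]; congr 1; field_simp
  have hexpk : Complex.exp ((k:ℂ)*(2*(Real.pi:ℂ)*Complex.I)) = 1 := by
    have h := Complex.exp_int_mul_two_pi_mul_I (k:ℤ)
    push_cast at h; exact h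
  have hexpl : Complex.exp ((l:ℂ)*(2*(Real.pi:ℂ)*Complex.I)) = 1 := by
    have h := Complex.exp_int_mul_two_pi_mul_I (l:ℤ)
    push_cast at h; exact h
  have hexp12 : Complex.exp (lam₁ * (L:ℂ)) = Complex.exp (lam₂ * (L:ℂ)) := by
    rw [eL2, Complex.exp_add, hexpk, mul_one]
  have hexp23 : Complex.exp (lam₂ * (L:ℂ)) = Complex.exp (lam₃ * (L:ℂ)) := by
    rw [eL3, Complex.exp_add, hexpl, mul_one]
  have hn3 : Complex.exp (-lam₃ * (L:ℂ)) = Complex.exp (-lam₁ * (L:ℂ)) := by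
    rw [show -lam₃ * (L:ℂ) = -(lam₃ * L) by ring, show -lam₁ * (L:ℂ) = -(lam₁ * L) by ring,
      Complex.exp_neg, Complex.exp_neg, hexp12, hexp23]
  have hn2 : Complex.exp (-lam₂ * (L:ℂ)) = Complex.exp (-lam₁ * (L:ℂ)) := by
    rw [show -lam₂ * (L:ℂ) = -(lam₂ * L) by ring, show -lam₁ * (L:ℂ) = -(lam₁ * L) by ring,
      Complex.exp_neg, Complex.exp_neg, hexp12]
  have hsum : (lam₂ - lam₁) * Complex.exp (-lam₃ * L) + (lam₃ - lam₂) * Complex.exp (-lam₁ * L)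
      + (lam₁ - lam₃) * Complex.exp (-lam₂ * L) = 0 := by
    rw [hn3, hn2]; ring
  have hdet : detQ L lam₁ lam₂ lam₃ = 0 := by
    rw [detQ, Matrix.det_fin_three]
    simp only [Matrix.cons_val', Matrix.cons_val_zero, Matrix.cons_val_one, Matrix.head_cons,
      Matrix.empty_val', Matrix.cons_val_fin_one, Matrix.cons_val_two, Matrix.tail_cons,
      Matrix.head_fin_const, Matrix.of_apply]
    rw [← hexp23, ← hexp12]; ring
  exact ⟨⟨cub1, cub2, cub3⟩, ⟨ne12, ne23, ne13⟩, ⟨hexp12, hexp23⟩, hsum, hdet⟩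
end

section
/- Let k, l be positive integers with k ≥ l, let L = 2π√((k²+kl+l²)/3), and set λ₁ = −(2πi/(3L))(2k+l), λ₂ = λ₁ + 2πik/L, λ₃ = λ₂ + 2πil/L. Then 3λ_j² + 1 ≠ 0 for j = 1, 2, 3, and (λ₂−λ₁)/(3λ₃²+1) + (λ₃−λ₂)/(3λ₁²+1) + (λ₁−λ₃)/(3λ₂²+1) ≠ 0. (This is the key computation showing that the corresponding real zero of det Q is simple.) -/
theorem stmt10 (k l : ℕ) (hk : 0 < k) (hl : 0 < l) (hkl : l ≤ k)
    (L : ℝ) (lam₁ lam₂ lam₃ : ℂ)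
    (hLdef : L = 2 * Real.pi * Real.sqrt (((k : ℝ) ^ 2 + k * l + l ^ 2) / 3))
    (hlam₁ : lam₁ = -(2 * (Real.pi : ℂ) * Complex.I / (3 * L)) * (2 * k + l))
    (hlam₂ : lam₂ = lam₁ + 2 * (Real.pi : ℂ) * Complex.I * k / L)
    (hlam₃ : lam₃ = lam₂ + 2 * (Real.pi : ℂ) * Complex.I * l / L) :
    (3 * lam₁ ^ 2 + 1 ≠ 0 ∧ 3 * lam₂ ^ 2 + 1 ≠ 0 ∧ 3 * lam₃ ^ 2 + 1 ≠ 0) ∧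
      (lam₂ - lam₁) / (3 * lam₃ ^ 2 + 1) + (lam₃ - lam₂) / (3 * lam₁ ^ 2 + 1)
          + (lam₁ - lam₃) / (3 * lam₂ ^ 2 + 1) ≠ 0 := by
  have hπ : (0:ℝ) < Real.pi := Real.pi_pos
  have hL : 0 < L := by
    rw [hLdef]
    have : 0 < Real.sqrt (((k : ℝ) ^ 2 + k * l + l ^ 2) / 3) :=
      Real.sqrt_pos.mpr (by positivity)
    positivity
  have hLC : (L:ℂ) ≠ 0 := by exact_mod_cast hL.ne'
  have hπC : ((Real.pi : ℝ) : ℂ) ≠ 0 := by exact_mod_cast hπ.ne'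
  have hkC : (k:ℂ) ≠ 0 := Nat.cast_ne_zero.mpr hk.ne'
  have hlC : (l:ℂ) ≠ 0 := Nat.cast_ne_zero.mpr hl.ne'
  have hklC : (k:ℂ) + l ≠ 0 := by
    have h : ((k+l : ℕ) : ℂ) ≠ 0 := Nat.cast_ne_zero.mpr (by omega)
    push_cast at h; exact h
  have hD : (k:ℂ)^2 + k*l + l^2 ≠ 0 := by
    have h : ((k^2 + k*l + l^2 : ℕ) : ℂ) ≠ 0 := Nat.cast_ne_zero.mpr (by positivity)
    push_cast at h; exact h
  have hL2R : L^2 = 4 * Real.pi^2 * (((k : ℝ) ^ 2 + k * l + l ^ 2) / 3) := by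
    rw [hLdef, mul_pow, mul_pow, Real.sq_sqrt (by positivity)]
    ring
  have hL2 : (L:ℂ)^2 = 4 * (Real.pi:ℂ)^2 * (((k:ℂ)^2 + k*l + l^2) / 3) := by
    have h := congrArg (fun x : ℝ => (x:ℂ)) hL2R
    push_cast at h
    linear_combination h
  set t : ℂ := 2 * (Real.pi:ℂ) * Complex.I / L with htdef
  have ht : t ≠ 0 := by
    rw [htdef]
    exact div_ne_zero (by simp [hπC, Complex.I_ne_zero]) hLC
  have ht2 : t^2 * ((k:ℂ)^2 + k*l + l^2) = -3 := by
    rw [htdef, div_pow, div_mul_eq_mul_div, div_eq_iff (pow_ne_zero 2 hLC)]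
    linear_combination (3:ℂ) * hL2
      + (4 * (Real.pi:ℂ)^2 * ((k:ℂ)^2 + k*l + l^2)) * Complex.I_sq
  have hl1 : lam₁ = -(t * (2*k + l)) / 3 := by
    rw [hlam₁, htdef]
    field_simp
    try ring
    try exact Or.inl trivial
  have hl2 : lam₂ = t * ((k:ℂ) - l) / 3 := by
    linear_combination hlam₂ + hl1 - (k:ℂ) * htdef
  have hl3 : lam₃ = t * ((k:ℂ) + 2*l) / 3 := by
    linear_combination hlam₃ + hl2 - (l:ℂ) * htdef
  have hA1 : 3 * lam₁ ^ 2 + 1 = (-3 * k * (k + l)) / ((k:ℂ)^2 + k*l + l^2) := by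
    rw [eq_div_iff hD, hl1]
    linear_combination ((2*(k:ℂ)+l)^2/3) * ht2
  have hA2 : 3 * lam₂ ^ 2 + 1 = (3 * k * l) / ((k:ℂ)^2 + k*l + l^2) := by
    rw [eq_div_iff hD, hl2]
    linear_combination (((k:ℂ)-l)^2/3) * ht2
  have hA3 : 3 * lam₃ ^ 2 + 1 = (-3 * l * (k + l)) / ((k:ℂ)^2 + k*l + l^2) := by
    rw [eq_div_iff hD, hl3]
    linear_combination (((k:ℂ)+2*l)^2/3) * ht2
  have hm1 : (-3:ℂ) * k * (k + l) ≠ 0 :=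
    mul_ne_zero (mul_ne_zero (by norm_num) hkC) hklC
  have hm2 : (3:ℂ) * k * l ≠ 0 := mul_ne_zero (mul_ne_zero (by norm_num) hkC) hlC
  have hm3 : (-3:ℂ) * l * (k + l) ≠ 0 :=
    mul_ne_zero (mul_ne_zero (by norm_num) hlC) hklC
  have hn1 : 3 * lam₁ ^ 2 + 1 ≠ 0 := by rw [hA1]; exact div_ne_zero hm1 hD
  have hn2 : 3 * lam₂ ^ 2 + 1 ≠ 0 := by rw [hA2]; exact div_ne_zero hm2 hD
  have hn3 : 3 * lam₃ ^ 2 + 1 ≠ 0 := by rw [hA3]; exact div_ne_zero hm3 hD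
  refine ⟨⟨hn1, hn2, hn3⟩, ?_⟩
  have hnum : (k:ℂ)^2 + l^2 + ((k:ℂ)+l)^2 ≠ 0 := by
    have h : ((k^2 + l^2 + (k+l)^2 : ℕ) : ℂ) ≠ 0 := Nat.cast_ne_zero.mpr (by positivity)
    push_cast at h
    intro hc; exact h (by linear_combination hc)
  have hsum : (lam₂ - lam₁) / (3 * lam₃ ^ 2 + 1) + (lam₃ - lam₂) / (3 * lam₁ ^ 2 + 1)
      + (lam₁ - lam₃) / (3 * lam₂ ^ 2 + 1)
      = -(t * (((k:ℂ)^2 + k*l + l^2)) * ((k:ℂ)^2 + l^2 + ((k:ℂ)+l)^2))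
          / (3 * k * l * ((k:ℂ) + l)) := by
    rw [hA1, hA2, hA3]
    simp only [div_div_eq_mul_div]
    rw [hl1, hl2, hl3]
    rw [div_add_div _ _ hm3 hm1, div_add_div _ _ (mul_ne_zero hm3 hm1) hm2,
      div_eq_div_iff (mul_ne_zero (mul_ne_zero hm3 hm1) hm2)
        (mul_ne_zero (mul_ne_zero (mul_ne_zero (by norm_num : (3:ℂ) ≠ 0) hkC) hlC) hklC)]
    ring
  rw [hsum]
  exact div_ne_zero (neg_ne_zero.mpr (mul_ne_zero (mul_ne_zero ht hD) hnum))
    (by exact mul_ne_zero (mul_ne_zero (mul_ne_zero (by norm_num) hkC) hlC) hklC)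
end

section
/- Let L > 0, z ∈ ℂ, and let λ₁, λ₂, λ₃ ∈ ℂ be pairwise distinct with λ₁+λ₂+λ₃ = 0, λ₁λ₂+λ₂λ₃+λ₃λ₁ = 1, and λ_j³ + λ_j + iz = 0 for j = 1, 2, 3. Assume that (λ₂−λ₁)e^{−λ₃L} + (λ₃−λ₂)e^{−λ₁L} + (λ₁−λ₃)e^{−λ₂L} = 0 (i.e., detQ = 0) and λ₁(e^{λ₃L}−e^{λ₂L}) + λ₂(e^{λ₁L}−e^{λ₃L}) + λ₃(e^{λ₂L}−e^{λ₁L}) = 0 (i.e., P = 0). Then e^{(λ₃−λ₁)L} = 1 and e^{(λ₃−λ₂)L} = 1; consequently 3λ₃ ∈ (2πi/L)·ℤ and z is a real number. -/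
theorem stmt11 (L : ℝ) (hL : 0 < L) (z : ℂ) (lam₁ lam₂ lam₃ : ℂ)
    (hne₁₂ : lam₁ ≠ lam₂) (hne₂₃ : lam₂ ≠ lam₃) (hne₁₃ : lam₁ ≠ lam₃)
    (hsum : lam₁ + lam₂ + lam₃ = 0)
    (hsym : lam₁ * lam₂ + lam₂ * lam₃ + lam₃ * lam₁ = 1)
    (hroot₁ : lam₁ ^ 3 + lam₁ + Complex.I * z = 0)
    (hroot₂ : lam₂ ^ 3 + lam₂ + Complex.I * z = 0)
    (hroot₃ : lam₃ ^ 3 + lam₃ + Complex.I * z = 0)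
    (hdetQ : (lam₂ - lam₁) * Complex.exp (-lam₃ * L) + (lam₃ - lam₂) * Complex.exp (-lam₁ * L)
      + (lam₁ - lam₃) * Complex.exp (-lam₂ * L) = 0)
    (hP : lam₁ * (Complex.exp (lam₃ * L) - Complex.exp (lam₂ * L))
      + lam₂ * (Complex.exp (lam₁ * L) - Complex.exp (lam₃ * L))
      + lam₃ * (Complex.exp (lam₂ * L) - Complex.exp (lam₁ * L)) = 0) :
    Complex.exp ((lam₃ - lam₁) * L) = 1 ∧ Complex.exp ((lam₃ - lam₂) * L) = 1 ∧
      (∃ n : ℤ, 3 * lam₃ = 2 * (Real.pi : ℂ) * Complex.I * n / L) ∧ z.im = 0 := by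
  set e1 := Complex.exp (lam₁ * L) with he1
  set e2 := Complex.exp (lam₂ * L) with he2
  set e3 := Complex.exp (lam₃ * L) with he3
  have ha : lam₂ - lam₁ ≠ 0 := sub_ne_zero.mpr (Ne.symm hne₁₂)
  have hb : lam₃ - lam₂ ≠ 0 := sub_ne_zero.mpr (Ne.symm hne₂₃)
  have hab : lam₃ - lam₁ ≠ 0 := sub_ne_zero.mpr (Ne.symm hne₁₃)
  have hexp₃ : Complex.exp (-lam₃ * L) = e1 * e2 := by
    rw [he1, he2, ← Complex.exp_add]
    congr 1
    linear_combination (-(L : ℂ)) * hsum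
  have hexp₁ : Complex.exp (-lam₁ * L) = e2 * e3 := by
    rw [he2, he3, ← Complex.exp_add]
    congr 1
    linear_combination (-(L : ℂ)) * hsum
  have hexp₂ : Complex.exp (-lam₂ * L) = e3 * e1 := by
    rw [he3, he1, ← Complex.exp_add]
    congr 1
    linear_combination (-(L : ℂ)) * hsum
  rw [hexp₁, hexp₂, hexp₃] at hdetQ
  -- linear relations
  have h1 : (lam₂ - lam₁) * (e3 - e2) + (lam₃ - lam₂) * (e1 - e2) = 0 := by
    linear_combination -hP
  have h2 : (lam₂ - lam₁) * (e1 * (e2 - e3)) + (lam₃ - lam₂) * (e3 * (e2 - e1)) = 0 := by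
    linear_combination hdetQ
  have key : (e1 - e2) * (e2 - e3) * (e3 - e1) = 0 := by
    have h := mul_left_cancel₀ ha (a := (lam₂ - lam₁))
      (b := (e1 - e2) * (e2 - e3) * (e3 - e1)) (c := 0)
    apply h
    rw [mul_zero]
    linear_combination (e3 * (e2 - e1)) * h1 - (e1 - e2) * h2
  -- all exponentials equal
  have hall : e1 = e3 ∧ e2 = e3 := by
    rcases mul_eq_zero.mp key with h' | h'
    · rcases mul_eq_zero.mp h' with h'' | h''
      · -- e1 = e2
        have h12 : e1 = e2 := by linear_combination h''
        have : (lam₂ - lam₁) * (e3 - e2) = 0 := by linear_combination h1 - (lam₃ - lam₂) * h12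
        have h32 : e3 = e2 := by
          have := (mul_eq_zero.mp this).resolve_left ha
          linear_combination this
        exact ⟨by rw [h12, h32], h32.symm⟩
      · -- e2 = e3
        have h23 : e2 = e3 := by linear_combination h''
        have : (lam₂ - lam₁) * (e3 - e2) = 0 := by
          linear_combination (lam₁ - lam₂) * h23
        have h12 : e1 = e2 := by
          have h' : (lam₃ - lam₂) * (e1 - e2) = 0 := by linear_combination h1 - this
          have := (mul_eq_zero.mp h').resolve_left hb
          linear_combination this
        exact ⟨by rw [h12, h23], h23⟩
    · -- e3 = e1
      have h31 : e3 = e1 := by linear_combination h'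
      have h' : (lam₃ - lam₁) * (e1 - e2) = 0 := by
        linear_combination h1 - (lam₂ - lam₁) * h31
      have h12 : e1 = e2 := by
        have := (mul_eq_zero.mp h').resolve_left hab
        linear_combination this
      exact ⟨h31.symm, by rw [← h12, ← h31]⟩
  obtain ⟨h13, h23⟩ := hall
  have g1 : Complex.exp ((lam₃ - lam₁) * L) = 1 := by
    rw [sub_mul, Complex.exp_sub, ← he1, ← he3, h13, div_self (Complex.exp_ne_zero _)]
  have g2 : Complex.exp ((lam₃ - lam₂) * L) = 1 := by
    rw [sub_mul, Complex.exp_sub, ← he2, ← he3, h23, div_self (Complex.exp_ne_zero _)]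
  have g3 : Complex.exp (3 * lam₃ * L) = 1 := by
    rw [show (3 : ℂ) * lam₃ * L = (lam₃ - lam₁) * L + ((lam₃ - lam₂) * L
      + (lam₁ + lam₂ + lam₃) * L) by ring, Complex.exp_add, Complex.exp_add, g1, g2, hsum,
      zero_mul, Complex.exp_zero, one_mul, one_mul]
  rw [Complex.exp_eq_one_iff] at g3
  obtain ⟨n, hn⟩ := g3
  have hL0 : (L : ℂ) ≠ 0 := Complex.ofReal_ne_zero.mpr hL.ne'
  have hgoal3 : 3 * lam₃ = 2 * (Real.pi : ℂ) * Complex.I * n / L := by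
    field_simp
    linear_combination hn
  refine ⟨g1, g2, ⟨n, hgoal3⟩, ?_⟩
  -- z is real
  set t : ℝ := 2 * Real.pi * n / (3 * L) with ht
  have hl3 : lam₃ = (t : ℂ) * Complex.I := by
    rw [ht]
    push_cast
    field_simp
    linear_combination hn
  have hz : z = ((t ^ 3 - t : ℝ) : ℂ) := by
    apply mul_left_cancel₀ Complex.I_ne_zero
    rw [hl3] at hroot₃
    push_cast
    linear_combination hroot₃ + (-(t : ℂ) ^ 3 * Complex.I) * Complex.I_sq
  rw [hz, Complex.ofReal_im]
end

section
/- Let T > 0, let u : [0,T] → ℝ be continuous, and let y₁, y₂, y₃ : [0,T] → ℝ be continuously differentiable with y₁'(t) = u(t), y₂'(t) = y₃(t), y₃'(t) = −y₂(t) + 2y₁(t)u(t) for all t ∈ [0,T], and y₁(0) = y₂(0) = y₃(0) = 0. Then y₂(T) = ∫₀^T cos(T−t)·y₁(t)² dt and y₃(T) = y₁(T)² − ∫₀^T sin(T−t)·y₁(t)² dt. -/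
open Set

theorem stmt13 (T : ℝ) (hT : 0 < T) (u y₁ y₂ y₃ : ℝ → ℝ)
    (hu : ContinuousOn u (Icc 0 T))
    (hd₁ : ∀ t ∈ Icc 0 T, HasDerivWithinAt y₁ (u t) (Icc 0 T) t)
    (hd₂ : ∀ t ∈ Icc 0 T, HasDerivWithinAt y₂ (y₃ t) (Icc 0 T) t)
    (hd₃ : ∀ t ∈ Icc 0 T, HasDerivWithinAt y₃ (-y₂ t + 2 * y₁ t * u t) (Icc 0 T) t)
    (hi₁ : y₁ 0 = 0) (hi₂ : y₂ 0 = 0) (hi₃ : y₃ 0 = 0) :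
    y₂ T = ∫ t in (0:ℝ)..T, Real.cos (T - t) * (y₁ t) ^ 2 ∧
      y₃ T = (y₁ T) ^ 2 - ∫ t in (0:ℝ)..T, Real.sin (T - t) * (y₁ t) ^ 2 := by
  have hTle : (0:ℝ) ≤ T := hT.le
  have hc₁ : ContinuousOn y₁ (Icc 0 T) := fun t ht => (hd₁ t ht).continuousWithinAt
  have hc₂ : ContinuousOn y₂ (Icc 0 T) := fun t ht => (hd₂ t ht).continuousWithinAt
  have hc₃ : ContinuousOn y₃ (Icc 0 T) := fun t ht => (hd₃ t ht).continuousWithinAt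
  -- trig derivatives
  have hcos : ∀ t : ℝ, HasDerivAt (fun s => Real.cos (T - s)) (Real.sin (T - t)) t := by
    intro t
    have h1 : HasDerivAt (fun s : ℝ => T - s) (-1) t := (hasDerivAt_id t).const_sub T
    have := (Real.hasDerivAt_cos (T - t)).comp t h1
    exact this.congr_deriv (by ring)
  have hsin : ∀ t : ℝ, HasDerivAt (fun s => Real.sin (T - s)) (-Real.cos (T - t)) t := by
    intro t
    have h1 : HasDerivAt (fun s : ℝ => T - s) (-1) t := (hasDerivAt_id t).const_sub T
    have := (Real.hasDerivAt_sin (T - t)).comp t h1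
    exact this.congr_deriv (by ring)
  -- squared derivative
  have hsq : ∀ t ∈ Icc (0:ℝ) T, HasDerivWithinAt (fun s => (y₁ s) ^ 2)
      (2 * y₁ t * u t) (Icc 0 T) t := by
    intro t ht
    have := (hd₁ t ht).pow 2
    exact this.congr_deriv (by push_cast; ring)
  -- H₁
  set H₁ : ℝ → ℝ := fun t => Real.cos (T - t) * y₂ t + Real.sin (T - t) * y₃ t
      - Real.sin (T - t) * (y₁ t) ^ 2 with hH₁def
  have hH₁ : ∀ t ∈ Icc (0:ℝ) T, HasDerivWithinAt H₁
      (Real.cos (T - t) * (y₁ t) ^ 2) (Icc 0 T) t := by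
    intro t ht
    have h := (((hcos t).hasDerivWithinAt.mul (hd₂ t ht)).add
        ((hsin t).hasDerivWithinAt.mul (hd₃ t ht))).sub
        ((hsin t).hasDerivWithinAt.mul (hsq t ht))
    exact h.congr_deriv (by ring)
  -- H₂
  set H₂ : ℝ → ℝ := fun t => -(Real.sin (T - t) * y₂ t) + Real.cos (T - t) * y₃ t
      - Real.cos (T - t) * (y₁ t) ^ 2 with hH₂def
  have hH₂ : ∀ t ∈ Icc (0:ℝ) T, HasDerivWithinAt H₂
      (-(Real.sin (T - t) * (y₁ t) ^ 2)) (Icc 0 T) t := by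
    intro t ht
    have h := ((((hsin t).hasDerivWithinAt.mul (hd₂ t ht)).neg.add
        ((hcos t).hasDerivWithinAt.mul (hd₃ t ht))).sub
        ((hcos t).hasDerivWithinAt.mul (hsq t ht)))
    exact h.congr_deriv (by ring)
  -- integrability
  have hint : IntervalIntegrable (fun t => Real.cos (T - t) * (y₁ t) ^ 2)
      MeasureTheory.volume 0 T := by
    apply ContinuousOn.intervalIntegrable
    rw [uIcc_of_le hTle]
    exact ((Real.continuous_cos.comp (continuous_const.sub continuous_id)).continuousOn).mul
      (hc₁.pow 2)
  have hint' : IntervalIntegrable (fun t => Real.sin (T - t) * (y₁ t) ^ 2)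
      MeasureTheory.volume 0 T := by
    apply ContinuousOn.intervalIntegrable
    rw [uIcc_of_le hTle]
    exact ((Real.continuous_sin.comp (continuous_const.sub continuous_id)).continuousOn).mul
      (hc₁.pow 2)
  -- FTC
  have ftc : ∀ (H : ℝ → ℝ) (f : ℝ → ℝ),
      (∀ t ∈ Icc (0:ℝ) T, HasDerivWithinAt H (f t) (Icc 0 T) t) →
      IntervalIntegrable f MeasureTheory.volume 0 T →
      ∫ t in (0:ℝ)..T, f t = H T - H 0 := by
    intro H f hH hf
    apply intervalIntegral.integral_eq_sub_of_hasDeriv_right_of_le hTle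
      (fun t ht => (hH t ht).continuousWithinAt)
    · intro x hx
      exact ((hH x (Ioo_subset_Icc_self hx)).hasDerivAt
        (Icc_mem_nhds hx.1 hx.2)).hasDerivWithinAt
    · exact hf
  have e₁ := ftc H₁ _ hH₁ hint
  have e₂ := ftc H₂ _ hH₂ hint'.neg
  have hH₁T : H₁ T = y₂ T := by simp [hH₁def]
  have hH₁0 : H₁ 0 = 0 := by simp [hH₁def, hi₁, hi₂, hi₃]
  have hH₂T : H₂ T = y₃ T - (y₁ T) ^ 2 := by simp [hH₂def]
  have hH₂0 : H₂ 0 = 0 := by simp [hH₂def, hi₁, hi₂, hi₃]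
  constructor
  · rw [e₁, hH₁T, hH₁0, sub_zero]
  · have : ∫ t in (0:ℝ)..T, -(Real.sin (T - t) * (y₁ t) ^ 2)
        = -(∫ t in (0:ℝ)..T, Real.sin (T - t) * (y₁ t) ^ 2) :=
      intervalIntegral.integral_neg
    rw [this] at e₂
    rw [hH₂T, hH₂0, sub_zero] at e₂
    linarith [e₂]
end

section
/- Let T > 0, let u : [0,T] → ℝ be continuous, and let y₁, y₂, y₃ : [0,T] → ℝ be continuously differentiable with y₁'(t) = u(t), y₂'(t) = y₃(t), y₃'(t) = −y₂(t) + 2y₁(t)u(t) for all t ∈ [0,T], and y₁(0) = y₂(0) = y₃(0) = 0. Then: (i) if T ≤ π/2 then y₂(T) ≥ 0; (ii) if T ≤ π and y₁(T) = 0 then y₃(T) ≤ 0. (Hence this control system is not locally controllable in time T ≤ π.) -/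
open Set

theorem stmt14 (T : ℝ) (hT : 0 < T) (u y₁ y₂ y₃ : ℝ → ℝ)
    (hu : ContinuousOn u (Icc 0 T))
    (hd₁ : ∀ t ∈ Icc 0 T, HasDerivWithinAt y₁ (u t) (Icc 0 T) t)
    (hd₂ : ∀ t ∈ Icc 0 T, HasDerivWithinAt y₂ (y₃ t) (Icc 0 T) t)
    (hd₃ : ∀ t ∈ Icc 0 T, HasDerivWithinAt y₃ (-y₂ t + 2 * y₁ t * u t) (Icc 0 T) t)
    (hi₁ : y₁ 0 = 0) (hi₂ : y₂ 0 = 0) (hi₃ : y₃ 0 = 0) :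
    (T ≤ Real.pi / 2 → 0 ≤ y₂ T) ∧
      (T ≤ Real.pi → y₁ T = 0 → y₃ T ≤ 0) := by
  -- w = y₃ - y₁² satisfies w' = -y₂
  have hw : ∀ t ∈ Icc 0 T, HasDerivWithinAt (fun t => y₃ t - (y₁ t) ^ 2)
      (-(y₂ t)) (Icc 0 T) t := by
    intro t ht
    have h := (hd₃ t ht).sub ((hd₁ t ht).pow 2)
    convert h using 1
    all_goals try rfl
    push_cast
    ring
  have hcos : ∀ t : ℝ, HasDerivAt (fun s => Real.cos (T - s)) (Real.sin (T - t)) t := by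
    intro t
    have h1 : HasDerivAt (fun s : ℝ => T - s) (-1) t := (hasDerivAt_id t).const_sub T
    have h := (Real.hasDerivAt_cos (T - t)).comp t h1
    convert h using 1
    all_goals try rfl
    ring
  have hsin : ∀ t : ℝ, HasDerivAt (fun s => Real.sin (T - s)) (-Real.cos (T - t)) t := by
    intro t
    have h1 : HasDerivAt (fun s : ℝ => T - s) (-1) t := (hasDerivAt_id t).const_sub T
    have h := (Real.hasDerivAt_sin (T - t)).comp t h1
    convert h using 1
    all_goals try rfl
    ring
  set G : ℝ → ℝ := fun t => y₂ t * Real.cos (T - t) +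
      (y₃ t - (y₁ t) ^ 2) * Real.sin (T - t) with hGdef
  set H : ℝ → ℝ := fun t => (y₃ t - (y₁ t) ^ 2) * Real.cos (T - t) -
      y₂ t * Real.sin (T - t) with hHdef
  have hG : ∀ t ∈ Icc 0 T, HasDerivWithinAt G ((y₁ t) ^ 2 * Real.cos (T - t)) (Icc 0 T) t := by
    intro t ht
    have h := ((hd₂ t ht).mul ((hcos t).hasDerivWithinAt)).add
      ((hw t ht).mul ((hsin t).hasDerivWithinAt))
    convert h using 1
    all_goals try rfl
    ring
  have hH : ∀ t ∈ Icc 0 T, HasDerivWithinAt H (-((y₁ t) ^ 2 * Real.sin (T - t))) (Icc 0 T) t := by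
    intro t ht
    have h := ((hw t ht).mul ((hcos t).hasDerivWithinAt)).sub
      ((hd₂ t ht).mul ((hsin t).hasDerivWithinAt))
    convert h using 1
    all_goals try rfl
    ring
  have hint : interior (Icc (0:ℝ) T) = Ioo 0 T := interior_Icc
  have hGda : ∀ x ∈ Ioo (0:ℝ) T, HasDerivAt G ((y₁ x) ^ 2 * Real.cos (T - x)) x := by
    intro x hx
    exact (hG x (Ioo_subset_Icc_self hx)).hasDerivAt (Icc_mem_nhds hx.1 hx.2)
  have hHda : ∀ x ∈ Ioo (0:ℝ) T, HasDerivAt H (-((y₁ x) ^ 2 * Real.sin (T - x))) x := by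
    intro x hx
    exact (hH x (Ioo_subset_Icc_self hx)).hasDerivAt (Icc_mem_nhds hx.1 hx.2)
  have hG0 : G 0 = 0 := by simp [hGdef, hi₁, hi₂, hi₃]
  have hH0 : H 0 = 0 := by simp [hHdef, hi₁, hi₂, hi₃]
  have hGT : G T = y₂ T := by simp [hGdef]
  have hHT : H T = y₃ T - (y₁ T) ^ 2 := by simp [hHdef]
  constructor
  · intro hTpi
    have hmono : MonotoneOn G (Icc 0 T) := by
      apply monotoneOn_of_deriv_nonneg (convex_Icc 0 T)
      · exact fun t ht => (hG t ht).continuousWithinAt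
      · rw [hint]
        exact fun x hx => (hGda x hx).differentiableAt.differentiableWithinAt
      · rw [hint]
        intro x hx
        rw [(hGda x hx).deriv]
        apply mul_nonneg (sq_nonneg _)
        apply Real.cos_nonneg_of_mem_Icc
        constructor
        · linarith [Real.pi_pos, hx.2]
        · linarith [hx.1]
    have := hmono (left_mem_Icc.mpr hT.le) (right_mem_Icc.mpr hT.le) hT.le
    rw [hG0, hGT] at this
    exact this
  · intro hTpi hy1T
    have hanti : AntitoneOn H (Icc 0 T) := by
      apply antitoneOn_of_deriv_nonpos (convex_Icc 0 T)
      · exact fun t ht => (hH t ht).continuousWithinAt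
      · rw [hint]
        exact fun x hx => (hHda x hx).differentiableAt.differentiableWithinAt
      · rw [hint]
        intro x hx
        rw [(hHda x hx).deriv]
        rw [neg_nonpos]
        apply mul_nonneg (sq_nonneg _)
        apply Real.sin_nonneg_of_nonneg_of_le_pi
        · linarith [hx.2]
        · linarith [hx.1]
    have := hanti (left_mem_Icc.mpr hT.le) (right_mem_Icc.mpr hT.le) hT.le
    rw [hH0, hHT, hy1T] at this
    simpa using this
end

section
/- Let L > 0, p ∈ ℝ, and let η₁, η₂, η₃ ∈ ℂ satisfy η_j³ + η_j = ip for j = 1, 2, 3 and e^{η₁L} = e^{η₂L} = e^{η₃L}. Define Ψ : ℝ × ℝ → ℂ by Ψ(t,x) = e^{−ipt}·((η₂−η₁)e^{η₃x} + (η₃−η₂)e^{η₁x} + (η₁−η₃)e^{η₂x}). Then ∂_tΨ(t,x) + ∂_xΨ(t,x) + ∂_x³Ψ(t,x) = 0 for all (t,x) ∈ ℝ², and Ψ(t,0) = Ψ(t,L) = ∂_xΨ(t,0) = ∂_xΨ(t,L) = 0 for all t ∈ ℝ. (So Ψ is a solution of the linear KdV equation with vanishing Dirichlet and Neumann boundary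 data at x = 0 and x = L.) -/
lemma hasDerivAt_cexp_mul' (a : ℂ) (x : ℝ) :
    HasDerivAt (fun y : ℝ => Complex.exp (a * y)) (a * Complex.exp (a * x)) x := by
  have h1 : HasDerivAt (fun z : ℂ => Complex.exp (a * z)) (a * Complex.exp (a * x)) (x : ℂ) := by
    simpa [mul_comm, Function.comp_def] using
      (Complex.hasDerivAt_exp (a * x)).comp (x : ℂ) ((hasDerivAt_id (x : ℂ)).const_mul a)
  exact h1.comp_ofReal

theorem stmt16 (L : ℝ) (hL : 0 < L) (p : ℝ) (η₁ η₂ η₃ : ℂ)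
    (hr₁ : η₁ ^ 3 + η₁ = Complex.I * p)
    (hr₂ : η₂ ^ 3 + η₂ = Complex.I * p)
    (hr₃ : η₃ ^ 3 + η₃ = Complex.I * p)
    (hexp₁₂ : Complex.exp (η₁ * L) = Complex.exp (η₂ * L))
    (hexp₂₃ : Complex.exp (η₂ * L) = Complex.exp (η₃ * L))
    (Ψ : ℝ → ℝ → ℂ)
    (hΨ : ∀ t x : ℝ, Ψ t x = Complex.exp (-Complex.I * p * t) *
      ((η₂ - η₁) * Complex.exp (η₃ * x) + (η₃ - η₂) * Complex.exp (η₁ * x)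
        + (η₁ - η₃) * Complex.exp (η₂ * x))) :
    (∀ t x : ℝ,
      deriv (fun s => Ψ s x) t + deriv (Ψ t) x + deriv (deriv (deriv (Ψ t))) x = 0) ∧
    (∀ t : ℝ, Ψ t 0 = 0 ∧ Ψ t L = 0 ∧ deriv (Ψ t) 0 = 0 ∧ deriv (Ψ t) L = 0) := by
  have key := hasDerivAt_cexp_mul'
  -- first x-derivative
  have hD1 : ∀ t x : ℝ, HasDerivAt (Ψ t)
      (Complex.exp (-Complex.I * p * t) *
        ((η₂ - η₁) * η₃ * Complex.exp (η₃ * x) + (η₃ - η₂) * η₁ * Complex.exp (η₁ * x)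
          + (η₁ - η₃) * η₂ * Complex.exp (η₂ * x))) x := by
    intro t x
    have hfun : Ψ t = fun x : ℝ => Complex.exp (-Complex.I * p * t) *
        ((η₂ - η₁) * Complex.exp (η₃ * x) + (η₃ - η₂) * Complex.exp (η₁ * x)
          + (η₁ - η₃) * Complex.exp (η₂ * x)) := funext fun x => hΨ t x
    rw [hfun]
    have h := ((((key η₃ x).const_mul (η₂ - η₁)).add ((key η₁ x).const_mul (η₃ - η₂))).add
      ((key η₂ x).const_mul (η₁ - η₃))).const_mul (Complex.exp (-Complex.I * p * t))
    convert h using 1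
    all_goals first | rfl | ring
  have hderiv1 : ∀ t : ℝ, deriv (Ψ t) = fun x : ℝ => Complex.exp (-Complex.I * p * t) *
      ((η₂ - η₁) * η₃ * Complex.exp (η₃ * x) + (η₃ - η₂) * η₁ * Complex.exp (η₁ * x)
        + (η₁ - η₃) * η₂ * Complex.exp (η₂ * x)) := fun t => funext fun x => (hD1 t x).deriv
  -- second x-derivative
  have hD2 : ∀ t x : ℝ, HasDerivAt (deriv (Ψ t))
      (Complex.exp (-Complex.I * p * t) *
        ((η₂ - η₁) * η₃ ^ 2 * Complex.exp (η₃ * x) + (η₃ - η₂) * η₁ ^ 2 * Complex.exp (η₁ * x)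
          + (η₁ - η₃) * η₂ ^ 2 * Complex.exp (η₂ * x))) x := by
    intro t x
    rw [hderiv1 t]
    have h := ((((key η₃ x).const_mul ((η₂ - η₁) * η₃)).add
      ((key η₁ x).const_mul ((η₃ - η₂) * η₁))).add
      ((key η₂ x).const_mul ((η₁ - η₃) * η₂))).const_mul (Complex.exp (-Complex.I * p * t))
    convert h using 1
    all_goals first | rfl | ring
  have hderiv2 : ∀ t : ℝ, deriv (deriv (Ψ t)) = fun x : ℝ =>
      Complex.exp (-Complex.I * p * t) *
        ((η₂ - η₁) * η₃ ^ 2 * Complex.exp (η₃ * x) + (η₃ - η₂) * η₁ ^ 2 * Complex.exp (η₁ * x)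
          + (η₁ - η₃) * η₂ ^ 2 * Complex.exp (η₂ * x)) :=
    fun t => funext fun x => (hD2 t x).deriv
  -- third x-derivative
  have hD3 : ∀ t x : ℝ, HasDerivAt (deriv (deriv (Ψ t)))
      (Complex.exp (-Complex.I * p * t) *
        ((η₂ - η₁) * η₃ ^ 3 * Complex.exp (η₃ * x) + (η₃ - η₂) * η₁ ^ 3 * Complex.exp (η₁ * x)
          + (η₁ - η₃) * η₂ ^ 3 * Complex.exp (η₂ * x))) x := by
    intro t x
    rw [hderiv2 t]
    have h := ((((key η₃ x).const_mul ((η₂ - η₁) * η₃ ^ 2)).add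
      ((key η₁ x).const_mul ((η₃ - η₂) * η₁ ^ 2))).add
      ((key η₂ x).const_mul ((η₁ - η₃) * η₂ ^ 2))).const_mul (Complex.exp (-Complex.I * p * t))
    convert h using 1
    all_goals first | rfl | ring
  -- t-derivative
  have hDt : ∀ t x : ℝ, HasDerivAt (fun s => Ψ s x)
      ((-Complex.I * p) * Complex.exp (-Complex.I * p * t) *
        ((η₂ - η₁) * Complex.exp (η₃ * x) + (η₃ - η₂) * Complex.exp (η₁ * x)
          + (η₁ - η₃) * Complex.exp (η₂ * x))) t := by
    intro t x
    have hfun : (fun s => Ψ s x) = fun s : ℝ => Complex.exp (-Complex.I * p * s) *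
        ((η₂ - η₁) * Complex.exp (η₃ * x) + (η₃ - η₂) * Complex.exp (η₁ * x)
          + (η₁ - η₃) * Complex.exp (η₂ * x)) := funext fun s => hΨ s x
    rw [hfun]
    exact (key (-Complex.I * p) t).mul_const _
  constructor
  · intro t x
    rw [(hDt t x).deriv, (hD1 t x).deriv, (hD3 t x).deriv]
    linear_combination
      (Complex.exp (-Complex.I * p * t) * (η₂ - η₁) * Complex.exp (η₃ * x)) * hr₃ +
      (Complex.exp (-Complex.I * p * t) * (η₃ - η₂) * Complex.exp (η₁ * x)) * hr₁ +
      (Complex.exp (-Complex.I * p * t) * (η₁ - η₃) * Complex.exp (η₂ * x)) * hr₂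
  · intro t
    refine ⟨?_, ?_, ?_, ?_⟩
    · rw [hΨ t 0]
      simp
    · rw [hΨ t L, hexp₁₂, hexp₂₃]
      ring
    · rw [(hD1 t 0).deriv]
      simp
      ring
    · rw [(hD1 t L).deriv, hexp₁₂, hexp₂₃]
      ring
end
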